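/- arXiv:2509.06032 — 12 statements merged into one kernel-verified Lean document; each statement's English description precedes it below -/
import Mathlib

section
/- For any integer m ≥ 0 and any odd integer k ≥ 1, the formal power series identity ∑_{n≥1} (-1)^{n-1} q^{k·n(n-1)/2 + mn} / (1 - q^n) = ∑_{ℓ≥1} ∑_{j : m + k(ℓ-1)/2 ≤ j < 2m + k(2ℓ-1)} q^{jℓ} holds (as an identity of formal power series in q, where j ranges over integers in the given interval). -/
open scoped Classical

/-- `hcoef m k N` is the coefficient of `q^N` in
`∑_{n≥1} (-1)^{n-1} q^{k·n(n-1)/2 + m·n}/(1-q^n)`. -/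
noncomputable def hcoef (m k N : ℕ) : ℤ :=
  ∑ n ∈ Finset.Icc 1 (2*N+2),
    (-1)^(n-1) *
      (if k*(n*(n-1)/2) + m*n ≤ N ∧ n ∣ (N - (k*(n*(n-1)/2) + m*n)) then 1 else 0)

def Pnk (m k N n : ℕ) : Prop :=
  k*(n*(n-1)/2) + m*n ≤ N ∧ n ∣ (N - (k*(n*(n-1)/2) + m*n))

lemma hcoef_split (m k N : ℕ) :
    hcoef m k N =
      (((Finset.Icc 1 (2*N+2)).filter (fun n => Odd n ∧ Pnk m k N n)).card : ℤ)
      - (((Finset.Icc 1 (2*N+2)).filter (fun n => Even n ∧ Pnk m k N n)).card : ℤ) := by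
  rw [hcoef, ← Finset.sum_boole, ← Finset.sum_boole, ← Finset.sum_sub_distrib]
  apply Finset.sum_congr rfl
  intro n hn
  simp only [Finset.mem_Icc] at hn
  rcases Nat.even_or_odd n with he | ho
  · have h1 : Odd (n-1) := Nat.Even.sub_odd hn.1 he odd_one
    rw [Odd.neg_one_pow h1]
    have : ¬ Odd n := by simp [Nat.not_odd_iff_even.mpr he]
    by_cases hp : Pnk m k N n
    · rw [if_pos (show k*(n*(n-1)/2) + m*n ≤ N ∧ n ∣ (N - (k*(n*(n-1)/2) + m*n)) from hp),
        if_neg (by tauto), if_pos ⟨he, hp⟩]; ring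
    · rw [if_neg (show ¬(k*(n*(n-1)/2) + m*n ≤ N ∧ n ∣ (N - (k*(n*(n-1)/2) + m*n))) from hp),
        if_neg (by tauto), if_neg (by tauto)]; ring
  · have h1 : Even (n-1) := Nat.Odd.sub_odd ho odd_one
    rw [Even.neg_one_pow h1]
    have : ¬ Even n := by simp [Nat.not_even_iff_odd.mpr ho]
    by_cases hp : Pnk m k N n
    · rw [if_pos (show k*(n*(n-1)/2) + m*n ≤ N ∧ n ∣ (N - (k*(n*(n-1)/2) + m*n)) from hp),
        if_pos ⟨ho, hp⟩, if_neg (by tauto)]; ring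
    · rw [if_neg (show ¬(k*(n*(n-1)/2) + m*n ≤ N ∧ n ∣ (N - (k*(n*(n-1)/2) + m*n))) from hp),
        if_neg (by tauto), if_neg (by tauto)]; ring

def Dset (N : ℕ) : Finset (ℕ × ℕ) := (Finset.Icc 1 (N+1)) ×ˢ (Finset.Icc 0 N)

def OsetP (m k N : ℕ) : Finset (ℕ × ℕ) :=
  (Dset N).filter (fun p => p.2*p.1 = N ∧ Odd p.1 ∧ 2*m + k*(p.1-1) ≤ 2*p.2)

def EsetP (m k N : ℕ) : Finset (ℕ × ℕ) :=
  (Dset N).filter (fun p => p.2*p.1 = N ∧ Odd p.2 ∧ 2*m + k*(2*p.1-1) ≤ p.2)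

lemma mem_OsetP {m k N : ℕ} {p : ℕ × ℕ} :
    p ∈ OsetP m k N ↔ (1 ≤ p.1 ∧ p.1 ≤ N+1 ∧ p.2 ≤ N) ∧
      p.2*p.1 = N ∧ Odd p.1 ∧ 2*m + k*(p.1-1) ≤ 2*p.2 := by
  simp [OsetP, Dset, Finset.mem_filter, Finset.mem_product, Finset.mem_Icc]
  tauto

lemma mem_EsetP {m k N : ℕ} {p : ℕ × ℕ} :
    p ∈ EsetP m k N ↔ (1 ≤ p.1 ∧ p.1 ≤ N+1 ∧ p.2 ≤ N) ∧
      p.2*p.1 = N ∧ Odd p.2 ∧ 2*m + k*(2*p.1-1) ≤ p.2 := by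
  simp [EsetP, Dset, Finset.mem_filter, Finset.mem_product, Finset.mem_Icc]
  tauto

lemma odd_split (m k N n : ℕ) (ho : Odd n) :
    k*(n*(n-1)/2) + m*n = n*(k*((n-1)/2) + m) := by
  have h2 : 2 ∣ (n-1) := (Nat.Odd.sub_odd ho odd_one).two_dvd
  rw [Nat.mul_div_assoc n h2]; ring

lemma even_split (m k N l : ℕ) :
    k*((2*l)*((2*l)-1)/2) + m*(2*l) = l*(k*(2*l-1) + 2*m) := by
  rw [mul_assoc, Nat.mul_div_cancel_left _ (by norm_num : 0 < 2)]; ring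

lemma cardO (m k N : ℕ) (hk1 : 1 ≤ k) :
    ((Finset.Icc 1 (2*N+2)).filter (fun n => Odd n ∧ Pnk m k N n)).card
      = (OsetP m k N).card := by
  apply Finset.card_bij' (fun n _ => (n, N/n)) (fun p _ => p.1)
  · -- forward membership
    intro n hn
    simp only [Finset.mem_filter, Finset.mem_Icc] at hn
    obtain ⟨⟨hn1, _⟩, ho, hp1, hp2⟩ := hn
    have hsplit := odd_split m k N n ho
    rw [hsplit] at hp1 hp2
    have hdvdN : n ∣ N := by
      have h3 : N - n*(k*((n-1)/2)+m) + n*(k*((n-1)/2)+m) = N := Nat.sub_add_cancel hp1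
      exact h3 ▸ Nat.dvd_add hp2 (Dvd.intro _ rfl)
    have hj : N/n * n = N := Nat.div_mul_cancel hdvdN
    have hlb : k*((n-1)/2)+m ≤ N/n := by
      apply Nat.le_of_mul_le_mul_left _ (show 0 < n by omega)
      calc n*(k*((n-1)/2)+m) ≤ N := hp1
      _ = n*(N/n) := (Nat.mul_div_cancel' hdvdN).symm
    rw [mem_OsetP]
    obtain ⟨c, hc⟩ := (Nat.Odd.sub_odd ho odd_one).two_dvd
    have hc2 : (n-1)/2 = c := by omega
    rw [hc2] at hlb
    refine ⟨⟨hn1, ?_, Nat.div_le_self N n⟩, hj, ho, ?_⟩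
    · -- n ≤ N+1
      rcases Nat.eq_zero_or_pos N with h0 | h0
      · subst h0
        rcases Nat.lt_or_ge n 2 with h | h
        · omega
        · exfalso
          have h3 : 3 ≤ n := by
            rcases ho with ⟨u, hu⟩; omega
          have : 1 ≤ k*((n-1)/2)+m := by
            have : 1 ≤ (n-1)/2 := by omega
            have := Nat.mul_le_mul hk1 this
            omega
          have : n*1 ≤ n*(k*((n-1)/2)+m) := Nat.mul_le_mul_left n this
          omega
      · exact le_trans (Nat.le_of_dvd h0 hdvdN) (by omega)
    · -- bound
      show 2*m + k*(n-1) ≤ 2*(N/n)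
      have hr : k*(n-1) = 2*(k*c) := by rw [hc]; ring
      omega
  · -- backward membership
    intro p hp
    rw [mem_OsetP] at hp
    obtain ⟨⟨h1, h2, h3⟩, hprod, ho, hb⟩ := hp
    simp only [Finset.mem_filter, Finset.mem_Icc]
    refine ⟨⟨by omega, by omega⟩, ho, ?_⟩
    have hsplit := odd_split m k N p.1 ho
    obtain ⟨c, hc⟩ := (Nat.Odd.sub_odd ho odd_one).two_dvd
    have hc2 : (p.1-1)/2 = c := by omega
    have hr : k*(p.1-1) = 2*(k*c) := by rw [hc]; ring
    have hlb : k*c+m ≤ p.2 := by omega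
    have hle : p.1*(k*((p.1-1)/2)+m) ≤ N := by
      rw [hc2, ← hprod]
      calc p.1*(k*c+m) ≤ p.1*p.2 := Nat.mul_le_mul_left _ hlb
      _ = p.2*p.1 := by ring
    constructor
    · rw [hsplit]; exact hle
    · rw [hsplit]
      exact Nat.dvd_sub (Dvd.intro_left _ hprod) (Dvd.intro _ rfl)
  · intro n hn; rfl
  · intro p hp
    rw [mem_OsetP] at hp
    obtain ⟨⟨h1, _, _⟩, hprod, _, _⟩ := hp
    have : N / p.1 = p.2 := by rw [← hprod]; exact Nat.mul_div_cancel _ (by omega)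
    exact Prod.ext rfl this

lemma cardE (m k N : ℕ) (hk1 : 1 ≤ k) (hko : Odd k) :
    ((Finset.Icc 1 (2*N+2)).filter (fun n => Even n ∧ Pnk m k N n)).card
      = (EsetP m k N).card := by
  refine Finset.card_bij' (fun n _ => (n/2, N/(n/2))) (fun p _ => 2*p.1) ?hi ?hj ?li ?ri
  case hi =>
    intro n hn
    simp only [Finset.mem_filter, Finset.mem_Icc] at hn
    obtain ⟨⟨hn1, hn2⟩, he, hp1, hp2⟩ := hn
    have hev : n % 2 = 0 := Nat.even_iff.mp he
    set l := n/2 with hl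
    have hnl : n = 2*l := by omega
    have hl1 : 1 ≤ l := by omega
    have hsplit : k*(n*(n-1)/2) + m*n = l*(k*(2*l-1) + 2*m) := by
      rw [hnl]; exact even_split m k N l
    rw [hsplit] at hp1 hp2
    have hc1 : 1 ≤ k*(2*l-1) := by
      have : 1 ≤ 2*l-1 := by omega
      calc 1 = 1*1 := by ring
      _ ≤ k*(2*l-1) := Nat.mul_le_mul hk1 this
    have hNpos : 1 ≤ N := by
      have : 1*1 ≤ l*(k*(2*l-1)+2*m) := Nat.mul_le_mul hl1 (by omega)
      omega
    have hldvd : l ∣ N := by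
      have hln : l ∣ n := ⟨2, by omega⟩
      have h4 : l ∣ N - l*(k*(2*l-1)+2*m) := dvd_trans hln hp2
      have h3 : N - l*(k*(2*l-1)+2*m) + l*(k*(2*l-1)+2*m) = N := Nat.sub_add_cancel hp1
      exact h3 ▸ Nat.dvd_add h4 (Dvd.intro _ rfl)
    have hj : N/l * l = N := Nat.div_mul_cancel hldvd
    have hcle : k*(2*l-1)+2*m ≤ N/l := by
      apply Nat.le_of_mul_le_mul_left _ (show 0 < l by omega)
      calc l*(k*(2*l-1)+2*m) ≤ N := hp1
      _ = l*(N/l) := (Nat.mul_div_cancel' hldvd).symm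
    -- parity : j - c even
    have hsub : N - l*(k*(2*l-1)+2*m) = (N/l - (k*(2*l-1)+2*m)) * l := by
      rw [Nat.sub_mul, hj]; ring_nf
    have h2dvd : 2 ∣ (N/l - (k*(2*l-1)+2*m)) := by
      rw [hsub, hnl] at hp2
      obtain ⟨u, hu⟩ := hp2
      refine ⟨u, ?_⟩
      apply Nat.eq_of_mul_eq_mul_right (show 0 < l by omega)
      rw [hu]; ring
    have hcodd : (k*(2*l-1)+2*m) % 2 = 1 := by
      have : Odd (k*(2*l-1)) := hko.mul (by rw [Nat.odd_iff]; omega)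
      rw [Nat.odd_iff] at this
      omega
    rw [mem_EsetP]
    refine ⟨⟨hl1, le_trans (Nat.le_of_dvd hNpos hldvd) (by omega), Nat.div_le_self N l⟩,
      hj, ?_, ?_⟩
    · show Odd (N/l)
      obtain ⟨u, hu⟩ := h2dvd
      rw [Nat.odd_iff]; omega
    · show 2*m + k*(2*l-1) ≤ N/l
      omega
  case hj =>
    intro p hp
    rw [mem_EsetP] at hp
    obtain ⟨⟨h1, h2, h3⟩, hprod, hjo, hb⟩ := hp
    simp only [Finset.mem_filter, Finset.mem_Icc]
    have hsplit : k*((2*p.1)*((2*p.1)-1)/2) + m*(2*p.1) = p.1*(k*(2*p.1-1) + 2*m) :=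
      even_split m k N p.1
    have hcle : k*(2*p.1-1)+2*m ≤ p.2 := by omega
    have hle : p.1*(k*(2*p.1-1)+2*m) ≤ N := by
      rw [← hprod]
      calc p.1*(k*(2*p.1-1)+2*m) ≤ p.1*p.2 := Nat.mul_le_mul_left _ hcle
      _ = p.2*p.1 := by ring
    refine ⟨⟨by omega, by omega⟩, ⟨p.1, by ring⟩, ?_, ?_⟩
    · rw [hsplit]; exact hle
    · rw [hsplit]
      have hcodd : (k*(2*p.1-1)+2*m) % 2 = 1 := by
        have : Odd (k*(2*p.1-1)) := hko.mul (by rw [Nat.odd_iff]; omega)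
        rw [Nat.odd_iff] at this
        omega
      have hjodd := Nat.odd_iff.mp hjo
      have hsub : N - p.1*(k*(2*p.1-1)+2*m) = (p.2 - (k*(2*p.1-1)+2*m)) * p.1 := by
        rw [Nat.sub_mul, hprod]
        congr 1
        ring
      rw [hsub]
      obtain ⟨u, hu⟩ : 2 ∣ (p.2 - (k*(2*p.1-1)+2*m)) := ⟨(p.2 - (k*(2*p.1-1)+2*m))/2, by omega⟩
      exact ⟨u, by rw [hu]; ring⟩
  case li =>
    intro n hn
    simp only [Finset.mem_filter, Finset.mem_Icc] at hn
    have := Nat.even_iff.mp hn.2.1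
    show 2*(n/2) = n
    omega
  case ri =>
    intro p hp
    rw [mem_EsetP] at hp
    obtain ⟨⟨h1, _, _⟩, hprod, _, _⟩ := hp
    have h2 : (2*p.1)/2 = p.1 := by omega
    have h3 : N / p.1 = p.2 := by rw [← hprod]; exact Nat.mul_div_cancel _ (by omega)
    show ((2*p.1)/2, N/((2*p.1)/2)) = p
    rw [h2, h3]

-- "continue" predicate for the halving/doubling chain
def hcont (m k l j i : ℕ) : Prop :=
  2^(i+1) ∣ j ∧ 2*m + k*(2*(2^i*l) - 1) ≤ j / 2^i

lemma hcont_ex (m k l j : ℕ) (hk1 : 1 ≤ k) (hl : 1 ≤ l) :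
    ∃ i, ¬ hcont m k l j i := by
  rcases Nat.eq_zero_or_pos j with hj | hj
  · refine ⟨0, fun h => ?_⟩
    have h2 := h.2
    have : 1 ≤ k * (2*(2^0*l) - 1) := by
      have : 1 ≤ 2*(2^0*l) - 1 := by omega
      calc 1 = 1*1 := by ring
      _ ≤ k * (2*(2^0*l)-1) := Nat.mul_le_mul hk1 this
    omega
  · refine ⟨j, fun h => ?_⟩
    have h2 := Nat.le_of_dvd hj h.1
    have : j < 2^(j+1) := lt_of_lt_of_le ((Nat.lt_two_pow_self (n := j))) (Nat.pow_le_pow_right (by norm_num) (by omega))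
    omega

noncomputable def stepE (m k l j : ℕ) : ℕ :=
  if h : ∃ i, ¬ hcont m k l j i then Nat.find h else 0

section
variable {m k l j : ℕ}

lemma stepE_not_cont (hk1 : 1 ≤ k) (hl : 1 ≤ l) : ¬ hcont m k l j (stepE m k l j) := by
  rw [stepE, dif_pos (hcont_ex m k l j hk1 hl)]
  exact Nat.find_spec (hcont_ex m k l j hk1 hl)

lemma stepE_cont (hk1 : 1 ≤ k) (hl : 1 ≤ l) {i : ℕ} (hi : i < stepE m k l j) : hcont m k l j i := by
  rw [stepE, dif_pos (hcont_ex m k l j hk1 hl)] at hi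
  exact not_not.mp (Nat.find_min (hcont_ex m k l j hk1 hl) hi)

lemma stepE_dvd (hk1 : 1 ≤ k) (hl : 1 ≤ l) : 2^(stepE m k l j) ∣ j := by
  rcases Nat.eq_zero_or_pos (stepE m k l j) with h | h
  · simp [h]
  · have := (stepE_cont (m:=m) (j:=j) hk1 hl (i := stepE m k l j - 1) (by omega)).1
    have he : stepE m k l j - 1 + 1 = stepE m k l j := by omega
    rwa [he] at this

lemma stepE_invariant (hk1 : 1 ≤ k) (hl : 1 ≤ l) (hO : 2*m + k*(l-1) ≤ 2*j) :
    2*m + k*(2^(stepE m k l j)*l - 1) ≤ 2*(j / 2^(stepE m k l j)) := by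
  set e := stepE m k l j with hedef
  rcases Nat.eq_zero_or_pos e with h | h
  · simpa [h] using hO
  · have hc := stepE_cont (m:=m) (j:=j) hk1 hl (i := e - 1) (by omega)
    have hd : 2^e ∣ j := stepE_dvd hk1 hl
    have h1 : 2*(2^(e-1)*l) = 2^e*l := by
      rw [← mul_assoc]
      congr 1
      rw [mul_comm]
      rw [← pow_succ]
      congr 1
      omega
    have h2 : j / 2^(e-1) = 2*(j / 2^e) := by
      obtain ⟨t, ht⟩ := hd
      have h2e : (2:ℕ)^e = 2^(e-1)*2 := by
        rw [← pow_succ]; congr 1; omega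
      rw [ht, Nat.mul_div_cancel_left _ (pow_pos (by norm_num : (0:ℕ) < 2) e), h2e,
        mul_assoc, Nat.mul_div_cancel_left _ (pow_pos (by norm_num : (0:ℕ) < 2) _)]
    have := hc.2
    rw [h1, h2] at this
    omega

lemma stepE_classify (hk1 : 1 ≤ k) (hl : 1 ≤ l) :
    (Odd (j / 2^(stepE m k l j)) ∧
      2*m + k*(2*(2^(stepE m k l j)*l) - 1) ≤ j / 2^(stepE m k l j)) ∨
    j / 2^(stepE m k l j) < 2*m + k*(2*(2^(stepE m k l j)*l) - 1) := by
  set e := stepE m k l j with hedef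
  have hn := stepE_not_cont (m:=m) (j:=j) hk1 hl
  rw [← hedef] at hn
  by_cases hb : 2*m + k*(2*(2^e*l) - 1) ≤ j / 2^e
  · left
    refine ⟨?_, hb⟩
    rw [Nat.odd_iff]
    by_contra hev
    apply hn
    refine ⟨?_, hb⟩
    obtain ⟨t, ht⟩ := stepE_dvd (m:=m) (j:=j) hk1 hl
    rw [← hedef] at ht
    have htt : j / 2^e = t := by
      rw [ht, Nat.mul_div_cancel_left _ (pow_pos (by norm_num : (0:ℕ) < 2) e)]
    rw [htt] at hev
    have : 2 ∣ t := by omega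
    obtain ⟨u, hu⟩ := this
    exact ⟨u, by rw [ht, hu, pow_succ]; ring⟩
  · right; omega

lemma stepE_eq (hk1 : 1 ≤ k) (hl : 1 ≤ l) (hodd : Odd l) (v j' : ℕ)
    (hcase : (Odd j' ∧ 2*m + k*(2*(2^v*l) - 1) ≤ j') ∨
      (2*m + k*(2^v*l - 1) ≤ 2*j' ∧ j' < 2*m + k*(2*(2^v*l) - 1))) :
    stepE m k l (2^v * j') = v := by
  rw [stepE, dif_pos (hcont_ex m k l (2^v*j') hk1 hl), Nat.find_eq_iff]
  constructor
  · -- ¬ hcont at v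
    rintro ⟨hdvd, hbnd⟩
    rw [Nat.mul_div_cancel_left _ (pow_pos (by norm_num : (0:ℕ) < 2) v)] at hbnd
    rcases hcase with ⟨hjo, _⟩ | ⟨_, hub⟩
    · -- j' odd but 2^(v+1) ∣ 2^v * j'
      have : (2:ℕ) ∣ j' := by
        have := (Nat.pow_dvd_pow_iff_le_right (by norm_num : 1 < 2)).mpr (le_refl (v+1))
        obtain ⟨u, hu⟩ := hdvd
        refine ⟨u, ?_⟩
        have h2 : (2:ℕ)^(v+1) = 2^v * 2 := pow_succ 2 v
        rw [h2, mul_assoc] at hu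
        exact Nat.eq_of_mul_eq_mul_left (pow_pos (by norm_num : (0:ℕ) < 2) v) hu
      rw [Nat.odd_iff] at hjo
      omega
    · omega
  · -- hcont at all i < v
    intro i hi
    rw [not_not]
    constructor
    · exact Dvd.dvd.mul_right (pow_dvd_pow 2 (by omega)) j'
    · have hdiv : 2^v * j' / 2^i = 2^(v-i) * j' := by
        rw [show (2:ℕ)^v = 2^i * 2^(v-i) by rw [← pow_add]; congr 1; omega,
          mul_assoc, Nat.mul_div_cancel_left _ (pow_pos (by norm_num : (0:ℕ) < 2) i)]
      rw [hdiv]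
      have hmono : 2*(2^i*l) ≤ 2^v*l := by
        have : (2:ℕ)*2^i ≤ 2^v := by
          rw [show (2:ℕ)*2^i = 2^(i+1) by rw [pow_succ]; ring]
          exact Nat.pow_le_pow_right (by norm_num) (by omega)
        calc 2*(2^i*l) = (2*2^i)*l := by ring
        _ ≤ 2^v*l := Nat.mul_le_mul_right l this
      rcases hcase with ⟨_, hlb⟩ | ⟨hlb, _⟩
      · -- E case
        have h1 : k*(2*(2^i*l) - 1) ≤ k*(2*(2^v*l) - 1) := by
          apply Nat.mul_le_mul_left
          apply Nat.sub_le_sub_right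
          calc 2*(2^i*l) ≤ 2^v*l := hmono
          _ ≤ 2*(2^v*l) := by omega
        have h2 : j' ≤ 2^(v-i)*j' := Nat.le_mul_of_pos_left j' (pow_pos (by norm_num : (0:ℕ) < 2) _)
        omega
      · -- T case
        have hvl : 1 ≤ 2^v * l := Nat.one_le_iff_ne_zero.mpr (by positivity)
        have h0 : 2*(2^i*l) - 1 ≤ 2^v*l - 1 := Nat.sub_le_sub_right hmono 1
        have h1 : 2^v*l - 1 ≤ 2^(v-i-1)*(2^v*l - 1) :=
          Nat.le_mul_of_pos_left _ (pow_pos (by norm_num : (0:ℕ) < 2) _)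
        have h2 : 2^(v-i-1)*(2*m + k*(2^v*l - 1)) ≤ 2^(v-i-1)*(2*j') :=
          Nat.mul_le_mul_left _ hlb
        have h3 : 2^(v-i-1)*(2*j') = 2^(v-i)*j' := by
          rw [show (2:ℕ)^(v-i) = 2^(v-i-1)*2 by rw [← pow_succ]; congr 1; omega]
          ring
        have h4 : 2*m + 2^(v-i-1)*(k*(2^v*l-1)) ≤ 2^(v-i-1)*(2*m + k*(2^v*l-1)) := by
          have : (1:ℕ) ≤ 2^(v-i-1) := Nat.one_le_two_pow
          have := Nat.mul_le_mul_right (2*m) this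
          rw [Nat.mul_add]
          omega
        have h5 : k*(2*(2^i*l) - 1) ≤ 2^(v-i-1)*(k*(2^v*l-1)) := by
          calc k*(2*(2^i*l) - 1) ≤ k*(2^(v-i-1)*(2^v*l-1)) := by
                exact Nat.mul_le_mul_left k (le_trans h0 h1)
          _ = 2^(v-i-1)*(k*(2^v*l-1)) := by ring
        omega

end

lemma fact2_eq {e l : ℕ} (ho : Odd l) : (2^e*l).factorization 2 = e := by
  have hl0 : l ≠ 0 := by rintro rfl; simp [Nat.odd_iff] at ho
  have hnd : ¬ (2:ℕ) ∣ l := by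
    have := Nat.odd_iff.mp ho
    omega
  rw [Nat.factorization_mul (pow_ne_zero e two_ne_zero) hl0]
  simp [Nat.Prime.factorization_pow Nat.prime_two,
    Nat.factorization_eq_zero_of_not_dvd hnd]

def TsetP (m k N : ℕ) : Finset (ℕ × ℕ) :=
  (Dset N).filter (fun p => p.2 * p.1 = N ∧ 2*m + k*(p.1 - 1) ≤ 2*p.2 ∧
    p.2 < 2*m + k*(2*p.1 - 1))

lemma mem_TsetP {m k N : ℕ} {p : ℕ × ℕ} :
    p ∈ TsetP m k N ↔ (1 ≤ p.1 ∧ p.1 ≤ N+1 ∧ p.2 ≤ N) ∧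
      p.2*p.1 = N ∧ 2*m + k*(p.1-1) ≤ 2*p.2 ∧ p.2 < 2*m + k*(2*p.1-1) := by
  simp [TsetP, Dset, Finset.mem_filter, Finset.mem_product, Finset.mem_Icc]
  tauto

lemma cardB (m k N : ℕ) (hk1 : 1 ≤ k) :
    (OsetP m k N).card = (EsetP m k N).card + (TsetP m k N).card := by
  have hdisj : Disjoint (EsetP m k N) (TsetP m k N) := by
    rw [Finset.disjoint_left]
    intro p hE hT
    rw [mem_EsetP] at hE
    rw [mem_TsetP] at hT
    exact absurd hT.2.2.2 (not_lt.mpr hE.2.2.2)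
  rw [← Finset.card_union_of_disjoint hdisj]
  refine Finset.card_bij'
    (fun p _ => (2^(stepE m k p.1 p.2) * p.1, p.2 / 2^(stepE m k p.1 p.2)))
    (fun p _ => (p.1 / 2^(p.1.factorization 2), 2^(p.1.factorization 2) * p.2))
    ?hi ?hj ?li ?ri
  case hi =>
    intro p hp
    rw [mem_OsetP] at hp
    obtain ⟨⟨h1, h2, h3⟩, hprod, ho, hb⟩ := hp
    show (2^(stepE m k p.1 p.2) * p.1, p.2 / 2^(stepE m k p.1 p.2))
      ∈ EsetP m k N ∪ TsetP m k N
    set e := stepE m k p.1 p.2 with he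
    set q := p.2 / 2^e with hq
    have hd : 2^e ∣ p.2 := stepE_dvd hk1 h1
    have hepos : 0 < (2:ℕ)^e := pow_pos (by norm_num : (0:ℕ) < 2) e
    have hqm : 2^e * q = p.2 := Nat.mul_div_cancel' hd
    have hinv := stepE_invariant (m:=m) (j:=p.2) hk1 h1 hb
    rw [← he, ← hq] at hinv
    have hprod2 : q*(2^e*p.1) = N := by rw [← hprod, ← hqm]; ring
    have hr1 : 1 ≤ 2^e*p.1 := Nat.mul_le_mul hepos h1
    have hr2 : 2^e*p.1 ≤ N+1 := by
      rcases Nat.eq_zero_or_pos q with h0 | h0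
      · rw [h0, Nat.mul_zero] at hinv
        have : ¬ (1 ≤ 2^e*p.1 - 1) := by
          intro hcon
          have := Nat.mul_le_mul hk1 hcon
          omega
        omega
      · have := Nat.le_mul_of_pos_left (2^e*p.1) h0
        omega
    have hr3 : q ≤ N := le_trans (Nat.div_le_self p.2 (2^e)) h3
    rcases stepE_classify (m:=m) (j:=p.2) hk1 h1 with ⟨hodd, hbig⟩ | hsmall
    · rw [← he, ← hq] at hodd hbig
      apply Finset.mem_union_left
      rw [mem_EsetP]
      exact ⟨⟨hr1, hr2, hr3⟩, hprod2, hodd, hbig⟩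
    · rw [← he, ← hq] at hsmall
      apply Finset.mem_union_right
      rw [mem_TsetP]
      exact ⟨⟨hr1, hr2, hr3⟩, hprod2, hinv, hsmall⟩
  case hj =>
    intro p hp
    have h1 : 1 ≤ p.1 := by
      rcases Finset.mem_union.mp hp with hE | hT
      · exact (mem_EsetP.mp hE).1.1
      · exact (mem_TsetP.mp hT).1.1
    set v := p.1.factorization 2 with hv
    set l0 := p.1 / 2^v with hl0
    have hfac : 2^v * l0 = p.1 := Nat.ordProj_mul_ordCompl_eq_self p.1 2
    have hnd : ¬ (2:ℕ) ∣ l0 := by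
      rw [hl0, hv]
      exact Nat.not_dvd_ordCompl Nat.prime_two (by omega)
    have hodd : Odd l0 := by
      rw [Nat.odd_iff]
      omega
    have hl0pos : 1 ≤ l0 := by
      rcases Nat.eq_zero_or_pos l0 with h0 | h0
      · rw [h0, Nat.mul_zero] at hfac; omega
      · exact h0
    have hvpos : 0 < (2:ℕ)^v := pow_pos (by norm_num : (0:ℕ) < 2) v
    rw [mem_OsetP]
    have hprod : p.2 * p.1 = N := by
      rcases Finset.mem_union.mp hp with hE | hT
      · exact (mem_EsetP.mp hE).2.1
      · exact (mem_TsetP.mp hT).2.1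
    have hprod2 : (2^v*p.2)*l0 = N := by rw [← hprod, ← hfac]; ring
    have hr2 : p.1 ≤ N+1 := by
      rcases Finset.mem_union.mp hp with hE | hT
      · exact (mem_EsetP.mp hE).1.2.1
      · exact (mem_TsetP.mp hT).1.2.1
    have hr3 : 2^v*p.2 ≤ N := by
      have := Nat.le_mul_of_pos_right (2^v*p.2) hl0pos
      omega
    have hmono : k*(l0-1) ≤ k*(p.1-1) := by
      apply Nat.mul_le_mul_left
      apply Nat.sub_le_sub_right
      calc l0 ≤ 2^v*l0 := Nat.le_mul_of_pos_left l0 hvpos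
      _ = p.1 := hfac
    have hp2le : p.2 ≤ 2^v*p.2 := Nat.le_mul_of_pos_left p.2 hvpos
    refine ⟨⟨hl0pos, le_trans (le_trans (Nat.div_le_self _ _) hr2) (le_refl _), hr3⟩,
      hprod2, hodd, ?_⟩
    show 2*m + k*(l0 - 1) ≤ 2*(2^v*p.2)
    rcases Finset.mem_union.mp hp with hE | hT
    · have hb := (mem_EsetP.mp hE).2.2.2
      have hmono2 : k*(p.1-1) ≤ k*(2*p.1-1) := by
        apply Nat.mul_le_mul_left
        apply Nat.sub_le_sub_right
        omega
      omega
    · have hb := (mem_TsetP.mp hT).2.2.1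
      omega
  case li =>
    intro p hp
    rw [mem_OsetP] at hp
    obtain ⟨⟨h1, _, _⟩, _, ho, _⟩ := hp
    set e := stepE m k p.1 p.2 with he
    have hd : 2^e ∣ p.2 := stepE_dvd hk1 h1
    have hepos : 0 < (2:ℕ)^e := pow_pos (by norm_num : (0:ℕ) < 2) e
    have h4 : (2^e*p.1).factorization 2 = e := fact2_eq ho
    show ((2^e*p.1)/2^((2^e*p.1).factorization 2),
      2^((2^e*p.1).factorization 2)*(p.2/2^e)) = p
    rw [h4, Nat.mul_div_cancel_left _ hepos, Nat.mul_div_cancel' hd]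
  case ri =>
    intro p hp
    have h1 : 1 ≤ p.1 := by
      rcases Finset.mem_union.mp hp with hE | hT
      · exact (mem_EsetP.mp hE).1.1
      · exact (mem_TsetP.mp hT).1.1
    set v := p.1.factorization 2 with hv
    set l0 := p.1 / 2^v with hl0
    have hfac : 2^v * l0 = p.1 := Nat.ordProj_mul_ordCompl_eq_self p.1 2
    have hnd : ¬ (2:ℕ) ∣ l0 := by
      rw [hl0, hv]
      exact Nat.not_dvd_ordCompl Nat.prime_two (by omega)
    have hodd : Odd l0 := by
      rw [Nat.odd_iff]
      omega
    have hl0pos : 1 ≤ l0 := by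
      rcases Nat.eq_zero_or_pos l0 with h0 | h0
      · rw [h0, Nat.mul_zero] at hfac; omega
      · exact h0
    have hvpos : 0 < (2:ℕ)^v := pow_pos (by norm_num : (0:ℕ) < 2) v
    have hcase : (Odd p.2 ∧ 2*m + k*(2*(2^v*l0) - 1) ≤ p.2) ∨
        (2*m + k*(2^v*l0 - 1) ≤ 2*p.2 ∧ p.2 < 2*m + k*(2*(2^v*l0) - 1)) := by
      rcases Finset.mem_union.mp hp with hE | hT
      · left
        obtain ⟨_, _, hjo, hb⟩ := mem_EsetP.mp hE
        rw [← hfac] at hb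
        exact ⟨hjo, hb⟩
      · right
        obtain ⟨_, _, hb1, hb2⟩ := mem_TsetP.mp hT
        rw [← hfac] at hb1 hb2
        exact ⟨hb1, hb2⟩
    have hE : stepE m k l0 (2^v*p.2) = v := stepE_eq hk1 hl0pos hodd v p.2 hcase
    show (2^(stepE m k l0 (2^v*p.2))*l0, (2^v*p.2)/2^(stepE m k l0 (2^v*p.2))) = p
    rw [hE, hfac, Nat.mul_div_cancel_left _ hvpos]

theorem stmt0 (m k : ℕ) (hk : Odd k) (hk1 : 1 ≤ k) (N : ℕ) :
    hcoef m k N =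
      (((Finset.Icc 1 (N+1)) ×ˢ (Finset.Icc 0 N)).filter
        (fun p => p.2 * p.1 = N ∧ 2*m + k*(p.1 - 1) ≤ 2*p.2 ∧
          p.2 < 2*m + k*(2*p.1 - 1))).card := by
  have h5 : (((Finset.Icc 1 (N+1)) ×ˢ (Finset.Icc 0 N)).filter
      (fun p => p.2 * p.1 = N ∧ 2*m + k*(p.1 - 1) ≤ 2*p.2 ∧
        p.2 < 2*m + k*(2*p.1 - 1))) = TsetP m k N := rfl
  rw [h5, hcoef_split m k N, cardO m k N hk1, cardE m k N hk1 hk, cardB m k N hk1]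
  push_cast
  ring
end

section
/- Let m ≥ 0 be an integer, k ≥ 1 an odd integer, and define h_{m,k}(n) as the n-th coefficient of the q-series ∑_{n≥1} (-1)^{n-1} q^{k·n(n-1)/2 + mn} / (1 - q^n). Then for every n ≥ 1, h_{m,k}(n) equals the number of divisors d of n satisfying u_{m,k}(n) < 2kd ≤ 2·u_{m,k}(n), where u_{m,k}(n) = √(2kn + (m - k/2)²) − (m − k/2). -/
open scoped Classical

/-- `u m k n = √(2kn + (m - k/2)²) − (m − k/2)`. -/
noncomputable def u (m k n : ℕ) : ℝ :=
  Real.sqrt (2*k*n + ((m : ℝ) - k/2)^2) - ((m : ℝ) - k/2)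

/-- `hd m k n` is the number of divisors `d` of `n` with `u m k n < 2kd ≤ 2·u m k n`. -/
noncomputable def hd (m k n : ℕ) : ℕ :=
  (n.divisors.filter (fun d => u m k n < ((2*k*d : ℕ) : ℝ) ∧ ((2*k*d : ℕ) : ℝ) ≤ 2 * u m k n)).card

/-! ### Auxiliary definitions and lemmas -/

/-- `gP m k N x` is the integer-arithmetic translation of `k·x ≤ u m k N`. -/
def gP (m k N x : ℕ) : Prop := k*x^2 + 2*m*x ≤ 2*N + k*x

instance gP.dec (m k N x : ℕ) : Decidable (gP m k N x) := by unfold gP; infer_instance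

lemma gP_mono {m k N : ℕ} {x y : ℕ} (hxy : x ≤ y) (h : gP m k N y) : gP m k N x := by
  rcases Nat.eq_zero_or_pos x with rfl | hx
  · simp [gP]
  · unfold gP at *
    zify at *
    nlinarith [mul_nonneg (sub_nonneg.2 hxy) (by positivity : (0:ℤ) ≤ 2*(m:ℤ)),
      mul_nonneg (sub_nonneg.2 hxy) (mul_nonneg (by positivity : (0:ℤ) ≤ (k:ℤ))
        (by omega : (0:ℤ) ≤ (x:ℤ) + (y:ℤ) - 1))]

lemma le_u_iff {m k N : ℕ} (hk1 : 1 ≤ k) {x : ℕ} (hx : 1 ≤ x) :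
    ((k * x : ℕ) : ℝ) ≤ u m k N ↔ gP m k N x := by
  have hk : (1:ℝ) ≤ k := by exact_mod_cast hk1
  have hxr : (1:ℝ) ≤ x := by exact_mod_cast hx
  have hpos : (0:ℝ) < (k:ℝ)*(x:ℝ) + ((m:ℝ) - (k:ℝ)/2) := by nlinarith
  rw [u, le_sub_iff_add_le,
    show ((k*x : ℕ):ℝ) + ((m:ℝ) - (k:ℝ)/2) = (k:ℝ)*(x:ℝ) + ((m:ℝ) - (k:ℝ)/2) from by
      push_cast; ring,
    Real.le_sqrt' hpos]
  rw [gP, ← @Nat.cast_le ℝ]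
  push_cast
  constructor <;> intro h <;> nlinarith [h, hk, hxr]

/-- The condition appearing in `hcoef`. -/
def CondN (m k N n : ℕ) : Prop :=
  k*(n*(n-1)/2) + m*n ≤ N ∧ n ∣ (N - (k*(n*(n-1)/2) + m*n))

lemma condN_iff {m k N n : ℕ} (hn : 1 ≤ n) :
    CondN m k N n ↔ ∃ w, n * w = 2*N ∧ k*(n-1) + 2*m ≤ w ∧ Even (w + k*(n-1)) := by
  obtain ⟨n', rfl⟩ := Nat.exists_eq_add_of_le hn
  obtain ⟨c, hc⟩ : 2 ∣ (1+n')*n' := by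
    rw [show (1+n')*n' = n'*(n'+1) by ring]
    exact (Nat.even_mul_succ_self n').two_dvd
  have hC : (1+n')*n'/2 = c := by omega
  have key : ∀ i : ℕ, (1+n')*(k*n' + 2*m + 2*i) = k*((1+n')*n') + 2*(m*(1+n')) + 2*((1+n')*i) :=
    fun i => by ring
  have key2 : k*((1+n')*n') = 2*(k*c) := by rw [hc]; ring
  simp only [CondN, Nat.add_sub_cancel_left, hC]
  constructor
  · rintro ⟨hle, i, hi⟩
    have hN : N = k*c + m*(1+n') + (1+n')*i := by omega
    refine ⟨k*n' + 2*m + 2*i, by have := key i; omega, by omega, ?_⟩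
    rw [show k*n' + 2*m + 2*i + k*n' = 2*(k*n' + m + i) by ring]
    exact even_two_mul _
  · rintro ⟨w, hw, hge, hpar⟩
    obtain ⟨t, ht⟩ := hpar
    obtain ⟨i, hi⟩ : ∃ i, w = k*n' + 2*m + 2*i := ⟨(w - (k*n' + 2*m))/2, by omega⟩
    rw [hi] at hw
    have := key i
    have hN : N = k*c + m*(1+n') + (1+n')*i := by omega
    exact ⟨by omega, ⟨i, by omega⟩⟩

lemma odd_eq_of_pow_mul_eq {x y : ℕ} (hx : Odd x) (hy : Odd y) :
    ∀ {a b : ℕ}, 2^a * x = 2^b * y → x = y := by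
  have main : ∀ {a b : ℕ}, a ≤ b → ∀ {x y : ℕ}, Odd x → Odd y → 2^a * x = 2^b * y → x = y := by
    intro a b hab x y hx hy h
    obtain ⟨c, rfl⟩ := Nat.exists_eq_add_of_le hab
    rw [pow_add, mul_assoc] at h
    have h2 : x = 2^c * y := Nat.eq_of_mul_eq_mul_left (by positivity) h
    rcases Nat.eq_zero_or_pos c with rfl | hc
    · simpa using h2
    · exfalso
      have hdvd : 2 ∣ x := h2 ▸ Dvd.dvd.mul_right (dvd_pow_self 2 hc.ne') y
      obtain ⟨r, hr⟩ := hx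
      omega
  intro a b h
  rcases le_total a b with hab | hab
  · exact main hab hx hy h
  · exact (main hab hy hx h.symm).symm

lemma odd_coprime_two {j : ℕ} (hj : Odd j) : Nat.Coprime j 2 := by
  exact Nat.coprime_two_right.mpr hj

lemma odd_dvd_of_dvd_two_mul {j N : ℕ} (hj : Odd j) (h : j ∣ 2*N) : j ∣ N :=
  Nat.Coprime.dvd_of_dvd_mul_left (odd_coprime_two hj) h

lemma stepA (m k N : ℕ) (hk : Odd k) (hN : 1 ≤ N) :
    (Finset.Icc 1 (2*N+2)).filter (fun n => Odd n ∧ CondN m k N n)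
      = N.divisors.filter (fun j => Odd j ∧ gP m k N j) := by
  ext j
  simp only [Finset.mem_filter, Finset.mem_Icc, Nat.mem_divisors]
  constructor
  · rintro ⟨⟨h1, _⟩, hodd, hcond⟩
    obtain ⟨w, hw, hge, _⟩ := (condN_iff h1).1 hcond
    refine ⟨⟨odd_dvd_of_dvd_two_mul hodd ⟨w, hw.symm⟩, by omega⟩, hodd, ?_⟩
    obtain ⟨j', rfl⟩ := Nat.exists_eq_add_of_le h1
    simp only [Nat.add_sub_cancel_left] at hge
    have h2 : (1+j')*(k*j' + 2*m) ≤ (1+j')*w := Nat.mul_le_mul_left _ hge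
    have e1 : (1+j')*(k*j' + 2*m) + k*(1+j') = k*(1+j')^2 + 2*m*(1+j') := by ring
    unfold gP
    omega
  · rintro ⟨⟨hdvd, hN0⟩, hodd, hg⟩
    obtain ⟨t, ht⟩ := hdvd
    have h1 : 1 ≤ j := by
      rcases Nat.eq_zero_or_pos j with rfl | h
      · simp at ht; omega
      · exact h
    have hjN : j ≤ N := Nat.le_of_dvd (by omega) ⟨t, ht⟩
    refine ⟨⟨h1, by omega⟩, hodd, (condN_iff h1).2 ⟨2*t, by rw [ht]; ring, ?_, ?_⟩⟩
    · obtain ⟨j', rfl⟩ := Nat.exists_eq_add_of_le h1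
      simp only [Nat.add_sub_cancel_left]
      unfold gP at hg
      have e1 : k*(1+j')^2 + 2*m*(1+j') = (1+j')*(k*j' + 2*m) + k*(1+j') := by ring
      have e2 : 2*N + k*(1+j') = (1+j')*(2*t) + k*(1+j') := by rw [ht]; ring
      have h2 : (1+j')*(k*j' + 2*m) ≤ (1+j')*(2*t) := by omega
      exact Nat.le_of_mul_le_mul_left h2 (by omega)
    · obtain ⟨j', rfl⟩ := Nat.exists_eq_add_of_le h1
      simp only [Nat.add_sub_cancel_left]
      have hj' : Even j' := by
        rcases Nat.even_or_odd j' with h | h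
        · exact h
        · exfalso; obtain ⟨r, hr⟩ := h; obtain ⟨s, hs⟩ := hodd; omega
      obtain ⟨r, hr⟩ := hj'
      subst hr
      exact ⟨t + k*r, by ring⟩

lemma stepB (m k N : ℕ) (hk : Odd k) (hk1 : 1 ≤ k) (hN : 1 ≤ N) :
    ((Finset.Icc 1 (2*N+2)).filter (fun n => Even n ∧ CondN m k N n)).card
      = (N.divisors.filter (fun w => Odd w ∧ 2*k*N + 2*m*w ≤ w^2 + k*w)).card := by
  refine Finset.card_bij' (fun n _ => 2*N/n) (fun w _ => 2*N/w) ?_ ?_ ?_ ?_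
  · -- forward map lands in target
    intro n hn
    simp only [Finset.mem_filter, Finset.mem_Icc] at hn
    obtain ⟨⟨h1, h2⟩, heven, hcond⟩ := hn
    obtain ⟨w, hw, hge, hpar⟩ := (condN_iff h1).1 hcond
    have hwn : 2*N/n = w := by rw [← hw]; exact Nat.mul_div_cancel_left w (by omega)
    rw [hwn]
    simp only [Finset.mem_filter, Nat.mem_divisors]
    obtain ⟨s, hs⟩ := heven
    have hkn : Odd (k*(n-1)) := hk.mul ⟨s-1, by omega⟩
    have hwodd : Odd w := by
      obtain ⟨a, ha⟩ := hpar; obtain ⟨b, hb⟩ := hkn; exact ⟨a - b - 1, by omega⟩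
    refine ⟨⟨odd_dvd_of_dvd_two_mul hwodd ⟨n, by rw [← hw]; ring⟩, by omega⟩, hwodd, ?_⟩
    have h3 : w*(k*(n-1)+2*m) ≤ w*w := Nat.mul_le_mul_left w hge
    obtain ⟨n', rfl⟩ := Nat.exists_eq_add_of_le h1
    simp only [Nat.add_sub_cancel_left] at h3
    have e1 : w*(k*n' + 2*m) = k*n'*w + 2*m*w := by ring
    have e3 : k*n'*w + k*w = k*((1+n')*w) := by ring
    have e5 : k*((1+n')*w) = 2*(k*N) := by rw [hw]; ring
    have e4 : w^2 = w*w := sq w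
    have e6 : 2*k*N = 2*(k*N) := by ring
    omega
  · -- backward map lands in source
    intro w hw
    simp only [Finset.mem_filter, Nat.mem_divisors] at hw
    obtain ⟨⟨hdvd, hN0⟩, hwodd, hB⟩ := hw
    obtain ⟨t, ht⟩ := hdvd
    have hwpos : 1 ≤ w := by
      rcases Nat.eq_zero_or_pos w with rfl | h
      · simp at ht; omega
      · exact h
    have htpos : 1 ≤ t := by
      rcases Nat.eq_zero_or_pos t with rfl | h
      · simp at ht; omega
      · exact h
    have htN : t ≤ N := by
      have : t ≤ w*t := Nat.le_mul_of_pos_left t hwpos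
      omega
    have hnv : 2*N/w = 2*t := by
      rw [ht, show 2*(w*t) = (2*t)*w by ring, Nat.mul_div_cancel _ hwpos]
    rw [hnv]
    simp only [Finset.mem_filter, Finset.mem_Icc]
    refine ⟨⟨by omega, by omega⟩, ⟨t, by ring⟩, ?_⟩
    refine (condN_iff (by omega)).2 ⟨w, by rw [ht]; ring, ?_, ?_⟩
    · have e0 : k*(2*t-1) + k = k*(2*t) := by
        zify [show (1:ℕ) ≤ 2*t by omega]
        ring
      have e1 : k*(2*t)*w = 2*(k*N) := by rw [ht]; ring
      have h5 : w*(k*(2*t-1) + 2*m) ≤ w*w := by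
        have e2 : w*(k*(2*t-1) + 2*m) + k*w = (k*(2*t-1) + k)*w + 2*m*w := by ring
        have e3 : (k*(2*t-1) + k)*w = k*(2*t)*w := by rw [e0]
        have e4 : w^2 = w*w := sq w
        have e6 : 2*k*N = 2*(k*N) := by ring
        omega
      exact Nat.le_of_mul_le_mul_left h5 (by omega)
    · have hto : Odd (k*((2:ℕ)*t-1)) := hk.mul ⟨t-1, by omega⟩
      exact hwodd.add_odd hto
  · -- left inverse
    intro n hn
    simp only [Finset.mem_filter, Finset.mem_Icc] at hn
    obtain ⟨⟨h1, h2⟩, heven, hcond⟩ := hn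
    obtain ⟨w, hw, hge, hpar⟩ := (condN_iff h1).1 hcond
    have hwpos : 0 < w := by
      rcases Nat.eq_zero_or_pos w with rfl | h
      · simp at hw; omega
      · exact h
    have hwn : 2*N/n = w := by rw [← hw]; exact Nat.mul_div_cancel_left w (by omega)
    rw [hwn, ← hw, mul_comm, Nat.mul_div_cancel_left n hwpos]
  · -- right inverse
    intro w hw
    simp only [Finset.mem_filter, Nat.mem_divisors] at hw
    obtain ⟨⟨hdvd, hN0⟩, hwodd, hB⟩ := hw
    obtain ⟨t, ht⟩ := hdvd
    have hwpos : 1 ≤ w := by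
      rcases Nat.eq_zero_or_pos w with rfl | h
      · simp at ht; omega
      · exact h
    have htpos : 1 ≤ t := by
      rcases Nat.eq_zero_or_pos t with rfl | h
      · simp at ht; omega
      · exact h
    have hnv : 2*N/w = 2*t := by
      rw [ht, show 2*(w*t) = (2*t)*w by ring, Nat.mul_div_cancel _ hwpos]
    rw [hnv, ht, show 2*(w*t) = (2*t)*w by ring, Nat.mul_div_cancel_left w (by omega)]

lemma keyIff (m k N w j : ℕ) (hN : 1 ≤ N) (hw : 0 < w) (v : ℕ) (hwx : w * (2^(v+1) * j) = 2*N) :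
    (2*k*N + 2*m*w ≤ w^2 + k*w) ↔ gP m k N (2^(v+1)*j) := by
  set x := 2^(v+1)*j with hx
  have hxpos : 0 < x := by
    rcases Nat.eq_zero_or_pos x with h | h
    · rw [h, mul_zero] at hwx; omega
    · exact h
  have e2 : k*(w*x) = 2*(k*N) := by rw [hwx]; ring
  have e6 : 2*k*N = 2*(k*N) := by ring
  constructor
  · intro hB
    have h1 : w*(k*x+2*m) ≤ w*(w+k) := by
      have e1 : w*(k*x+2*m) = k*(w*x) + 2*m*w := by ring
      have e3 : w*(w+k) = w^2 + k*w := by ring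
      omega
    have h2 : k*x + 2*m ≤ w + k := Nat.le_of_mul_le_mul_left h1 hw
    have h3 : x*(k*x+2*m) ≤ x*(w+k) := Nat.mul_le_mul_left x h2
    unfold gP
    have e1 : x*(k*x+2*m) = k*x^2 + 2*m*x := by ring
    have e4 : x*(w+k) = w*x + k*x := by ring
    have e5 : w*x = 2*N := hwx
    omega
  · intro hg
    unfold gP at hg
    have h1 : x*(k*x+2*m) ≤ x*(w+k) := by
      have e1 : x*(k*x+2*m) = k*x^2 + 2*m*x := by ring
      have e4 : x*(w+k) = w*x + k*x := by ring
      have e5 : w*x = 2*N := hwx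
      omega
    have h2 : k*x + 2*m ≤ w + k := Nat.le_of_mul_le_mul_left h1 hxpos
    have h3 : w*(k*x+2*m) ≤ w*(w+k) := Nat.mul_le_mul_left w h2
    have e1 : w*(k*x+2*m) = k*(w*x) + 2*m*w := by ring
    have e3 : w*(w+k) = w^2 + k*w := by ring
    omega

lemma stepC (m k N : ℕ) (hN : 1 ≤ N) :
    (N.divisors.filter (fun w => Odd w ∧ 2*k*N + 2*m*w ≤ w^2 + k*w)).card
      = (N.divisors.filter
          (fun j => Odd j ∧ gP m k N (2^(N.factorization 2 + 1) * j))).card := by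
  have hN0 : N ≠ 0 := by omega
  set v := N.factorization 2 with hv
  have hQN : 2^v * (N / 2^v) = N := Nat.ordProj_mul_ordCompl_eq_self N 2
  set Q := N / 2^v with hQdef
  have hQ2 : ¬ 2 ∣ Q := Nat.not_dvd_ordCompl Nat.prime_two hN0
  have hQpos : 0 < Q := by
    rcases Nat.eq_zero_or_pos Q with h | h
    · rw [h, mul_zero] at hQN; omega
    · exact h
  have hQdvdN : Q ∣ N := ⟨2^v, by rw [← hQN]; ring⟩
  -- generic facts about odd divisors
  have oddDvdQ : ∀ w : ℕ, Odd w → w ∣ N → w ∣ Q := by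
    intro w hwodd hdvd
    exact Nat.dvd_ordCompl_of_dvd_not_dvd hdvd (by
      intro h2w
      obtain ⟨r, hr⟩ := hwodd
      obtain ⟨s, hs⟩ := h2w
      omega)
  have main : ∀ w : ℕ, Odd w → w ∣ N →
      (0 < w ∧ Odd (Q/w) ∧ (Q/w) ∣ N ∧ w * (2^(v+1) * (Q/w)) = 2*N ∧ Q/(Q/w) = w) := by
    intro w hwodd hdvd
    obtain ⟨j, hj⟩ := oddDvdQ w hwodd hdvd
    have hwpos : 0 < w := by
      rcases Nat.eq_zero_or_pos w with rfl | h
      · simp at hj; omega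
      · exact h
    have hjpos : 0 < j := by
      rcases Nat.eq_zero_or_pos j with rfl | h
      · rw [mul_zero] at hj; omega
      · exact h
    have hjw : Q/w = j := by rw [hj]; exact Nat.mul_div_cancel_left j hwpos
    refine ⟨hwpos, ?_, ?_, ?_, ?_⟩
    · rw [hjw]
      rw [Nat.odd_iff]
      rcases Nat.even_or_odd j with he | ho
      · exfalso; obtain ⟨s, hs⟩ := he
        exact hQ2 ⟨w*s, by rw [hj, hs]; ring⟩
      · exact Nat.odd_iff.1 ho
    · rw [hjw]
      exact dvd_trans ⟨w, by rw [hj]; ring⟩ hQdvdN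
    · rw [hjw]
      calc w * (2^(v+1) * j) = 2*(2^v*(w*j)) := by ring
        _ = 2*(2^v*Q) := by rw [← hj]
        _ = 2*N := by rw [hQN]
    · rw [hjw, hj]
      exact Nat.mul_div_cancel w hjpos
  refine Finset.card_bij' (fun w _ => Q / w) (fun j _ => Q / j) ?_ ?_ ?_ ?_
  · intro w hw
    simp only [Finset.mem_filter, Nat.mem_divisors] at hw ⊢
    obtain ⟨⟨hdvd, _⟩, hwodd, hB⟩ := hw
    obtain ⟨hwpos, hjodd, hjdvd, hwx, _⟩ := main w hwodd hdvd
    exact ⟨⟨hjdvd, hN0⟩, hjodd, (keyIff m k N w (Q/w) hN hwpos v hwx).1 hB⟩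
  · intro j hj
    simp only [Finset.mem_filter, Nat.mem_divisors] at hj ⊢
    obtain ⟨⟨hdvd, _⟩, hjodd, hg⟩ := hj
    obtain ⟨hjpos, hwodd, hwdvd, hjx, hinv⟩ := main j hjodd hdvd
    -- hjx : j * (2^(v+1) * (Q/j)) = 2*N ; we need condB for w := Q/j
    have hwpos : 0 < Q/j := by
      rcases Nat.eq_zero_or_pos (Q/j) with h | h
      · rw [h] at hinv; simp at hinv; omega
      · exact h
    have hwx : (Q/j) * (2^(v+1) * j) = 2*N := by
      have := (main (Q/j) hwodd hwdvd).2.2.2.1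
      rwa [hinv] at this
    exact ⟨⟨hwdvd, hN0⟩, hwodd, (keyIff m k N (Q/j) j hN hwpos v hwx).2 hg⟩
  · intro w hw
    simp only [Finset.mem_filter, Nat.mem_divisors] at hw
    obtain ⟨⟨hdvd, _⟩, hwodd, _⟩ := hw
    exact (main w hwodd hdvd).2.2.2.2
  · intro j hj
    simp only [Finset.mem_filter, Nat.mem_divisors] at hj
    obtain ⟨⟨hdvd, _⟩, hjodd, _⟩ := hj
    exact (main j hjodd hdvd).2.2.2.2

lemma stepE_s1 (m k N : ℕ) (hN : 1 ≤ N) :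
    (N.divisors.filter (fun d => ¬ gP m k N (2*d) ∧ gP m k N d)).card
      = ((N.divisors.filter (fun j => Odd j ∧ gP m k N j)) \
         (N.divisors.filter
           (fun j => Odd j ∧ gP m k N (2^(N.factorization 2 + 1) * j)))).card := by
  have hN0 : N ≠ 0 := by omega
  set v := N.factorization 2 with hv
  have hQN : 2^v * (N / 2^v) = N := Nat.ordProj_mul_ordCompl_eq_self N 2
  set Q := N / 2^v with hQdef
  have hQ2 : ¬ 2 ∣ Q := Nat.not_dvd_ordCompl Nat.prime_two hN0
  have oddDvdQ : ∀ w : ℕ, Odd w → w ∣ N → w ∣ Q := by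
    intro w hwodd hdvd
    exact Nat.dvd_ordCompl_of_dvd_not_dvd hdvd (by
      intro h2w
      obtain ⟨r, hr⟩ := hwodd
      obtain ⟨s, hs⟩ := h2w
      omega)
  symm
  refine Finset.card_bij
    (fun j _ => 2^(Nat.findGreatest (fun a => gP m k N (2^a * j)) v) * j) ?_ ?_ ?_
  · -- maps into T
    intro j hj
    simp only [Finset.mem_sdiff, Finset.mem_filter, Nat.mem_divisors, not_and] at hj
    obtain ⟨⟨⟨hdvd, _⟩, hodd, hg⟩, hnB⟩ := hj
    have hnotB : ¬ gP m k N (2^(v+1) * j) := hnB ⟨hdvd, hN0⟩ hodd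
    set s := Nat.findGreatest (fun a => gP m k N (2^a * j)) v with hs
    have hsv : s ≤ v := Nat.findGreatest_le v
    have hPs : gP m k N (2^s * j) :=
      Nat.findGreatest_spec (P := fun a => gP m k N (2^a * j)) (Nat.zero_le v)
        (by simpa using hg)
    simp only [Finset.mem_filter, Nat.mem_divisors]
    refine ⟨⟨?_, hN0⟩, ?_, hPs⟩
    · -- 2^s * j ∣ N
      have h1 : (2:ℕ)^s ∣ 2^v := pow_dvd_pow 2 hsv
      have h2 : j ∣ Q := oddDvdQ j hodd hdvd
      have := mul_dvd_mul h1 h2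
      rwa [hQN] at this
    · -- ¬ gP (2*(2^s*j))
      have he : 2*(2^s*j) = 2^(s+1)*j := by ring
      rw [he]
      rcases Nat.lt_or_ge s v with hlt | hge
      · exact Nat.findGreatest_is_greatest (P := fun a => gP m k N (2^a * j)) (n := v)
          (by omega) (by omega)
      · have hsv' : s = v := by omega
        rwa [hsv']
  · -- injective
    intro j1 hj1 j2 hj2 heq
    simp only [Finset.mem_sdiff, Finset.mem_filter, Nat.mem_divisors] at hj1 hj2
    exact odd_eq_of_pow_mul_eq hj1.1.2.1 hj2.1.2.1 heq
  · -- surjective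
    intro d hd
    simp only [Finset.mem_filter, Nat.mem_divisors] at hd
    obtain ⟨⟨hdN, _⟩, hnot2d, hgd⟩ := hd
    have hd0 : d ≠ 0 := by
      rintro rfl
      exact hnot2d (by simp [gP])
    set a := d.factorization 2 with ha
    set j := d / 2^a with hj
    have hdj : 2^a * j = d := Nat.ordProj_mul_ordCompl_eq_self d 2
    have h2j : ¬ 2 ∣ j := by
      rw [hj, ha]
      exact Nat.not_dvd_ordCompl Nat.prime_two hd0
    have hjodd : Odd j := by rw [Nat.odd_iff]; omega
    have hjd : j ∣ d := ⟨2^a, by rw [← hdj]; ring⟩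
    have hjN : j ∣ N := dvd_trans hjd hdN
    have hjpos : 0 < j := hjodd.pos
    have hav : a ≤ v := by
      have h := (Nat.factorization_le_iff_dvd hd0 hN0).2 hdN
      exact h 2
    have hgj : gP m k N j := gP_mono (Nat.le_of_dvd (by omega) hjd) hgd
    have hnot : ∀ b, a < b → ¬ gP m k N (2^b * j) := by
      intro b hb hgb
      apply hnot2d
      have h1 : 2*d = 2^(a+1)*j := by rw [← hdj]; ring
      rw [h1]
      exact gP_mono (Nat.mul_le_mul_right j (Nat.pow_le_pow_right (by omega) (by omega))) hgb
    have hfind : Nat.findGreatest (fun b => gP m k N (2^b * j)) v = a := by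
      rw [Nat.findGreatest_eq_iff]
      exact ⟨hav, fun _ => by rwa [hdj], fun b hb _ => hnot b hb⟩
    refine ⟨j, ?_, ?_⟩
    · simp only [Finset.mem_sdiff, Finset.mem_filter, Nat.mem_divisors, not_and]
      refine ⟨⟨⟨hjN, hN0⟩, hjodd, hgj⟩, fun _ _ => ?_⟩
      exact hnot (v+1) (by omega)
    · rw [hfind, hdj]

lemma sum_split (m k N : ℕ) :
    hcoef m k N
      = (((Finset.Icc 1 (2*N+2)).filter (fun n => Odd n ∧ CondN m k N n)).card : ℤ)
        - (((Finset.Icc 1 (2*N+2)).filter (fun n => Even n ∧ CondN m k N n)).card : ℤ) := by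
  unfold hcoef
  rw [← Finset.sum_boole, ← Finset.sum_boole, ← Finset.sum_sub_distrib]
  apply Finset.sum_congr rfl
  intro n hn
  simp only [Finset.mem_Icc] at hn
  have h1 : 1 ≤ n := hn.1
  have hC : (k*(n*(n-1)/2) + m*n ≤ N ∧ n ∣ (N - (k*(n*(n-1)/2) + m*n))) = CondN m k N n := rfl
  simp only [hC]
  rcases Nat.even_or_odd n with he | ho
  · have hodd1 : Odd (n-1) := by obtain ⟨s, hs⟩ := he; exact ⟨s-1, by omega⟩
    rw [Odd.neg_one_pow hodd1]
    have hno : ¬ Odd n := by rw [Nat.not_odd_iff_even] at *; exact he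
    by_cases hc : CondN m k N n <;> simp [hc, hno, he]
  · have hev1 : Even (n-1) := by obtain ⟨s, hs⟩ := ho; exact ⟨s, by omega⟩
    rw [Even.neg_one_pow hev1]
    have hne : ¬ Even n := by rw [Nat.not_even_iff_odd] at *; exact ho
    by_cases hc : CondN m k N n <;> simp [hc, hne, ho]

theorem stmt1 (m k : ℕ) (hk : Odd k) (hk1 : 1 ≤ k) (n : ℕ) (hn : 1 ≤ n) :
    hcoef m k n =
      ((n.divisors.filter
        (fun d => u m k n < ((2*k*d : ℕ) : ℝ) ∧ ((2*k*d : ℕ) : ℝ) ≤ 2 * u m k n)).card : ℤ) := by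
  have hfe : n.divisors.filter
      (fun d => u m k n < ((2*k*d : ℕ) : ℝ) ∧ ((2*k*d : ℕ) : ℝ) ≤ 2 * u m k n)
      = n.divisors.filter (fun d => ¬ gP m k n (2*d) ∧ gP m k n d) := by
    refine Finset.filter_congr ?_
    intro d hd
    have hd1 : 1 ≤ d := Nat.pos_of_mem_divisors hd
    have h2 : (((2*k*d : ℕ)) : ℝ) ≤ 2 * u m k n ↔ gP m k n d := by
      rw [show ((2*k*d : ℕ):ℝ) = 2*((k*d:ℕ):ℝ) by push_cast; ring,
        mul_le_mul_iff_right₀ (by norm_num : (0:ℝ) < 2)]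
      exact le_u_iff hk1 hd1
    have h3 : u m k n < ((2*k*d : ℕ):ℝ) ↔ ¬ gP m k n (2*d) := by
      rw [show ((2*k*d:ℕ):ℝ) = ((k*(2*d):ℕ):ℝ) by push_cast; ring]
      exact not_le.symm.trans (not_congr (le_u_iff hk1 (by omega)))
    exact and_congr h3 h2
  rw [hfe, sum_split, stepA m k n hk hn, stepB m k n hk hk1 hn, stepC m k n hn,
    stepE_s1 m k n hn]
  have hsub : (n.divisors.filter (fun j => Odd j ∧ gP m k n (2^(n.factorization 2 + 1) * j)))
      ⊆ (n.divisors.filter (fun j => Odd j ∧ gP m k n j)) := by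
    intro j hj
    simp only [Finset.mem_filter] at hj ⊢
    exact ⟨hj.1, hj.2.1, gP_mono (Nat.le_mul_of_pos_left j (by positivity)) hj.2.2⟩
  rw [Finset.card_sdiff_of_subset hsub, Nat.cast_sub (Finset.card_le_card hsub)]
end

section
/- For any integer m ≥ 0, any odd integer k ≥ 1, and all n ≥ 0, the coefficient h_{m,k}(n) of q^n in ∑_{n≥1} (-1)^{n-1} q^{k·n(n-1)/2 + mn} / (1 - q^n) is nonnegative. -/
open scoped Classical

private lemma hcoef_aux (m k N : ℕ) (hk : Odd k) (hk1 : 1 ≤ k) {j : ℕ}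
    (hj1 : 1 ≤ j) (hje : Even j)
    (hle : k*(j*(j-1)/2) + m*j ≤ N)
    (hdvd : j ∣ (N - (k*(j*(j-1)/2) + m*j))) :
    ∃ D ν : ℕ,
      N / (j/2) = D ∧
      ordCompl[2] N / D = ν ∧
      D ∣ ordCompl[2] N ∧
      j = 2 * (N / D) ∧
      1 ≤ ν ∧ ν ≤ N ∧ Odd ν ∧
      (k*(ν*(ν-1)/2) + m*ν ≤ N) ∧
      (ν ∣ (N - (k*(ν*(ν-1)/2) + m*ν))) ∧
      ν * D = ordCompl[2] N := by
  obtain ⟨r, hr⟩ : ∃ r, j = 2*r + 2 := by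
    rcases hje with ⟨s, hs⟩; exact ⟨s - 1, by omega⟩
  subst hr
  have hhalf : (2*r+2) * ((2*r+2) - 1) / 2 = (r+1)*(2*r+1) := by
    have h1 : (2*r+2) * ((2*r+2) - 1) = 2*((r+1)*(2*r+1)) := by
      have h2 : (2*r+2) - 1 = 2*r+1 := by omega
      rw [h2]; ring
    rw [h1, Nat.mul_div_cancel_left _ (by norm_num)]
  rw [hhalf] at hle hdvd
  obtain ⟨t, ht⟩ := hdvd
  have hNt : N = (2*r+2)*t + (k*((r+1)*(2*r+1)) + m*(2*r+2)) := by
    rw [← ht, Nat.sub_add_cancel hle]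
  set D := k*(2*r+1) + 2*m + 2*t with hD
  have hND : N = (r+1) * D := by rw [hNt, hD]; ring
  have hDpos : 0 < D := by
    have h1 : 0 < k*(2*r+1) := Nat.mul_pos hk1 (by omega)
    omega
  have hNpos : 0 < N := by rw [hND]; positivity
  have hDodd : Odd D := by
    obtain ⟨u, hu⟩ := hk
    exact ⟨u*(2*r+1) + r + m + t, by rw [hD, hu]; ring⟩
  have hNdiv : N / (r+1) = D := by rw [hND, Nat.mul_div_cancel_left _ (by omega)]
  set M := ordCompl[2] N with hM
  have hMN : 2 ^ (N.factorization 2) * M = N := Nat.ordProj_mul_ordCompl_eq_self N 2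
  have hM0 : 0 < M := Nat.ordCompl_pos 2 (by omega)
  have hModd : ¬ 2 ∣ M := Nat.not_dvd_ordCompl Nat.prime_two (by omega)
  have hDdvdN : D ∣ N := ⟨r+1, by rw [hND]; ring⟩
  have hDM : D ∣ M := by
    have hc2 : Nat.Coprime D 2 := by
      rw [Nat.coprime_comm]
      exact (Nat.Prime.coprime_iff_not_dvd Nat.prime_two).mpr (by
        rw [Nat.odd_iff] at hDodd; omega)
    have hcop : Nat.Coprime D (2 ^ (N.factorization 2)) := hc2.pow_right _
    exact hcop.dvd_of_dvd_mul_left (by rw [hMN]; exact hDdvdN)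
  set ν := M / D with hν
  have hνD : ν * D = M := Nat.div_mul_cancel hDM
  have hν1 : 1 ≤ ν := Nat.div_pos (Nat.le_of_dvd hM0 hDM) hDpos
  have hMdvdN : M ∣ N := Nat.ordCompl_dvd N 2
  have hMleN : M ≤ N := Nat.le_of_dvd hNpos hMdvdN
  have hνN : ν ≤ N := le_trans (Nat.div_le_self _ _) hMleN
  have hνdvdM : ν ∣ M := ⟨D, hνD.symm⟩
  have hνodd : Odd ν := by
    rcases Nat.even_or_odd ν with he | ho
    · exact absurd (dvd_trans he.two_dvd hνdvdM) hModd
    · exact ho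
  have hνle : ν ≤ r+1 := by
    have h1 : ν * D ≤ (r+1) * D := by rw [hνD, ← hND]; exact hMleN
    exact Nat.le_of_mul_le_mul_right h1 hDpos
  obtain ⟨s, hs⟩ := hνodd
  have hνodd' : Odd ν := ⟨s, hs⟩
  have hhalf2 : ν*(ν-1)/2 = ν * s := by
    have h1 : ν * (ν - 1) = 2*(ν*s) := by
      have h2 : ν - 1 = 2*s := by omega
      rw [h2]; ring
    rw [h1, Nat.mul_div_cancel_left _ (by norm_num)]
  have haν : k*(ν*(ν-1)/2) + m*ν = ν * (k*s + m) := by rw [hhalf2]; ring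
  have hksD : k*s + m ≤ D := by
    have h1 : k*s ≤ k*(2*r+1) := Nat.mul_le_mul_left k (by omega)
    omega
  have haleN : k*(ν*(ν-1)/2) + m*ν ≤ N := by
    rw [haν]
    calc ν*(k*s+m) ≤ ν*D := Nat.mul_le_mul_left ν hksD
    _ = M := hνD
    _ ≤ N := hMleN
  have hνdvd : ν ∣ (N - (k*(ν*(ν-1)/2) + m*ν)) := by
    apply Nat.dvd_sub
    · exact dvd_trans hνdvdM hMdvdN
    · rw [haν]; exact Dvd.intro _ rfl
  have hNDdiv : N / D = r + 1 := by rw [hND, Nat.mul_div_cancel _ hDpos]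
  refine ⟨D, ν, ?_, hν.symm, hDM, by omega, hν1, hνN, hνodd', haleN, hνdvd, hνD⟩
  rw [show (2*r+2)/2 = r+1 from by omega, hNdiv]

theorem stmt2 (m k : ℕ) (hk : Odd k) (hk1 : 1 ≤ k) (n : ℕ) :
    0 ≤ hcoef m k n := by
  classical
  have hsplit : hcoef m k n =
      (((Finset.Icc 1 (2*n+2)).filter
        (fun j => Odd j ∧ (k*(j*(j-1)/2) + m*j ≤ n ∧ j ∣ (n - (k*(j*(j-1)/2) + m*j))))).card : ℤ)
      - (((Finset.Icc 1 (2*n+2)).filter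
        (fun j => Even j ∧ (k*(j*(j-1)/2) + m*j ≤ n ∧ j ∣ (n - (k*(j*(j-1)/2) + m*j))))).card : ℤ) := by
    unfold hcoef
    rw [← Finset.sum_boole, ← Finset.sum_boole, ← Finset.sum_sub_distrib]
    refine Finset.sum_congr rfl ?_
    intro j hj
    have hj1 : 1 ≤ j := (Finset.mem_Icc.mp hj).1
    rcases Nat.even_or_odd j with he | ho
    · have hodd : Odd (j-1) := by rcases he with ⟨s, hs⟩; exact ⟨s-1, by omega⟩
      rw [hodd.neg_one_pow]
      have hno : ¬ Odd j := Nat.not_odd_iff_even.mpr he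
      by_cases hP : (k*(j*(j-1)/2) + m*j ≤ n ∧ j ∣ (n - (k*(j*(j-1)/2) + m*j))) <;>
        simp [hP, he, hno]
    · have heo : Even (j-1) := by rcases ho with ⟨s, hs⟩; exact ⟨s, by omega⟩
      rw [heo.neg_one_pow]
      have hne : ¬ Even j := Nat.not_even_iff_odd.mpr ho
      by_cases hP : (k*(j*(j-1)/2) + m*j ≤ n ∧ j ∣ (n - (k*(j*(j-1)/2) + m*j))) <;>
        simp [hP, ho, hne]
  rw [hsplit, sub_nonneg, Nat.cast_le]
  apply Finset.card_le_card_of_injOn (fun j => ordCompl[2] n / (n / (j/2)))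
  · intro j hjB
    simp only [Finset.mem_coe, Finset.mem_filter, Finset.mem_Icc] at hjB ⊢
    obtain ⟨⟨hjl, hjr⟩, hje, hP1, hP2⟩ := hjB
    obtain ⟨D, ν, hD, hν, _, _, hν1, hνN, hνodd, hQ1, hQ2, _⟩ :=
      hcoef_aux m k n hk hk1 hjl hje hP1 hP2
    rw [hD, hν]
    exact ⟨⟨hν1, by omega⟩, hνodd, hQ1, hQ2⟩
  · intro j1 h1 j2 h2 hφ
    simp only [Finset.mem_coe, Finset.mem_filter, Finset.mem_Icc] at h1 h2
    obtain ⟨⟨h1l, _⟩, h1e, h1P1, h1P2⟩ := h1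
    obtain ⟨⟨h2l, _⟩, h2e, h2P1, h2P2⟩ := h2
    obtain ⟨D1, ν1, hD1, hν1, _, hj1eq, hν1pos, _, _, _, _, hνD1⟩ :=
      hcoef_aux m k n hk hk1 h1l h1e h1P1 h1P2
    obtain ⟨D2, ν2, hD2, hν2, _, hj2eq, hν2pos, _, _, _, _, hνD2⟩ :=
      hcoef_aux m k n hk hk1 h2l h2e h2P1 h2P2
    simp only at hφ
    rw [hD1, hD2, hν1, hν2] at hφ
    have hDeq : D1 = D2 := by
      have : ν1 * D1 = ν1 * D2 := by rw [hνD1, hφ, hνD2]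
      exact Nat.eq_of_mul_eq_mul_left (by omega) this
    rw [hj1eq, hj2eq, hDeq]
end

section
/- For all integers m ≥ 0, n ≥ 0, and all odd integers k ≥ 1, we have h_{m,k}(2n) ≥ h_{m,k}(n), where h_{m,k}(n) is the number of divisors d of n with u_{m,k}(n) < 2kd ≤ 2·u_{m,k}(n), u_{m,k}(n) = √(2kn + (m - k/2)²) − (m − k/2), and h_{m,k}(0) = 0. -/
open scoped Classical

lemma u_mono (m k n : ℕ) : u m k n ≤ u m k (2*n) := by
  unfold u
  have h : (2*(k:ℝ)*n + ((m : ℝ) - k/2)^2) ≤ (2*(k:ℝ)*((2*n : ℕ):ℝ) + ((m : ℝ) - k/2)^2) := by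
    push_cast; nlinarith [Nat.cast_nonneg (α := ℝ) k, Nat.cast_nonneg (α := ℝ) n]
  have := Real.sqrt_le_sqrt h
  linarith

lemma u_double (m k n : ℕ) : u m k (2*n) ≤ 2 * u m k n := by
  unfold u
  set c : ℝ := (m : ℝ) - k/2 with hc
  have hkn : (0:ℝ) ≤ (k:ℝ) * n := by positivity
  set s : ℝ := Real.sqrt (2*(k:ℝ)*n + c^2) with hs
  have hs0 : 0 ≤ s := Real.sqrt_nonneg _
  have hsq : s^2 = 2*(k:ℝ)*n + c^2 := Real.sq_sqrt (by nlinarith)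
  have habs : |c| ≤ s := by
    rw [hs, ← Real.sqrt_sq_eq_abs]
    exact Real.sqrt_le_sqrt (by nlinarith)
  have hcs : c * s ≤ c^2 + (k:ℝ)*n := by
    have h1 : c * s ≤ |c| * s := mul_le_mul_of_nonneg_right (le_abs_self c) hs0
    have h2 : |c| * s = Real.sqrt (c^2 * (2*(k:ℝ)*n + c^2)) := by
      rw [Real.sqrt_mul (by positivity), Real.sqrt_sq_eq_abs, hs]
    have h3 : Real.sqrt (c^2 * (2*(k:ℝ)*n + c^2)) ≤ Real.sqrt ((c^2 + (k:ℝ)*n)^2) :=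
      Real.sqrt_le_sqrt (by nlinarith)
    have h4 : Real.sqrt ((c^2 + (k:ℝ)*n)^2) = c^2 + (k:ℝ)*n := by
      rw [Real.sqrt_sq (by nlinarith)]
    linarith
  have hR : (0:ℝ) ≤ 2 * s - c := by
    have := abs_le.mp (le_refl |c|)
    have : c ≤ |c| := le_abs_self c
    linarith
  have key : Real.sqrt (2*(k:ℝ)*((2*n : ℕ):ℝ) + c^2) ≤ 2 * s - c := by
    have h5 : 2*(k:ℝ)*((2*n : ℕ):ℝ) + c^2 ≤ (2 * s - c)^2 := by
      push_cast
      nlinarith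
    calc Real.sqrt (2*(k:ℝ)*((2*n : ℕ):ℝ) + c^2) ≤ Real.sqrt ((2*s - c)^2) :=
          Real.sqrt_le_sqrt h5
      _ = 2 * s - c := Real.sqrt_sq hR
  linarith

theorem stmt3 (m k : ℕ) (hk : Odd k) (hk1 : 1 ≤ k) (n : ℕ) :
    hd m k n ≤ hd m k (2*n) := by
  unfold hd
  set U := u m k n with hU
  set V := u m k (2*n) with hV
  have hUV : U ≤ V := u_mono m k n
  have hVU : V ≤ 2 * U := u_double m k n
  apply Finset.card_le_card_of_injOn (fun d => if V < ((2*k*d : ℕ):ℝ) then d else 2*d)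
  · intro d hd
    simp only [Finset.mem_coe, Finset.mem_filter, Nat.mem_divisors] at hd ⊢
    obtain ⟨⟨hdvd, hn0⟩, h1, h2⟩ := hd
    by_cases hcase : V < ((2*k*d : ℕ):ℝ)
    · rw [if_pos hcase]
      refine ⟨⟨hdvd.mul_left 2, by simp [hn0]⟩, hcase, by linarith⟩
    · rw [if_neg hcase]
      push_neg at hcase
      have hcast : ((2*k*(2*d) : ℕ):ℝ) = 2 * ((2*k*d : ℕ):ℝ) := by push_cast; ring
      refine ⟨⟨mul_dvd_mul_left 2 hdvd, by simp [hn0]⟩, ?_, ?_⟩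
      · rw [hcast]; linarith
      · rw [hcast]; linarith
  · intro d1 h1 d2 h2 heq
    simp only [Finset.mem_coe, Finset.mem_filter, Nat.mem_divisors] at h1 h2
    obtain ⟨_, ha1, hb1⟩ := h1
    obtain ⟨_, ha2, hb2⟩ := h2
    beta_reduce at heq
    by_cases c1 : V < ((2*k*d1 : ℕ):ℝ) <;> by_cases c2 : V < ((2*k*d2 : ℕ):ℝ)
    · rwa [if_pos c1, if_pos c2] at heq
    · rw [if_pos c1, if_neg c2] at heq
      exfalso
      push_neg at c2
      have : ((2*k*d1 : ℕ):ℝ) = 2 * ((2*k*d2 : ℕ):ℝ) := by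
        rw [heq]; push_cast; ring
      linarith
    · rw [if_neg c1, if_pos c2] at heq
      exfalso
      push_neg at c1
      have : ((2*k*d2 : ℕ):ℝ) = 2 * ((2*k*d1 : ℕ):ℝ) := by
        rw [← heq]; push_cast; ring
      linarith
    · rw [if_neg c1, if_neg c2] at heq
      omega
end

section
/- Let m ≥ 0 be an integer, k ≥ 1 an odd integer, n ≥ 1 an odd integer, and r ≥ 0 an integer. Then h_{m,k}(2^r n) equals the number of divisors ℓ of n satisfying 2^{-r} u_{m,k}(2^r n) < 2kℓ ≤ 2 u_{m,k}(2^r n). -/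
open scoped Classical

lemma decomp_aux (r n d : ℕ) (hn : Odd n) (hd : d ∣ 2^r * n) (hd0 : d ≠ 0) :
    d.factorization 2 ≤ r ∧ (d / 2 ^ d.factorization 2) ∣ n ∧
    d = 2 ^ d.factorization 2 * (d / 2 ^ d.factorization 2) := by
  set i := d.factorization 2 with hi
  set ℓ := d / 2 ^ i with hl
  have heq : 2 ^ i * ℓ = d := Nat.ordProj_mul_ordCompl_eq_self d 2
  have hlodd : Odd ℓ := Nat.odd_iff.mpr <| Nat.two_dvd_ne_zero.mp <|
    Nat.not_dvd_ordCompl Nat.prime_two hd0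
  have hcop : Nat.Coprime (2 ^ i) n := Nat.Coprime.pow_left _ (hn.coprime_two_left)
  have hir : i ≤ r := by
    have h1 : 2 ^ i ∣ 2 ^ r * n := dvd_trans (Nat.ordProj_dvd d 2) hd
    have h2 : 2 ^ i ∣ 2 ^ r := hcop.dvd_of_dvd_mul_right h1
    exact (Nat.pow_dvd_pow_iff_le_right one_lt_two).mp h2
  have hln : ℓ ∣ n := by
    have h1 : ℓ ∣ 2 ^ r * n := dvd_trans (Nat.ordCompl_dvd d 2) hd
    exact (Nat.Coprime.pow_right _ hlodd.coprime_two_right).dvd_of_dvd_mul_left h1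
  exact ⟨hir, hln, heq.symm⟩

lemma fact_aux (i ℓ : ℕ) (hl : Odd ℓ) : (2 ^ i * ℓ).factorization 2 = i := by
  have hl0 : ℓ ≠ 0 := hl.pos.ne'
  rw [Nat.factorization_mul (by positivity) hl0,
    Nat.Prime.factorization_pow Nat.prime_two]
  simp [Nat.factorization_eq_zero_of_not_dvd (by simpa [Nat.odd_iff] using hl :
    ¬ 2 ∣ ℓ)]

theorem stmt4 (m k : ℕ) (hk : Odd k) (hk1 : 1 ≤ k) (n : ℕ) (hn : Odd n) (r : ℕ) :
    hd m k (2^r * n) =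
      (n.divisors.filter
        (fun ℓ => u m k (2^r * n) / 2^r < ((2*k*ℓ : ℕ) : ℝ) ∧
          ((2*k*ℓ : ℕ) : ℝ) ≤ 2 * u m k (2^r * n))).card := by
  classical
  have hn0 : n ≠ 0 := hn.pos.ne'
  set N := 2 ^ r * n with hNdef
  have hN0 : N ≠ 0 := by
    have : 0 < N := Nat.mul_pos (Nat.pow_pos two_pos) hn.pos
    exact this.ne'
  set U := u m k N with hU
  have hUpos : 0 < U := by
    have h1 : (0:ℝ) < 2 * k * N := by
      have : 0 < (N:ℝ) := by exact_mod_cast Nat.pos_of_ne_zero hN0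
      have : 0 < (k:ℝ) := by exact_mod_cast hk1
      positivity
    have h2 : ((m:ℝ) - k/2) < Real.sqrt (2*k*N + ((m:ℝ) - k/2)^2) := by
      calc (m:ℝ) - k/2 ≤ |(m:ℝ) - k/2| := le_abs_self _
        _ = Real.sqrt (((m:ℝ) - k/2)^2) := (Real.sqrt_sq_eq_abs _).symm
        _ < _ := Real.sqrt_lt_sqrt (by positivity) (by linarith)
    simpa [u, hU, sub_pos] using h2
  unfold hd
  apply Finset.card_nbij (fun d => d / 2 ^ (d.factorization 2))
  · intro d hdmem
    simp only [Finset.mem_coe, Finset.mem_filter, Nat.mem_divisors] at hdmem ⊢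
    obtain ⟨⟨hdvd, -⟩, hlt, hle⟩ := hdmem
    have hd0 : d ≠ 0 := by
      rintro rfl
      simp at hlt
      linarith
    obtain ⟨hir, hln, heq⟩ := decomp_aux r n d hn hdvd hd0
    set i := d.factorization 2
    set ℓ := d / 2 ^ i
    have hcast : ((2*k*d : ℕ) : ℝ) = 2 ^ i * ((2*k*ℓ : ℕ) : ℝ) := by
      rw [heq]; push_cast; ring
    have hl0 : (0:ℝ) < ((2*k*ℓ : ℕ) : ℝ) := by
      have : ℓ ≠ 0 := fun h => hd0 (by rw [heq, h, mul_zero])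
      have : 0 < 2*k*ℓ := by positivity
      exact_mod_cast this
    refine ⟨⟨hln, hn0⟩, ?_, ?_⟩
    · rw [div_lt_iff₀ (by positivity)]
      calc U < ((2*k*d : ℕ) : ℝ) := hlt
        _ = 2 ^ i * ((2*k*ℓ : ℕ) : ℝ) := hcast
        _ ≤ 2 ^ r * ((2*k*ℓ : ℕ) : ℝ) := by
            apply mul_le_mul_of_nonneg_right _ hl0.le
            exact pow_le_pow_right₀ one_le_two hir
        _ = ((2*k*ℓ : ℕ) : ℝ) * 2 ^ r := by ring
    · calc ((2*k*ℓ : ℕ) : ℝ) ≤ 2 ^ i * ((2*k*ℓ : ℕ) : ℝ) := by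
            nlinarith [one_le_pow₀ (one_le_two : (1:ℝ) ≤ 2) (n := i)]
        _ = ((2*k*d : ℕ) : ℝ) := hcast.symm
        _ ≤ 2 * U := hle
  · intro d1 h1 d2 h2 hfeq
    simp only [Finset.coe_filter, Set.mem_setOf_eq, Nat.mem_divisors] at h1 h2
    obtain ⟨⟨hdvd1, -⟩, hlt1, hle1⟩ := h1
    obtain ⟨⟨hdvd2, -⟩, hlt2, hle2⟩ := h2
    have hd10 : d1 ≠ 0 := by rintro rfl; simp at hlt1; linarith
    have hd20 : d2 ≠ 0 := by rintro rfl; simp at hlt2; linarith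
    obtain ⟨-, -, heq1⟩ := decomp_aux r n d1 hn hdvd1 hd10
    obtain ⟨-, -, heq2⟩ := decomp_aux r n d2 hn hdvd2 hd20
    set i1 := d1.factorization 2
    set i2 := d2.factorization 2
    set ℓ := d1 / 2 ^ i1 with hldef
    have hl2 : d2 / 2 ^ i2 = ℓ := hfeq.symm
    rw [hl2] at heq2
    have hl0 : (0:ℝ) < ((2*k*ℓ : ℕ) : ℝ) := by
      have : ℓ ≠ 0 := fun h => hd10 (by rw [heq1, h, mul_zero])
      have : 0 < 2*k*ℓ := by positivity
      exact_mod_cast this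
    have hcast1 : ((2*k*d1 : ℕ) : ℝ) = 2 ^ i1 * ((2*k*ℓ : ℕ) : ℝ) := by
      rw [heq1]; push_cast; ring
    have hcast2 : ((2*k*d2 : ℕ) : ℝ) = 2 ^ i2 * ((2*k*ℓ : ℕ) : ℝ) := by
      rw [heq2]; push_cast; ring
    have key : ∀ a b : ℕ, a < b →
        U < 2 ^ a * ((2*k*ℓ : ℕ) : ℝ) → 2 ^ b * ((2*k*ℓ : ℕ) : ℝ) ≤ 2 * U → False := by
      intro a b hab hua hub
      have : (2:ℝ) ^ (a+1) ≤ 2 ^ b := pow_le_pow_right₀ one_le_two hab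
      have h3 : 2 * (2 ^ a * ((2*k*ℓ : ℕ) : ℝ)) ≤ 2 ^ b * ((2*k*ℓ : ℕ) : ℝ) := by
        rw [show (2:ℝ) * (2 ^ a * _) = 2 ^ (a+1) * ((2*k*ℓ : ℕ) : ℝ) by ring]
        exact mul_le_mul_of_nonneg_right this hl0.le
      linarith
    have hii : i1 = i2 := by
      rcases lt_trichotomy i1 i2 with h | h | h
      · exact (key i1 i2 h (hcast1 ▸ hlt1) (hcast2 ▸ hle2)).elim
      · exact h
      · exact (key i2 i1 h (hcast2 ▸ hlt2) (hcast1 ▸ hle1)).elim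
    rw [heq1, heq2, hii]
  · intro ℓ hlmem
    simp only [Finset.coe_filter, Set.mem_setOf_eq, Nat.mem_divisors] at hlmem
    obtain ⟨⟨hln, -⟩, hlt, hle⟩ := hlmem
    have hlodd : Odd ℓ := hn.of_dvd_nat hln
    have hl0R : (0:ℝ) < ((2*k*ℓ : ℕ) : ℝ) := by
      have : ℓ ≠ 0 := by
        rintro rfl
        simp only [mul_zero, Nat.cast_zero] at hlt
        have := div_pos hUpos (by positivity : (0:ℝ) < 2^r)
        linarith
      have : 0 < 2*k*ℓ := by positivity
      exact_mod_cast this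
    set P : ℕ → Prop := fun j => (2:ℝ) ^ j * ((2*k*ℓ : ℕ) : ℝ) ≤ 2 * U with hP
    have hP0 : P 0 := by simpa [hP] using hle
    set i := Nat.findGreatest P r with hidef
    have hir : i ≤ r := Nat.findGreatest_le r
    have hPi : P i := Nat.findGreatest_spec (Nat.zero_le r) hP0
    have hlow : U < 2 ^ i * ((2*k*ℓ : ℕ) : ℝ) := by
      rcases eq_or_lt_of_le hir with h | h
      · rw [h]
        have := (div_lt_iff₀ (by positivity : (0:ℝ) < 2^r)).mp hlt
        linarith [this]
      · have hng : ¬ P (i+1) := Nat.findGreatest_is_greatest (Nat.lt_succ_self i) h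
        simp only [hP, not_le] at hng
        have : (2:ℝ) ^ (i+1) * ((2*k*ℓ : ℕ) : ℝ) = 2 * (2 ^ i * ((2*k*ℓ : ℕ) : ℝ)) := by ring
        nlinarith
    refine ⟨2 ^ i * ℓ, ?_, ?_⟩
    · simp only [Finset.coe_filter, Set.mem_setOf_eq, Nat.mem_divisors]
      have hdvd : 2 ^ i * ℓ ∣ N := mul_dvd_mul (pow_dvd_pow 2 hir) hln
      have hcast : ((2*k*(2^i*ℓ) : ℕ) : ℝ) = 2 ^ i * ((2*k*ℓ : ℕ) : ℝ) := by
        push_cast; ring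
      exact ⟨⟨hdvd, hN0⟩, by rw [hcast]; exact hlow, by rw [hcast]; exact hPi⟩
    · show 2 ^ i * ℓ / 2 ^ ((2 ^ i * ℓ).factorization 2) = ℓ
      rw [fact_aux i ℓ hlodd]
      exact Nat.mul_div_cancel_left ℓ (by positivity)
end

section
/- Let m ≥ 0 be an integer, k ≥ 1 an odd integer, n ≥ 1 an odd integer, and r ≥ 0 an integer. Then h_{m,k}(2^{r+1} n) − h_{m,k}(2^r n) = #{ℓ ∣ n : 2^{-1-r} u_{m,k}(2^{r+1} n) < 2kℓ ≤ 2^{-r} u_{m,k}(2^r n)} + #{ℓ ∣ n : 2 u_{m,k}(2^r n) < 2kℓ ≤ 2 u_{m,k}(2^{r+1} n)}. -/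
open scoped Classical

lemma odd_part_eq (j ℓ : ℕ) (h : ¬ 2 ∣ ℓ) (hl : ℓ ≠ 0) :
    (2^j * ℓ) / 2 ^ ((2^j * ℓ).factorization 2) = ℓ := by
  rw [Nat.factorization_mul (by positivity) hl]
  simp [Nat.Prime.factorization_pow Nat.prime_two,
    Nat.factorization_eq_zero_of_not_dvd h, Nat.pow_div]

lemma divisor_split (n s d : ℕ) (hn2 : ¬ 2 ∣ n) (hdvd : d ∣ 2^s * n) (hd0 : d ≠ 0) :
    ∃ j ℓ, j ≤ s ∧ ℓ ∣ n ∧ ℓ ≠ 0 ∧ d = 2^j * ℓ ∧ d / 2^(d.factorization 2) = ℓ := by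
  have hcop2n : Nat.Coprime 2 n := (Nat.prime_two.coprime_iff_not_dvd).mpr hn2
  set j := d.factorization 2 with hj
  set ℓ := d / 2^j with hℓ
  have hmul : 2^j * ℓ = d := Nat.ordProj_mul_ordCompl_eq_self d 2
  have hℓdvd_d : ℓ ∣ d := Nat.ordCompl_dvd d 2
  have hℓ2 : ¬ 2 ∣ ℓ := Nat.not_dvd_ordCompl Nat.prime_two hd0
  have hℓ0 : ℓ ≠ 0 := by intro h0; rw [h0, mul_zero] at hmul; exact hd0 hmul.symm
  refine ⟨j, ℓ, ?_, ?_, hℓ0, hmul.symm, rfl⟩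
  · have h1 : (2:ℕ)^j ∣ 2^s * n := dvd_trans (Nat.ordProj_dvd d 2) hdvd
    have h2 : (2:ℕ)^j ∣ 2^s := (Nat.Coprime.pow_left j hcop2n).dvd_of_dvd_mul_right h1
    exact (Nat.pow_dvd_pow_iff_le_right (by norm_num)).mp h2
  · have h1 : ℓ ∣ 2^s * n := dvd_trans hℓdvd_d hdvd
    have hcop : Nat.Coprime ℓ (2^s) :=
      Nat.Coprime.pow_right s (((Nat.prime_two.coprime_iff_not_dvd).mpr hℓ2).symm)
    exact hcop.dvd_of_dvd_mul_left h1

lemma cast_split (k j ℓ : ℕ) : ((2*k*(2^j*ℓ) : ℕ):ℝ) = 2^j * ((2*k*ℓ : ℕ):ℝ) := by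
  push_cast; ring

lemma unique_j (U x : ℝ) (hx : 0 < x) (j1 j2 : ℕ) (h1 : U < 2^j1 * x)
    (h1' : 2^j1 * x ≤ 2*U) (h2 : U < 2^j2 * x) (h2' : 2^j2*x ≤ 2*U) : j1 = j2 := by
  by_contra hne
  rcases Nat.lt_or_ge j1 j2 with h | h
  · have hp : (2:ℝ)^(j1+1) ≤ 2^j2 := pow_le_pow_right₀ one_le_two h
    rw [pow_succ] at hp; nlinarith
  · have hlt : j2 + 1 ≤ j1 := by omega
    have hp : (2:ℝ)^(j2+1) ≤ 2^j1 := pow_le_pow_right₀ one_le_two hlt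
    rw [pow_succ] at hp; nlinarith

lemma hd_eq (m k : ℕ) (hk1 : 1 ≤ k) (n : ℕ) (hn : Odd n) (s : ℕ) :
    hd m k (2^s * n) =
    (n.divisors.filter (fun ℓ => ((2*k*ℓ : ℕ):ℝ) ≤ 2 * u m k (2^s*n) ∧
      u m k (2^s*n) < 2^s * ((2*k*ℓ:ℕ):ℝ))).card := by
  have hodd := Nat.odd_iff.mp hn
  have hn0 : n ≠ 0 := by omega
  have hn2 : ¬ 2 ∣ n := by omega
  set U := u m k (2^s * n) with hU
  unfold hd
  apply Finset.card_bij (fun d _ => d / 2 ^ (d.factorization 2))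
  · intro d hdmem
    rw [Finset.mem_filter, Nat.mem_divisors] at hdmem
    obtain ⟨⟨hdvd, hNne⟩, hlt, hle⟩ := hdmem
    have hd0 : d ≠ 0 := by rintro rfl; exact hNne (zero_dvd_iff.mp hdvd)
    obtain ⟨j, ℓ, hjs, hℓn, hℓ0, hdeq, him⟩ := divisor_split n s d hn2 hdvd hd0
    rw [Finset.mem_filter, Nat.mem_divisors, him]
    have hcast : ((2*k*d : ℕ):ℝ) = 2^j * ((2*k*ℓ : ℕ):ℝ) := by rw [hdeq]; exact cast_split k j ℓ
    rw [hcast] at hlt hle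
    set x := ((2*k*ℓ : ℕ):ℝ) with hx
    have hxpos : (0:ℝ) < x := by
      rw [hx]
      exact_mod_cast Nat.mul_pos (Nat.mul_pos two_pos hk1) (Nat.pos_of_ne_zero hℓ0)
    have h1j : (1:ℝ) ≤ 2^j := one_le_pow₀ one_le_two
    have hjsR : (2:ℝ)^j ≤ 2^s := pow_le_pow_right₀ one_le_two hjs
    exact ⟨⟨hℓn, hn0⟩, by nlinarith, by nlinarith⟩
  · intro d1 h1 d2 h2 heq
    rw [Finset.mem_filter, Nat.mem_divisors] at h1 h2
    obtain ⟨⟨hdvd1, hNne⟩, hlt1, hle1⟩ := h1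
    obtain ⟨⟨hdvd2, -⟩, hlt2, hle2⟩ := h2
    have hd10 : d1 ≠ 0 := by rintro rfl; exact hNne (zero_dvd_iff.mp hdvd1)
    have hd20 : d2 ≠ 0 := by rintro rfl; exact hNne (zero_dvd_iff.mp hdvd2)
    obtain ⟨j1, ℓ1, hjs1, hℓn1, hℓ01, hdeq1, him1⟩ := divisor_split n s d1 hn2 hdvd1 hd10
    obtain ⟨j2, ℓ2, hjs2, hℓn2, hℓ02, hdeq2, him2⟩ := divisor_split n s d2 hn2 hdvd2 hd20
    rw [him1, him2] at heq
    subst heq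
    rw [hdeq1] at hlt1 hle1
    rw [hdeq2] at hlt2 hle2
    rw [cast_split] at hlt1 hle1 hlt2 hle2
    have hxpos : (0:ℝ) < ((2*k*ℓ1 : ℕ):ℝ) := by
      have : 0 < 2*k*ℓ1 := by positivity
      exact_mod_cast this
    have := unique_j U _ hxpos j1 j2 hlt1 hle1 hlt2 hle2
    rw [hdeq1, hdeq2, this]
  · intro ℓ hmem
    rw [Finset.mem_filter, Nat.mem_divisors] at hmem
    obtain ⟨⟨hℓn, -⟩, hle, hlt⟩ := hmem
    set x := ((2*k*ℓ : ℕ):ℝ) with hx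
    have hℓ0 : ℓ ≠ 0 := by rintro rfl; exact hn0 (zero_dvd_iff.mp hℓn)
    have hℓ2 : ¬ 2 ∣ ℓ := fun h => hn2 (h.trans hℓn)
    have hxpos : (0:ℝ) < x := by
      rw [hx]
      exact_mod_cast Nat.mul_pos (Nat.mul_pos two_pos hk1) (Nat.pos_of_ne_zero hℓ0)
    set P : ℕ → Prop := fun j => ((2:ℝ)^j * x ≤ 2*U) with hP
    have hP0 : P 0 := by simpa [hP] using hle
    set j0 := Nat.findGreatest P s with hj0
    have hj0s : j0 ≤ s := Nat.findGreatest_le s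
    have hPj0 : P j0 := Nat.findGreatest_spec (Nat.zero_le s) hP0
    have hupper : U < 2^j0 * x := by
      rcases eq_or_lt_of_le hj0s with he | hl
      · rw [he]; exact hlt
      · have hnot : ¬ P (j0+1) := Nat.findGreatest_is_greatest (n := s) (k := j0+1) (P := P) (by omega) (by omega)
        simp only [hP, not_le, pow_succ] at hnot
        nlinarith
    refine ⟨2^j0 * ℓ, ?_, odd_part_eq j0 ℓ hℓ2 hℓ0⟩
    rw [Finset.mem_filter, Nat.mem_divisors, cast_split]
    exact ⟨⟨mul_dvd_mul (pow_dvd_pow 2 hj0s) hℓn, by positivity⟩, hupper, hPj0⟩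

lemma u_pos (m k N : ℕ) (hk : 1 ≤ k) (hN : 1 ≤ N) : 0 < u m k N := by
  unfold u
  set c : ℝ := (m : ℝ) - k/2 with hc
  have hrad : (0:ℝ) < 2*k*N := by positivity
  rcases le_or_gt 0 c with h | h
  · have : c < Real.sqrt (2*k*N + c^2) := by
      rw [Real.lt_sqrt h]; linarith
    linarith
  · have := Real.sqrt_nonneg (2*(k:ℝ)*N + c^2)
    linarith

lemma u_lt_u (m k N : ℕ) (hk : 1 ≤ k) (hN : 1 ≤ N) : u m k N < u m k (2*N) := by
  unfold u
  have hrad : (0:ℝ) < 2*k*N := by positivity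
  apply sub_lt_sub_right
  apply Real.sqrt_lt_sqrt (by positivity)
  push_cast; nlinarith

lemma u_lt_two (m k N : ℕ) (hk : 1 ≤ k) (hN : 1 ≤ N) : u m k (2*N) < 2 * u m k N := by
  have hu := u_pos m k N hk hN
  unfold u at *
  set c : ℝ := (m : ℝ) - k/2 with hc
  set S : ℝ := Real.sqrt (2*k*N + c^2) with hS
  have hrad : (0:ℝ) < 2*k*N := by positivity
  have hS2 : S^2 = 2*k*N + c^2 := Real.sq_sqrt (by positivity)
  have hSnn : 0 ≤ S := Real.sqrt_nonneg _
  have hcS : c ≤ S := by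
    calc c ≤ |c| := le_abs_self c
    _ = Real.sqrt (c^2) := (Real.sqrt_sq_eq_abs c).symm
    _ ≤ S := Real.sqrt_le_sqrt (by linarith)
  have hSne : S ≠ c := by
    intro h; rw [h] at hS2; nlinarith
  have hpos : (0:ℝ) < (S - c)^2 := by
    have : S - c ≠ 0 := sub_ne_zero.mpr hSne
    positivity
  have h2Sc : 0 < 2*S - c := by nlinarith
  have : Real.sqrt (2*k*(2*N:ℕ) + c^2) < 2*S - c := by
    rw [show (((2*N : ℕ)):ℝ) = 2*(N:ℝ) by push_cast; ring]
    rw [show (2:ℝ)*k*(2*N) = 4*k*N by ring]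
    rw [Real.sqrt_lt' h2Sc]
    nlinarith
  linarith
lemma key (a b e x : ℝ) (ha : 0 < a) (hab : a < b) (hba : b < 2*a) (he : 1 ≤ e)
    (hx : 0 < x) :
    ((if x ≤ 2*b ∧ b < 2*e*x then (1:ℤ) else 0) - (if x ≤ 2*a ∧ a < e*x then 1 else 0))
    = (if b/(2*e) < x ∧ x ≤ a/e then 1 else 0) + (if 2*a < x ∧ x ≤ 2*b then 1 else 0) := by
  have he0 : (0:ℝ) < e := lt_of_lt_of_le one_pos he
  have h2e : (0:ℝ) < 2*e := by linarith
  have hxe : x ≤ e*x := by nlinarith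
  rcases le_or_gt (2*e*x) b with H1 | H1
  · rw [if_neg (by rintro ⟨h1, h2⟩; linarith),
       if_neg (by rintro ⟨h1, h2⟩; nlinarith),
       if_neg (by rintro ⟨h1, h2⟩; rw [div_lt_iff₀ h2e] at h1; nlinarith),
       if_neg (by rintro ⟨h1, h2⟩; nlinarith)]
    ring
  · rcases le_or_gt (e*x) a with H2 | H2
    · rw [if_pos ⟨by nlinarith, H1⟩,
         if_neg (by rintro ⟨h1, h2⟩; linarith),
         if_pos ⟨by rw [div_lt_iff₀ h2e]; nlinarith, by rw [le_div_iff₀ he0]; nlinarith⟩,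
         if_neg (by rintro ⟨h1, h2⟩; nlinarith)]
      ring
    · rcases le_or_gt x (2*a) with H3 | H3
      · rw [if_pos ⟨by linarith, by nlinarith⟩,
           if_pos ⟨H3, H2⟩,
           if_neg (by rintro ⟨h1, h2⟩; rw [le_div_iff₀ he0] at h2; nlinarith),
           if_neg (by rintro ⟨h1, h2⟩; linarith)]
        ring
      · rcases le_or_gt x (2*b) with H4 | H4
        · rw [if_pos ⟨H4, by nlinarith⟩,
             if_neg (by rintro ⟨h1, h2⟩; linarith),
             if_neg (by rintro ⟨h1, h2⟩; rw [le_div_iff₀ he0] at h2; nlinarith),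
             if_pos ⟨H3, H4⟩]
          ring
        · rw [if_neg (by rintro ⟨h1, h2⟩; linarith),
             if_neg (by rintro ⟨h1, h2⟩; linarith),
             if_neg (by rintro ⟨h1, h2⟩; rw [le_div_iff₀ he0] at h2; nlinarith),
             if_neg (by rintro ⟨h1, h2⟩; linarith)]
          ring

theorem stmt5 (m k : ℕ) (hk : Odd k) (hk1 : 1 ≤ k) (n : ℕ) (hn : Odd n) (r : ℕ) :
    (hd m k (2^(r+1) * n) : ℤ) - (hd m k (2^r * n) : ℤ) =
      ((n.divisors.filter
        (fun ℓ => u m k (2^(r+1) * n) / 2^(r+1) < ((2*k*ℓ : ℕ) : ℝ) ∧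
          ((2*k*ℓ : ℕ) : ℝ) ≤ u m k (2^r * n) / 2^r)).card : ℤ)
      + ((n.divisors.filter
        (fun ℓ => 2 * u m k (2^r * n) < ((2*k*ℓ : ℕ) : ℝ) ∧
          ((2*k*ℓ : ℕ) : ℝ) ≤ 2 * u m k (2^(r+1) * n))).card : ℤ) := by
  have hodd := Nat.odd_iff.mp hn
  have hn0 : n ≠ 0 := by omega
  have hN : 1 ≤ 2^r * n := Nat.mul_pos (pow_pos two_pos r) (Nat.pos_of_ne_zero hn0)
  have h2N : 2^(r+1) * n = 2 * (2^r * n) := by ring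
  have ha : 0 < u m k (2^r * n) := u_pos m k _ hk1 hN
  have hab : u m k (2^r * n) < u m k (2^(r+1) * n) := by
    rw [h2N]; exact u_lt_u m k _ hk1 hN
  have hba : u m k (2^(r+1) * n) < 2 * u m k (2^r * n) := by
    rw [h2N]; exact u_lt_two m k _ hk1 hN
  rw [hd_eq m k hk1 n hn (r+1), hd_eq m k hk1 n hn r]
  rw [Finset.card_filter, Finset.card_filter, Finset.card_filter, Finset.card_filter]
  push_cast
  rw [← Finset.sum_sub_distrib, ← Finset.sum_add_distrib]
  refine Finset.sum_congr rfl fun ℓ hℓ => ?_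
  have hℓ0 : ℓ ≠ 0 := (Nat.pos_of_mem_divisors hℓ).ne'
  have hx : (0:ℝ) < ((2*k*ℓ : ℕ):ℝ) := by
    exact_mod_cast Nat.mul_pos (Nat.mul_pos two_pos hk1) (Nat.pos_of_ne_zero hℓ0)
  have he : (1:ℝ) ≤ 2^r := one_le_pow₀ one_le_two
  have h2e : (2:ℝ)^(r+1) = 2*(2^r) := by ring
  have := key (u m k (2^r * n)) (u m k (2^(r+1) * n)) (2^r) ((2*k*ℓ : ℕ):ℝ)
    ha hab hba he hx
  rw [h2e]
  push_cast at this
  convert this using 2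
end

section
/- Let k ≥ 1 be an odd integer and m ≥ 0 an integer. Then for every prime p with p ≥ max(2k, 10·|1 − 2m/k|), we have h_{m,k}(k p²) = 1. -/
open scoped Classical

set_option maxHeartbeats 1000000

theorem stmt7 (m k : ℕ) (hk : Odd k) (hk1 : 1 ≤ k) (p : ℕ) (hp : p.Prime)
    (hge : max ((2 * k : ℕ) : ℝ) (10 * |1 - 2*(m : ℝ)/(k : ℝ)|) ≤ (p : ℝ)) :
    hd m k (k * p^2) = 1 := by
  have hk0 : 0 < k := hk1
  have hp0 : 0 < p := hp.pos
  have hK1 : (1:ℝ) ≤ (k:ℝ) := by exact_mod_cast hk1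
  have hP2K : 2*(k:ℝ) ≤ (p:ℝ) := by
    have := le_trans (le_max_left _ _) hge
    push_cast at this
    linarith
  have hP0 : (0:ℝ) < (p:ℝ) := by linarith
  have hKP0 : (0:ℝ) < (k:ℝ)*(p:ℝ) := by nlinarith
  have hK0 : (0:ℝ) < (k:ℝ) := by linarith
  have hcbound : |(m:ℝ) - (k:ℝ)/2| ≤ (k:ℝ)*(p:ℝ)/20 := by
    have h10 : 10 * |1 - 2*(m:ℝ)/(k:ℝ)| ≤ (p:ℝ) := le_trans (le_max_right _ _) hge
    have h1 : 1 - 2*(m:ℝ)/(k:ℝ) = -(2*((m:ℝ) - (k:ℝ)/2))/(k:ℝ) := by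
      field_simp
      ring
    rw [h1, abs_div, abs_neg, abs_of_pos hK0] at h10
    have h2 : |2*((m:ℝ) - (k:ℝ)/2)| = 2*|(m:ℝ) - (k:ℝ)/2| := by
      rw [abs_mul]; norm_num
    rw [h2] at h10
    have h3 : 20*|(m:ℝ) - (k:ℝ)/2| ≤ (p:ℝ)*(k:ℝ) := by
      have h4 : (20*|(m:ℝ) - (k:ℝ)/2|)/(k:ℝ) ≤ (p:ℝ) := by
        rw [show (20*|(m:ℝ) - (k:ℝ)/2|)/(k:ℝ) = 10 * (2*|(m:ℝ) - (k:ℝ)/2|/(k:ℝ)) by ring]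
        exact h10
      exact (div_le_iff₀ hK0).mp h4
    linarith
  have harg : 2*(k:ℝ)*((k*p^2 : ℕ):ℝ) + ((m:ℝ) - (k:ℝ)/2)^2
      = 2*(k:ℝ)^2*(p:ℝ)^2 + ((m:ℝ) - (k:ℝ)/2)^2 := by
    push_cast; ring
  have hU : u m k (k*p^2)
      = Real.sqrt (2*(k:ℝ)^2*(p:ℝ)^2 + ((m:ℝ) - (k:ℝ)/2)^2) - ((m:ℝ) - (k:ℝ)/2) := by
    rw [u, harg]
  have hcsq : ((m:ℝ) - (k:ℝ)/2)^2 ≤ ((k:ℝ)*(p:ℝ)/20)^2 := by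
    calc ((m:ℝ) - (k:ℝ)/2)^2 = |(m:ℝ) - (k:ℝ)/2|^2 := (sq_abs _).symm
      _ ≤ ((k:ℝ)*(p:ℝ)/20)^2 := by
          apply pow_le_pow_left₀ (abs_nonneg _) hcbound
  have hS1 : 1.4*((k:ℝ)*(p:ℝ)) ≤ Real.sqrt (2*(k:ℝ)^2*(p:ℝ)^2 + ((m:ℝ) - (k:ℝ)/2)^2) := by
    rw [show (1.4*((k:ℝ)*(p:ℝ))) = Real.sqrt ((1.4*((k:ℝ)*(p:ℝ)))^2) from
      (Real.sqrt_sq (by positivity)).symm]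
    apply Real.sqrt_le_sqrt
    nlinarith [sq_nonneg ((m:ℝ) - (k:ℝ)/2)]
  have hS2 : Real.sqrt (2*(k:ℝ)^2*(p:ℝ)^2 + ((m:ℝ) - (k:ℝ)/2)^2) ≤ 1.5*((k:ℝ)*(p:ℝ)) := by
    rw [show (1.5*((k:ℝ)*(p:ℝ))) = Real.sqrt ((1.5*((k:ℝ)*(p:ℝ)))^2) from
      (Real.sqrt_sq (by positivity)).symm]
    apply Real.sqrt_le_sqrt
    nlinarith [hcsq]
  have hcabs := abs_le.mp hcbound
  have hUlo : 1.35*((k:ℝ)*(p:ℝ)) ≤ u m k (k*p^2) := by rw [hU]; linarith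
  have hUhi : u m k (k*p^2) ≤ 1.55*((k:ℝ)*(p:ℝ)) := by rw [hU]; linarith
  have hn0 : k * p^2 ≠ 0 := by positivity
  have key : ((k*p^2).divisors.filter
      (fun d => u m k (k*p^2) < ((2*k*d : ℕ) : ℝ) ∧ ((2*k*d : ℕ) : ℝ) ≤ 2 * u m k (k*p^2)))
      = {p} := by
    apply Finset.eq_singleton_iff_unique_mem.mpr
    constructor
    · rw [Finset.mem_filter, Nat.mem_divisors]
      refine ⟨⟨⟨k*p, by ring⟩, hn0⟩, ?_, ?_⟩
      · push_cast; nlinarith [hUhi, hKP0]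
      · push_cast; linarith [hUlo]
    · intro d hd'
      rw [Finset.mem_filter, Nat.mem_divisors] at hd'
      obtain ⟨⟨hdvd, hne⟩, h1, h2⟩ := hd'
      push_cast at h1 h2
      have hdk : (k:ℝ) < d := by
        nlinarith [h1, hUlo, mul_le_mul_of_nonneg_left hP2K hK0.le, hK1, hK0]
      have hd2p : (d:ℝ) < 2*p := by
        nlinarith [h2, hUhi, hKP0, hK0, hK1, hP0]
      have hdk' : k < d := by exact_mod_cast hdk
      have hd2p' : d < 2*p := by exact_mod_cast hd2p
      have hpd : p ∣ d := by
        by_contra hnd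
        have hcop : Nat.Coprime d (p^2) :=
          Nat.Coprime.pow_right 2 ((hp.coprime_iff_not_dvd.mpr hnd).symm)
        have : d ∣ k := hcop.dvd_of_dvd_mul_right hdvd
        have := Nat.le_of_dvd hk0 this
        omega
      obtain ⟨e, he⟩ := hpd
      have he0 : e ≠ 0 := by
        rintro rfl
        rw [Nat.mul_zero] at he
        omega
      have hlt : p * e < p * 2 := by omega
      have he2 : e < 2 := Nat.lt_of_mul_lt_mul_left hlt
      have he1 : e = 1 := by omega
      rw [he, he1, mul_one]
  unfold hd
  rw [key, Finset.card_singleton]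
end

section
/- Let t ≥ 1 and m ≥ 0 be integers and k ≥ 1 an odd integer. Then for all primes q > p ≥ max(2k, 10·|1 − 2m/k|) satisfying (q/p)^{t/2} ≤ 0.96·√2, we have h_{m,k}(k p^t q^t) = 1 + t. -/
open scoped Classical
set_option maxHeartbeats 1000000

theorem stmt8 (m k t : ℕ) (hk : Odd k) (hk1 : 1 ≤ k) (ht : 1 ≤ t)
    (p q : ℕ) (hp : p.Prime) (hq : q.Prime) (hpq : p < q)
    (hge : max ((2 * k : ℕ) : ℝ) (10 * |1 - 2*(m : ℝ)/(k : ℝ)|) ≤ (p : ℝ))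
    (hpow : ((q : ℝ)/(p : ℝ)) ^ ((t : ℝ)/2) ≤ 0.96 * Real.sqrt 2) :
    hd m k (k * p^t * q^t) = 1 + t := by
  have hk0 : (0:ℝ) < k := by exact_mod_cast hk1
  have hp0 : 0 < p := hp.pos
  have hq0 : 0 < q := hq.pos
  have hP0 : (0:ℝ) < p := by exact_mod_cast hp0
  have hQ0 : (0:ℝ) < q := by exact_mod_cast hq0
  have hPQ : (p:ℝ) < q := by exact_mod_cast hpq
  have h2k : (2*(k:ℝ)) ≤ p := by
    have := le_trans (le_max_left _ _) hge; push_cast at this; linarith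
  have h2kn : 2*k ≤ p := by exact_mod_cast h2k
  have habs : 10 * |1 - 2*(m:ℝ)/k| ≤ p := le_trans (le_max_right _ _) hge
  obtain ⟨c, hc_def⟩ : ∃ x : ℝ, x = (m:ℝ) - k/2 := ⟨_, rfl⟩
  have h1c : 1 - 2*(m:ℝ)/k = (2/k) * (-c) := by
    rw [hc_def]; field_simp; ring
  have habs' : 10 * ((2/k) * |c|) ≤ p := by
    rw [h1c, abs_mul, abs_neg, abs_of_pos (by positivity : (0:ℝ) < 2/k)] at habs
    exact habs
  have hcabs : |c| ≤ (k:ℝ)*p/20 := by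
    have h := mul_le_mul_of_nonneg_right habs' hk0.le
    have e : 10 * ((2/(k:ℝ)) * |c|) * k = 20 * |c| := by field_simp; ring
    rw [e] at h; linarith
  have hkm : (k:ℤ) ≠ 2*m := by obtain ⟨j, hj⟩ := hk; omega
  have hcge : (1:ℝ) ≤ 2*|c| := by
    have h1 : (1:ℤ) ≤ |2*(m:ℤ) - k| := by rw [le_abs]; omega
    have h2 : (1:ℝ) ≤ |2*(m:ℝ) - k| := by exact_mod_cast h1
    have h3 : |2*(m:ℝ) - k| = 2*|c| := by
      rw [hc_def, show 2*(m:ℝ) - k = 2*((m:ℝ) - k/2) by ring, abs_mul]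
      norm_num
    linarith [h3 ▸ h2]
  have hpk10 : (10:ℝ) ≤ p * k := by
    have h := mul_le_mul_of_nonneg_right habs' hk0.le
    have e : 10 * ((2/(k:ℝ)) * |c|) * k = 10 * (2 * |c|) := by field_simp
    rw [e] at h; nlinarith only [h, hcge, hP0, hk0]
  have hgt4 : (4:ℝ) < p := by
    nlinarith only [hpk10, h2k, hP0, mul_le_mul_of_nonneg_right h2k hP0.le]
  have hp5 : (5:ℕ) ≤ p := by
    have h4 : (4:ℕ) < p := by exact_mod_cast hgt4
    omega
  have hP5 : (5:ℝ) ≤ p := by exact_mod_cast hp5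
  have hsq2 : Real.sqrt 2 ^ 2 = 2 := Real.sq_sqrt (by norm_num)
  have hsq2n : 0 ≤ Real.sqrt 2 := Real.sqrt_nonneg 2
  have hr2lo : (1.414213:ℝ) ≤ Real.sqrt 2 := by nlinarith only [hsq2, hsq2n]
  have hr2hi : Real.sqrt 2 ≤ 1.414214 := by nlinarith only [hsq2, hsq2n]
  -- s and N
  obtain ⟨s, hsdef⟩ : ∃ x : ℝ, x = Real.sqrt (((q:ℝ)/p)^t) := ⟨_, rfl⟩
  obtain ⟨N, hNdef⟩ : ∃ x : ℝ, x = Real.sqrt (((p:ℝ)*q)^t) := ⟨_, rfl⟩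
  have hs0 : 0 < s := by rw [hsdef]; exact Real.sqrt_pos.2 (by positivity)
  have hN0 : 0 < N := by rw [hNdef]; exact Real.sqrt_pos.2 (by positivity)
  have hN2 : N^2 = ((p:ℝ)*q)^t := by rw [hNdef]; exact Real.sq_sqrt (by positivity)
  have hQt : N * s = (q:ℝ)^t := by
    rw [hNdef, hsdef, ← Real.sqrt_mul (by positivity), ← mul_pow,
      show (p:ℝ)*q*((q:ℝ)/p) = (q:ℝ)*q by field_simp,
      show ((q:ℝ)*q)^t = ((q:ℝ)^t)*((q:ℝ)^t) by rw [mul_pow],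
      Real.sqrt_mul_self (by positivity)]
  have hPt : (p:ℝ)^t * s = N := by
    rw [hsdef, hNdef]
    rw [show (p:ℝ)^t = Real.sqrt (((p:ℝ)^t)^2) by rw [Real.sqrt_sq (by positivity)]]
    rw [← Real.sqrt_mul (by positivity)]
    congr 1
    rw [show ((p:ℝ)^t)^2 = ((p:ℝ)^2)^t by ring, ← mul_pow]
    congr 1
    field_simp
  have hs1 : 1 ≤ s := by
    rw [hsdef, show (1:ℝ) = Real.sqrt 1 by simp]
    apply Real.sqrt_le_sqrt
    apply one_le_pow₀
    rw [le_div_iff₀ hP0]; linarith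
  have hshi : s ≤ 0.96 * Real.sqrt 2 := by
    have hrw : ((q:ℝ)/p) ^ ((t:ℝ)/2) = s := by
      rw [hsdef, show ((t:ℝ)/2) = (t:ℝ)*(1/2) by ring, Real.rpow_mul (by positivity),
        Real.rpow_natCast, ← Real.sqrt_eq_rpow]
    rw [hrw] at hpow; linarith
  have hshi' : s ≤ 1.3576455 := by nlinarith only [hshi, hr2hi, hs0]
  have hP1 : (1:ℝ) ≤ p := by linarith
  have hPt1 : (p:ℝ) ≤ (p:ℝ)^t := le_self_pow₀ hP1 (by omega)
  have hPtpos : (0:ℝ) < (p:ℝ)^t := pow_pos hP0 t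
  have hpN : (p:ℝ) ≤ N := by
    calc (p:ℝ) ≤ (p:ℝ)^t := hPt1
      _ = (p:ℝ)^t * 1 := (mul_one _).symm
      _ ≤ (p:ℝ)^t * s := by apply mul_le_mul_of_nonneg_left hs1 (by positivity)
      _ = N := hPt
  have hNPt : N ≤ 1.3576455 * (p:ℝ)^t := by
    calc N = (p:ℝ)^t * s := hPt.symm
      _ ≤ (p:ℝ)^t * 1.3576455 := mul_le_mul_of_nonneg_left hshi' (by positivity)
      _ = 1.3576455 * (p:ℝ)^t := by ring
  obtain ⟨n, hn_def⟩ : ∃ x : ℕ, x = k * p^t * q^t := ⟨_, rfl⟩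
  rw [← hn_def]
  have hn0 : n ≠ 0 := by rw [hn_def]; positivity
  obtain ⟨B, hB_def⟩ : ∃ x : ℝ, x = (k:ℝ) * N := ⟨_, rfl⟩
  have hB0 : 0 < B := by rw [hB_def]; positivity
  have hcB : |c| ≤ B/20 := by
    rw [hB_def]
    have := mul_le_mul_of_nonneg_left hpN hk0.le
    calc |c| ≤ (k:ℝ)*p/20 := hcabs
      _ ≤ (k:ℝ)*N/20 := by linarith
  obtain ⟨A, hA_def⟩ : ∃ x : ℝ, x = Real.sqrt 2 * B := ⟨_, rfl⟩
  have hA0 : 0 < A := by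
    rw [hA_def]; exact mul_pos (Real.sqrt_pos.2 (by norm_num)) hB0
  have hA2 : A^2 = 2*(k:ℝ)^2*((p:ℝ)^t*(q:ℝ)^t) := by
    rw [hA_def, hB_def, mul_pow, mul_pow, hsq2, hN2, mul_pow]; ring
  have harg : 2*(k:ℝ)*(n:ℝ) + c^2 = A^2 + c^2 := by
    rw [hA2]
    push_cast [hn_def]
    ring
  have hueq : u m k n = Real.sqrt (A^2 + c^2) - c := by
    unfold u
    rw [← hc_def, harg]
  have hle1 : A ≤ Real.sqrt (A^2 + c^2) := by
    calc A = Real.sqrt (A^2) := (Real.sqrt_sq hA0.le).symm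
      _ ≤ Real.sqrt (A^2 + c^2) := Real.sqrt_le_sqrt (by linarith [sq_nonneg c])
  have hle2 : Real.sqrt (A^2 + c^2) ≤ A + c^2/(2*A) := by
    have hx : 2*A*(c^2/(2*A)) = c^2 := by field_simp
    have h := Real.sqrt_le_sqrt (show A^2 + c^2 ≤ (A + c^2/(2*A))^2 by
      nlinarith only [hx, sq_nonneg (c^2/(2*A)), hA0])
    rwa [Real.sqrt_sq (by positivity)] at h
  have hAB : 1.414213 * B ≤ A := by
    rw [hA_def]; exact mul_le_mul_of_nonneg_right hr2lo hB0.le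
  have hAB' : A ≤ 1.414214 * B := by
    rw [hA_def]; exact mul_le_mul_of_nonneg_right hr2hi hB0.le
  have hulo : 1.364213 * B ≤ u m k n := by
    rw [hueq]
    linarith [hle1, le_abs_self c, hcB, hAB]
  have hc2A : c^2/(2*A) ≤ 0.001 * B := by
    rw [div_le_iff₀ (by linarith : (0:ℝ) < 2*A)]
    have h1 : c^2 ≤ (B/20)*(B/20) := by
      have h := mul_self_le_mul_self (abs_nonneg c) hcB
      rw [abs_mul_abs_self] at h
      calc c^2 = c * c := pow_two c
        _ ≤ (B/20)*(B/20) := h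
    have h2 := mul_le_mul_of_nonneg_left hAB (show (0:ℝ) ≤ 0.002*B by linarith)
    nlinarith only [h1, h2, hB0]
  have huhi : u m k n ≤ 1.46522 * B := by
    rw [hueq]
    linarith [hle2, hc2A, hcB, neg_abs_le c, hAB']
  have hBkN : B = (k:ℝ) * N := hB_def
  -- the divisors p^a * q^(t-a) satisfy the condition
  have hmem : ∀ a : ℕ, a ≤ t →
      u m k n < ((2*k*(p^a*q^(t-a)) : ℕ):ℝ) ∧ ((2*k*(p^a*q^(t-a)) : ℕ):ℝ) ≤ 2 * u m k n := by
    intro a ha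
    have hdlo : (p:ℝ)^t ≤ (p:ℝ)^a * (q:ℝ)^(t-a) := by
      calc (p:ℝ)^t = (p:ℝ)^a * (p:ℝ)^(t-a) := by rw [← pow_add]; congr 1; omega
        _ ≤ (p:ℝ)^a * (q:ℝ)^(t-a) :=
          mul_le_mul_of_nonneg_left (pow_le_pow_left₀ hP0.le hPQ.le _) (by positivity)
    have hdhi : (p:ℝ)^a * (q:ℝ)^(t-a) ≤ (q:ℝ)^t := by
      calc (p:ℝ)^a * (q:ℝ)^(t-a) ≤ (q:ℝ)^a * (q:ℝ)^(t-a) :=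
            mul_le_mul_of_nonneg_right (pow_le_pow_left₀ hP0.le hPQ.le _) (by positivity)
        _ = (q:ℝ)^t := by rw [← pow_add]; congr 1; omega
    constructor
    · push_cast
      have h1 : 1.46522 * B ≤ 1.46522 * ((k:ℝ) * (1.3576455 * (p:ℝ)^t)) := by
        rw [hBkN]
        have := mul_le_mul_of_nonneg_left hNPt hk0.le
        nlinarith only [this]
      have h2 : (0:ℝ) < (k:ℝ) * (p:ℝ)^t := by positivity
      have h3 : 2*(k:ℝ)*((p:ℝ)^t) ≤ 2*(k:ℝ)*((p:ℝ)^a * (q:ℝ)^(t-a)) := by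
        apply mul_le_mul_of_nonneg_left hdlo (by linarith)
      calc u m k n ≤ 1.46522 * B := huhi
        _ ≤ 1.46522 * ((k:ℝ) * (1.3576455 * (p:ℝ)^t)) := h1
        _ < 2*(k:ℝ)*((p:ℝ)^t) := by nlinarith only [h2]
        _ ≤ 2*(k:ℝ)*((p:ℝ)^a * (q:ℝ)^(t-a)) := h3
    · push_cast
      have h1 : (k:ℝ)*((p:ℝ)^a * (q:ℝ)^(t-a)) ≤ (k:ℝ)*(N*s) := by
        rw [hQt]; exact mul_le_mul_of_nonneg_left hdhi hk0.le
      have h2 : (k:ℝ)*(N*s) ≤ (k:ℝ)*(N*1.3576455) := by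
        apply mul_le_mul_of_nonneg_left _ hk0.le
        exact mul_le_mul_of_nonneg_left hshi' hN0.le
      have h3 : (k:ℝ)*(N*1.3576455) ≤ 1.364213 * B := by
        rw [hBkN]; nlinarith only [hk0, hN0]
      have : (k:ℝ)*((p:ℝ)^a * (q:ℝ)^(t-a)) ≤ u m k n := by
        calc (k:ℝ)*((p:ℝ)^a * (q:ℝ)^(t-a)) ≤ 1.364213 * B := by linarith
          _ ≤ u m k n := hulo
      linarith
  -- main set identity
  have hset : n.divisors.filter
        (fun d => u m k n < ((2*k*d : ℕ) : ℝ) ∧ ((2*k*d : ℕ) : ℝ) ≤ 2 * u m k n)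
      = (Finset.range (t+1)).image (fun a => p^a * q^(t-a)) := by
    ext d
    simp only [Finset.mem_filter, Nat.mem_divisors, Finset.mem_image, Finset.mem_range]
    constructor
    · rintro ⟨⟨hdvd, -⟩, h1, h2⟩
      have hdvd' : d ∣ (k * p^t) * q^t := by rwa [hn_def] at hdvd
      obtain ⟨d1, d2, hd1, hd2, rfl⟩ := exists_dvd_and_dvd_of_dvd_mul hdvd'
      obtain ⟨e, pa, he, hpa, rfl⟩ := exists_dvd_and_dvd_of_dvd_mul hd1
      obtain ⟨a, ha, rfl⟩ := (Nat.dvd_prime_pow hp).1 hpa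
      obtain ⟨b, hb, rfl⟩ := (Nat.dvd_prime_pow hq).1 hd2
      have he1 : 1 ≤ e := Nat.one_le_iff_ne_zero.2 (by rintro rfl; simp at he; omega)
      have hek : e ≤ k := Nat.le_of_dvd (by omega) he
      -- real value bounds for the divisor
      have hcast : ((e * p^a * q^b : ℕ) : ℝ) = (e:ℝ) * (p:ℝ)^a * (q:ℝ)^b := by push_cast; ring
      rw [show ((2*k*(e*p^a*q^b) : ℕ):ℝ) = 2*(k:ℝ)*((e*p^a*q^b : ℕ):ℝ) by push_cast; ring] at h1 h2
      rcases lt_trichotomy (a+b) t with hab | hab | hab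
      · -- a+b < t : contradiction with h1
        exfalso
        have hnat : e * p^a * q^b ≤ k * q^(t-1) := by
          calc e * p^a * q^b ≤ k * q^a * q^b := by
                have : p^a ≤ q^a := Nat.pow_le_pow_left (le_of_lt hpq) a
                exact Nat.mul_le_mul (Nat.mul_le_mul hek this) le_rfl
            _ = k * q^(a+b) := by rw [mul_assoc, pow_add]
            _ ≤ k * q^(t-1) := Nat.mul_le_mul_left _ (Nat.pow_le_pow_right (by omega) (by omega))
        have hreal : ((e * p^a * q^b : ℕ):ℝ) ≤ (k:ℝ) * (q:ℝ)^(t-1) := by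
          exact_mod_cast hnat
        have hq1 : (q:ℝ)^(t-1) * q = N * s := by
          rw [← pow_succ, show t-1+1 = t by omega, hQt]
        have hq2k : 2*(k:ℝ) < q := lt_of_le_of_lt h2k hPQ
        -- 2kd ≤ u
        have key : 2*(k:ℝ)*((e * p^a * q^b : ℕ):ℝ) ≤ u m k n := by
          have e1 : 2*(k:ℝ)*((e * p^a * q^b : ℕ):ℝ) * q ≤ 2*(k:ℝ)^2*(N*s) := by
            calc 2*(k:ℝ)*((e * p^a * q^b : ℕ):ℝ) * q
                ≤ 2*(k:ℝ)*((k:ℝ) * (q:ℝ)^(t-1)) * q := by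
                  have := mul_le_mul_of_nonneg_left hreal (by linarith : (0:ℝ) ≤ 2*(k:ℝ))
                  exact mul_le_mul_of_nonneg_right this hQ0.le
              _ = 2*(k:ℝ)^2*((q:ℝ)^(t-1) * q) := by ring
              _ = 2*(k:ℝ)^2*(N*s) := by rw [hq1]
          have e2 : (N:ℝ)*s ≤ 1.3576455*N :=
            by nlinarith only [hshi', hN0]
          have e3 : 2*(k:ℝ)^2*(N*s) ≤ 2*(k:ℝ)^2*(1.3576455*N) := by
            apply mul_le_mul_of_nonneg_left e2 (by positivity)
          -- so 2kd*q ≤ 2.715291 k^2 N < 1.364213 * k*N * q ≤ u*q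
          have e4 : 2*(k:ℝ)^2*(1.3576455*N) ≤ 1.364213 * ((k:ℝ)*N) * q := by
            nlinarith only [mul_le_mul_of_nonneg_left hq2k.le
                (by positivity : (0:ℝ) ≤ 1.364213*((k:ℝ)*N)),
              mul_pos (mul_pos hk0 hk0) hN0]
          have e5 : 1.364213 * ((k:ℝ)*N) * q ≤ u m k n * q := by
            apply mul_le_mul_of_nonneg_right _ hQ0.le
            rw [← hBkN]; exact hulo
          have := le_trans e1 (le_trans e3 (le_trans e4 e5))
          exact le_of_mul_le_mul_right this hQ0
        linarith
      · -- a+b = t : e must be 1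
        by_cases he' : e = 1
        · subst he'
          refine ⟨a, by omega, ?_⟩
          have hba : t - a = b := by omega
          simp only [hba]
          ring
        · exfalso
          -- e ≥ 3
          have hodd : Odd e := by
            obtain ⟨kk, hkk⟩ := he
            exact (Nat.odd_mul.1 (hkk ▸ hk)).1
          have he3 : 3 ≤ e := by
            obtain ⟨j, hj⟩ := hodd; omega
          -- k*d ≥ 3*k*p^t > u
          have hnat : 3 * p^t ≤ e * p^a * q^b := by
            calc 3 * p^t = 3 * (p^a * p^b) := by rw [← pow_add, show a+b = t from hab]
              _ ≤ e * (p^a * q^b) := by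
                  apply Nat.mul_le_mul he3
                  exact Nat.mul_le_mul_left _ (Nat.pow_le_pow_left (le_of_lt hpq) b)
              _ = e * p^a * q^b := by ring
          have hreal : 3*(p:ℝ)^t ≤ ((e * p^a * q^b : ℕ):ℝ) := by exact_mod_cast hnat
          have key : u m k n < (k:ℝ)*((e * p^a * q^b : ℕ):ℝ) := by
            have e1 : 1.46522 * B ≤ 1.46522 * ((k:ℝ) * (1.3576455 * (p:ℝ)^t)) := by
              rw [hBkN]
              have := mul_le_mul_of_nonneg_left hNPt hk0.le
              nlinarith only [this]
            have e2 : (0:ℝ) < (k:ℝ)*(p:ℝ)^t := by positivity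
            calc u m k n ≤ 1.46522 * B := huhi
              _ ≤ 1.46522 * ((k:ℝ) * (1.3576455 * (p:ℝ)^t)) := e1
              _ < (k:ℝ)*(3*(p:ℝ)^t) := by nlinarith only [e2]
              _ ≤ (k:ℝ)*((e * p^a * q^b : ℕ):ℝ) := mul_le_mul_of_nonneg_left hreal hk0.le
          linarith
      · -- a+b > t : contradiction with h2
        exfalso
        have hnat : p^(t+1) ≤ e * p^a * q^b := by
          calc p^(t+1) ≤ p^(a+b) := Nat.pow_le_pow_right hp0 (by omega)
            _ = p^a * p^b := pow_add p a b
            _ ≤ p^a * q^b := Nat.mul_le_mul_left _ (Nat.pow_le_pow_left (le_of_lt hpq) b)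
            _ ≤ e * (p^a * q^b) := Nat.le_mul_of_pos_left _ he1
            _ = e * p^a * q^b := by ring
        have hreal : (p:ℝ)^(t+1) ≤ ((e * p^a * q^b : ℕ):ℝ) := by exact_mod_cast hnat
        have hpt1 : (p:ℝ)^(t+1) = (p:ℝ) * (p:ℝ)^t := by rw [pow_succ]; ring
        have key : u m k n < (k:ℝ)*((e * p^a * q^b : ℕ):ℝ) := by
          have e1 : 1.46522 * B ≤ 1.46522 * ((k:ℝ) * (1.3576455 * (p:ℝ)^t)) := by
            rw [hBkN]
            have := mul_le_mul_of_nonneg_left hNPt hk0.le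
            nlinarith only [this]
          have e2 : (0:ℝ) < (k:ℝ)*(p:ℝ)^t := by positivity
          calc u m k n ≤ 1.46522 * B := huhi
            _ ≤ 1.46522 * ((k:ℝ) * (1.3576455 * (p:ℝ)^t)) := e1
            _ < (k:ℝ)*(5*(p:ℝ)^t) := by nlinarith only [e2]
            _ ≤ (k:ℝ)*((p:ℝ)*(p:ℝ)^t) := by
                apply mul_le_mul_of_nonneg_left _ hk0.le
                exact mul_le_mul_of_nonneg_right hP5 hPtpos.le
            _ = (k:ℝ)*((p:ℝ)^(t+1)) := by rw [hpt1]
            _ ≤ (k:ℝ)*((e * p^a * q^b : ℕ):ℝ) := mul_le_mul_of_nonneg_left hreal hk0.le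
        linarith
    · rintro ⟨a, ha, rfl⟩
      have hat : a ≤ t := by omega
      refine ⟨⟨?_, hn0⟩, hmem a hat⟩
      rw [hn_def]
      have h1 : p^a * q^(t-a) ∣ p^t * q^t :=
        mul_dvd_mul (pow_dvd_pow p hat) (pow_dvd_pow q (by omega))
      calc p^a * q^(t-a) ∣ p^t * q^t := h1
        _ ∣ k * p^t * q^t := by
            rw [mul_assoc]
            exact Dvd.intro_left k rfl
  -- injectivity and count
  have hinj : Set.InjOn (fun a => p^a * q^(t-a)) (Finset.range (t+1)) := by
    intro a ha b hb hab
    have hab' : p^a * q^(t-a) = p^b * q^(t-b) := hab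
    have key : ∀ x : ℕ, (p^x * q^(t-x)).factorization p = x := by
      intro x
      rw [Nat.factorization_mul (pow_ne_zero _ hp0.ne') (pow_ne_zero _ hq0.ne'),
        hp.factorization_pow, hq.factorization_pow]
      simp [Finsupp.single_apply, hpq.ne']
    have hka := key a
    rw [hab', key b] at hka
    exact hka.symm
  unfold hd
  rw [hset, Finset.card_image_of_injOn hinj, Finset.card_range]
  omega
end

section
/- For any integer m ≥ 0 and any odd integer k ≥ 1, the set {n ∈ ℕ : h_{m,k}(n) = 0} is infinite; consequently h_{m,k}(n) = 0 for infinitely many n. -/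
open scoped Classical

lemma hd_zero_of_large_prime (m k p : ℕ) (hk1 : 1 ≤ k) (hp : p.Prime)
    (hlarge : 2*m + 2*k + 2 ≤ p) : hd m k p = 0 := by
  unfold hd
  rw [Finset.card_eq_zero, Finset.filter_eq_empty_iff]
  intro d hd
  rw [Nat.mem_divisors] at hd
  set c : ℝ := (m : ℝ) - k/2 with hc
  have harg : (0:ℝ) ≤ 2*k*p + c^2 := by positivity
  set S : ℝ := Real.sqrt (2*k*p + c^2) with hS
  have hS2 : S^2 = 2*k*p + c^2 := Real.sq_sqrt harg
  have hS0 : (0:ℝ) ≤ S := Real.sqrt_nonneg _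
  have hu : u m k p = S - c := rfl
  have hk' : (1:ℝ) ≤ k := by exact_mod_cast hk1
  have hp' : (2*m + 2*k + 2 : ℝ) ≤ p := by exact_mod_cast hlarge
  rcases (Nat.Prime.eq_one_or_self_of_dvd hp d hd.1) with h1 | h2
  · -- d = 1 : show ¬ (u < 2k)
    subst h1
    rintro ⟨hlt, -⟩
    rw [hu] at hlt
    push_cast at hlt
    -- hlt : S - c < 2*k*1, but S ≥ 2k + c
    have hm : (0:ℝ) ≤ (m:ℝ) := Nat.cast_nonneg m
    have ht0 : (0:ℝ) ≤ 2*k + c := by simp only [hc]; nlinarith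
    have hpos1 : (0:ℝ) < 2*k*((p:ℝ) - 2*k - 2*c) := by
      have : (p:ℝ) - 2*k - 2*c = (p:ℝ) - k - 2*m := by simp only [hc]; ring
      rw [this]
      have h1 : (0:ℝ) < 2*k := by linarith
      have h2 : (0:ℝ) < (p:ℝ) - k - 2*m := by linarith
      positivity
    have : 2*k + c ≤ S := by nlinarith [mul_self_nonneg (S - (2*k + c))]
    nlinarith
  · -- d = p : show ¬ (2kp ≤ 2u)
    subst h2
    rintro ⟨-, hle⟩
    rw [hu] at hle
    push_cast at hle
    -- hle : 2*k*d ≤ 2*(S - c), but S < kd + c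
    have hm : (0:ℝ) ≤ (m:ℝ) := Nat.cast_nonneg m
    have hd0 : (0:ℝ) ≤ (d:ℝ) := Nat.cast_nonneg d
    have hkd : (d:ℝ) ≤ k*d := le_mul_of_one_le_left hd0 hk'
    have ht : (2*m + 2*k + 2 : ℝ) ≤ (k:ℝ)*d := le_trans hp' hkd
    have ht0 : (0:ℝ) ≤ k*d + c := by simp only [hc]; linarith
    have hpos : (0:ℝ) < (k:ℝ)*d * ((k:ℝ)*d + 2*m - k - 2) := by
      have h1 : (0:ℝ) < (k:ℝ)*d := by linarith
      have h2 : (0:ℝ) < (k:ℝ)*d + 2*m - k - 2 := by linarith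
      positivity
    have : S < k*d + c := by
      by_contra hcon
      push_neg at hcon
      have hsq : ((k:ℝ)*d + c)^2 ≤ S^2 := by nlinarith
      simp only [hc] at hsq hS2
      nlinarith [hpos, hsq, hS2]
    nlinarith

theorem stmt9 (m k : ℕ) (hk : Odd k) (hk1 : 1 ≤ k) :
    {n : ℕ | hd m k n = 0}.Infinite := by
  have key : ∀ a : ℕ, ∃ b ∈ {n : ℕ | hd m k n = 0}, a < b := by
    intro a
    obtain ⟨p, hp1, hp2⟩ := Nat.exists_infinite_primes (max (a+1) (2*m + 2*k + 2))
    refine ⟨p, ?_, ?_⟩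
    · exact hd_zero_of_large_prime m k p hk1 hp2 (le_trans (le_max_right _ _) hp1)
    · exact lt_of_lt_of_le (Nat.lt_succ_self a) (le_trans (le_max_left _ _) hp1)
  exact Set.infinite_of_forall_exists_gt key
end

section
/- For any integer m ≥ 0, any odd integer k ≥ 1, and any integer ℓ ≥ 0, there exist infinitely many n ∈ ℕ with h_{m,k}(n) = ℓ. In particular, limsup_{n→∞} h_{m,k}(n) = +∞. -/
open scoped Classical

namespace Stmt10Aux

/-- the "first condition": `2·T(d) ≤ 2n` where `T(d) = k d(d-1)/2 + m d`. -/
def C (m k n d : ℕ) : Prop := k*d*d + 2*m*d ≤ 2*n + k*d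

lemma C_mono {m k n d d' : ℕ} (hd1 : 1 ≤ d) (h : d ≤ d') (h' : C m k n d') : C m k n d := by
  unfold C at h' ⊢
  zify at h' ⊢
  have h1 : (d:ℤ) ≤ d' := by exact_mod_cast h
  have h2 : (1:ℤ) ≤ d := by exact_mod_cast hd1
  have hk : (0:ℤ) ≤ k := by positivity
  have hm : (0:ℤ) ≤ m := by positivity
  nlinarith [mul_nonneg (sub_nonneg.2 h1) (by linarith : (0:ℤ) ≤ (d':ℤ) + d - 1)]

lemma mem_iff {m k n d : ℕ} (hk1 : 1 ≤ k) (hd1 : 1 ≤ d) :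
    (u m k n < ((2*k*d : ℕ) : ℝ) ∧ ((2*k*d : ℕ) : ℝ) ≤ 2 * u m k n)
      ↔ (C m k n d ∧ ¬ C m k n (2*d)) := by
  have hk' : (1:ℝ) ≤ k := by exact_mod_cast hk1
  have hd' : (1:ℝ) ≤ d := by exact_mod_cast hd1
  have hkpos : (0:ℝ) < k := by linarith
  have hm : (0:ℝ) ≤ m := by positivity
  have hkd : (k:ℝ) ≤ k*d := by nlinarith
  have iff1 : u m k n < ((2*k*d : ℕ) : ℝ) ↔ ¬ C m k n (2*d) := by
    have e1 : u m k n < ((2*k*d : ℕ) : ℝ) ↔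
        Real.sqrt (2*k*n + ((m : ℝ) - k/2)^2) < 2*k*d + ((m:ℝ) - k/2) := by
      unfold u; push_cast; constructor <;> intro h <;> linarith
    rw [e1, Real.sqrt_lt' (by nlinarith : (0:ℝ) < 2*k*d + ((m:ℝ) - k/2))]
    have hiff : (2*(k:ℝ)*n + ((m:ℝ)-k/2)^2 < (2*k*d + ((m:ℝ)-k/2))^2) ↔
        ((k:ℝ) * (2*n + k*(2*d)) < (k:ℝ) * (k*(2*d)*(2*d) + 2*m*(2*d))) := by
      constructor <;> intro h <;> nlinarith [h]
    rw [hiff, mul_lt_mul_iff_right₀ hkpos]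
    unfold C
    rw [not_le]
    constructor
    · intro h; exact_mod_cast h
    · intro h; exact_mod_cast h
  have iff2 : ((2*k*d : ℕ) : ℝ) ≤ 2 * u m k n ↔ C m k n d := by
    have e2 : ((2*k*d : ℕ) : ℝ) ≤ 2 * u m k n ↔
        (k*d + ((m:ℝ) - k/2)) ≤ Real.sqrt (2*k*n + ((m : ℝ) - k/2)^2) := by
      unfold u; push_cast; constructor <;> intro h <;> linarith
    rw [e2, Real.le_sqrt' (by nlinarith : (0:ℝ) < k*d + ((m:ℝ) - k/2))]
    have hiff : ((k*(d:ℝ) + ((m:ℝ)-k/2))^2 ≤ 2*k*n + ((m:ℝ)-k/2)^2) ↔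
        ((k:ℝ) * (k*d*d + 2*m*d) ≤ (k:ℝ) * (2*n + k*d)) := by
      constructor <;> intro h <;> nlinarith [h]
    rw [hiff, mul_le_mul_iff_right₀ hkpos]
    unfold C
    constructor
    · intro h; exact_mod_cast h
    · intro h; exact_mod_cast h
  rw [iff1, iff2]; tauto

lemma hd_eq (m k : ℕ) (hk1 : 1 ≤ k) (n : ℕ) :
    hd m k n = (n.divisors.filter (fun d => C m k n d ∧ ¬ C m k n (2*d))).card := by
  unfold hd
  congr 1
  apply Finset.filter_congr
  intro d hdmem
  exact mem_iff hk1 (Nat.pos_of_mem_divisors hdmem)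


lemma count (m k t s : ℕ) (hk1 : 1 ≤ k)
    (hs1 : k * 3^t + 2*m ≤ 2^(s+1)) (hs2 : 3^t + 1 < 2^(s+1)) :
    ((2^s * 3^t : ℕ).divisors.filter
      (fun d => C m k (2^s*3^t) d ∧ ¬ C m k (2^s*3^t) (2*d))).card = t + 1 := by
  set n := 2^s * 3^t with hn
  have hn0 : n ≠ 0 := by positivity
  have h2n : 2*n = 2^(s+1) * 3^t := by rw [hn]; ring
  -- base case of findGreatest
  have hC0 : ∀ b, b ≤ t → C m k n (2^0 * 3^b) := by
    intro b hb
    have h3 : (3:ℕ)^b ≤ 3^t := Nat.pow_le_pow_right (by norm_num) hb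
    have key : (k*3^b + 2*m) * 3^b ≤ 2^(s+1) * 3^t :=
      Nat.mul_le_mul (le_trans (by nlinarith) hs1) h3
    unfold C
    rw [pow_zero, one_mul, h2n]
    nlinarith [key, Nat.zero_le (k*3^b)]
  -- beyond s the condition fails
  have hCtop : ∀ b a, s < a → ¬ C m k n (2^a * 3^b) := by
    intro b a hsa hCc
    unfold C at hCc
    set X := 2^a * 3^b with hX
    have h1 : 2^(s+1) ≤ X := by
      calc 2^(s+1) ≤ 2^a := Nat.pow_le_pow_right (by norm_num) hsa
        _ ≤ 2^a * 3^b := Nat.le_mul_of_pos_right _ (pow_pos (by norm_num) b)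
    have h2 : 3^t + 2 ≤ 2^(s+1) := by omega
    have h3 : 1 ≤ X := Nat.one_le_iff_ne_zero.mpr (by rw [hX]; positivity)
    have hkX : X ≤ k*X := Nat.le_mul_of_pos_left _ (by omega)
    have hq : k*X*(3^t + 2) ≤ k*X*X := Nat.mul_le_mul_left _ (le_trans h2 h1)
    have hq2 : 2^(s+1)*3^t ≤ (k*X)*3^t := Nat.mul_le_mul_right _ (le_trans h1 hkX)
    rw [h2n] at hCc
    nlinarith [hCc, hq, hq2, hkX]
  -- the findGreatest function
  set A : ℕ → ℕ := fun b => Nat.findGreatest (fun a => C m k n (2^a * 3^b)) s with hA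
  have hA_le : ∀ b, A b ≤ s := fun b => Nat.findGreatest_le s
  have hA_spec : ∀ b, b ≤ t → C m k n (2^(A b) * 3^b) := by
    intro b hb
    exact Nat.findGreatest_spec (P := fun a => C m k n (2^a * 3^b)) (Nat.zero_le s) (hC0 b hb)
  have hA_succ : ∀ b, b ≤ t → ¬ C m k n (2^(A b + 1) * 3^b) := by
    intro b hb
    rcases lt_or_eq_of_le (hA_le b) with h | h
    · exact Nat.findGreatest_is_greatest (P := fun a => C m k n (2^a * 3^b)) (Nat.lt_succ_self _) h
    · rw [h]; exact hCtop b (s+1) (Nat.lt_succ_self s)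
  -- set equality
  have hset : (n.divisors.filter (fun d => C m k n d ∧ ¬ C m k n (2*d)))
      = (Finset.range (t+1)).image (fun b => 2^(A b) * 3^b) := by
    apply Finset.Subset.antisymm
    · intro d hdm
      rw [Finset.mem_filter] at hdm
      obtain ⟨hdv, hCd, hnCd⟩ := hdm
      have hdvd : d ∣ n := (Nat.mem_divisors.mp hdv).1
      obtain ⟨x, y, hx2, hy3, hxy⟩ := Nat.dvd_mul.mp (hn ▸ hdvd)
      obtain ⟨a, ha, rfl⟩ := (Nat.dvd_prime_pow Nat.prime_two).mp hx2
      obtain ⟨b, hb, rfl⟩ := (Nat.dvd_prime_pow Nat.prime_three).mp hy3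
      subst hxy
      have hCd' : C m k n (2^a * 3^b) := hCd
      have hle1 : a ≤ A b := Nat.le_findGreatest (P := fun a => C m k n (2^a * 3^b)) ha hCd'
      have hle2 : A b ≤ a := by
        by_contra hcon
        push_neg at hcon
        have h2d : 2*(2^a*3^b) ≤ 2^(A b) * 3^b := by
          have : (2:ℕ)^(a+1) ≤ 2^(A b) := Nat.pow_le_pow_right (by norm_num) hcon
          calc 2*(2^a*3^b) = 2^(a+1)*3^b := by ring
            _ ≤ 2^(A b) * 3^b := Nat.mul_le_mul_right _ this
        exact hnCd (C_mono (Nat.one_le_iff_ne_zero.mpr (by positivity)) h2d (hA_spec b hb))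
      have hab : A b = a := le_antisymm hle2 hle1
      rw [Finset.mem_image]
      exact ⟨b, Finset.mem_range.mpr (by omega), by rw [hab]⟩
    · intro d hdm
      rw [Finset.mem_image] at hdm
      obtain ⟨b, hbm, rfl⟩ := hdm
      have hb : b ≤ t := by have := Finset.mem_range.mp hbm; omega
      rw [Finset.mem_filter, Nat.mem_divisors]
      refine ⟨⟨?_, hn0⟩, hA_spec b hb, ?_⟩
      · exact hn ▸ mul_dvd_mul (pow_dvd_pow 2 (hA_le b)) (pow_dvd_pow 3 hb)
      · have he : 2*(2^(A b)*3^b) = 2^(A b + 1)*3^b := by ring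
        rw [he]; exact hA_succ b hb
  rw [hset, Finset.card_image_of_injOn, Finset.card_range]
  intro b hbm b' hbm' heq
  simp only [Set.mem_setOf_eq] at heq
  have cop : ∀ x y : ℕ, Nat.Coprime (3^x) (2^y) :=
    fun x y => Nat.Coprime.pow x y (by decide)
  have d1 : (3:ℕ)^b ∣ 3^b' := by
    have : (3:ℕ)^b ∣ 2^(A b') * 3^(b') := by rw [← heq]; exact dvd_mul_left _ _
    exact (Nat.Coprime.dvd_of_dvd_mul_left (cop b (A b')) this)
  have d2 : (3:ℕ)^b' ∣ 3^b := by
    have : (3:ℕ)^b' ∣ 2^(A b) * 3^b := by rw [heq]; exact dvd_mul_left _ _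
    exact (Nat.Coprime.dvd_of_dvd_mul_left (cop b' (A b)) this)
  have e1 := (Nat.pow_dvd_pow_iff_le_right (by norm_num : (1:ℕ) < 3)).mp d1
  have e2 := (Nat.pow_dvd_pow_iff_le_right (by norm_num : (1:ℕ) < 3)).mp d2
  omega


lemma hd_prime_zero (m k p : ℕ) (hk1 : 1 ≤ k) (hp : p.Prime) (hbig : k + 2*m + 5 ≤ p) :
    hd m k p = 0 := by
  rw [hd_eq m k hk1 p, Finset.card_eq_zero, Finset.filter_eq_empty_iff]
  intro d hdm
  rw [Nat.Prime.divisors hp, Finset.mem_insert, Finset.mem_singleton] at hdm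
  rcases hdm with rfl | rfl
  · rintro ⟨-, hnC⟩
    apply hnC
    unfold C
    omega
  · rintro ⟨hC, -⟩
    unfold C at hC
    have h5 : 5 ≤ d := by omega
    have h1 : (k*d)*5 ≤ (k*d)*d := Nat.mul_le_mul_left _ h5
    have h2 : d ≤ k*d := Nat.le_mul_of_pos_left _ (by omega)
    nlinarith [hC, h1, h2]

lemma hd_pow (m k t s : ℕ) (hk1 : 1 ≤ k)
    (hs1 : k * 3^t + 2*m ≤ 2^(s+1)) (hs2 : 3^t + 1 < 2^(s+1)) :
    hd m k (2^s * 3^t) = t + 1 := by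
  rw [hd_eq m k hk1 _]
  exact count m k t s hk1 hs1 hs2

end Stmt10Aux

theorem stmt10 (m k : ℕ) (hk : Odd k) (hk1 : 1 ≤ k) :
    (∀ ℓ : ℕ, {n : ℕ | hd m k n = ℓ}.Infinite) ∧
      Filter.limsup (fun n : ℕ => ((hd m k n : ℕ) : ℕ∞)) Filter.atTop = ⊤ := by
  have h1 : ∀ ℓ : ℕ, {n : ℕ | hd m k n = ℓ}.Infinite := by
    intro ℓ
    rw [← Nat.frequently_atTop_iff_infinite, Filter.frequently_atTop]
    intro a
    cases ℓ with
    | zero =>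
      obtain ⟨p, hpge, hp⟩ := Nat.exists_infinite_primes (a + k + 2*m + 5)
      exact ⟨p, by omega, Stmt10Aux.hd_prime_zero m k p hk1 hp (by omega)⟩
    | succ t =>
      set P := 3^t with hP
      have hP1 : 1 ≤ P := Nat.one_le_iff_ne_zero.mpr (by rw [hP]; positivity)
      set s := a + k*P + 2*m + P + 2 with hs
      have hpow : s < 2^s := Nat.lt_two_pow_self (n := s)
      have hpow2 : 2^s ≤ 2^(s+1) := Nat.pow_le_pow_right (by norm_num) (Nat.le_succ s)
      have hmul : 2^s ≤ 2^s * P := Nat.le_mul_of_pos_right _ hP1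
      have ha1 : k*P + 2*m ≤ s := by omega
      have ha2 : P + 1 ≤ s := by omega
      have ha3 : a ≤ s := by omega
      refine ⟨2^s * P, le_trans (le_trans ha3 (le_of_lt hpow)) hmul, ?_⟩
      exact Stmt10Aux.hd_pow m k t s hk1
        (le_trans ha1 (le_trans (le_of_lt hpow) hpow2))
        (lt_of_le_of_lt ha2 (lt_of_lt_of_le hpow hpow2))
  refine ⟨h1, ?_⟩
  have hle : ∀ ℓ : ℕ, (ℓ : ℕ∞) ≤
      Filter.limsup (fun n : ℕ => ((hd m k n : ℕ) : ℕ∞)) Filter.atTop := by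
    intro ℓ
    apply Filter.le_limsup_of_frequently_le'
    have hfr := Nat.frequently_atTop_iff_infinite.mpr (h1 ℓ)
    exact hfr.mono (fun n hn => by
      have h : hd m k n = ℓ := hn
      simp [h])
  set x := Filter.limsup (fun n : ℕ => ((hd m k n : ℕ) : ℕ∞)) Filter.atTop with hx
  clear_value x
  by_contra hne
  lift x to ℕ using hne
  have hcon := hle (x+1)
  have : x + 1 ≤ x := by exact_mod_cast hcon
  omega
end

section
/- limsup_{n→∞} h(n) = +∞, where h(n) is the n-th coefficient of the half Lerch sum ∑_{j≥1} (-1)^{j+1} q^{j(j+1)/2}/(1 - q^j). Equivalently, for every M there exists n with h(n) > M (Xiong's conjecture). -/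
open scoped Classical

namespace X

def T (n : ℕ) : ℕ := n*(n-1)/2 + n

lemma two_T (n : ℕ) : 2 * T n = n*n + n := by
  unfold T
  have h2 : 2 ∣ n*(n-1) := (Nat.even_mul_pred_self n).two_dvd
  obtain ⟨c, hc⟩ := h2
  rcases n with _ | m
  · simp
  · have : (m+1) - 1 = m := rfl
    rw [this] at hc ⊢
    have : (m+1)*m/2 = c := by omega
    rw [this]
    nlinarith [hc]

lemma dvd_T_odd {n : ℕ} (hn : Odd n) : n ∣ T n := by
  obtain ⟨k, hk⟩ := hn
  refine ⟨k + 1, ?_⟩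
  have h := two_T n
  have h2 : 2*(n*(k+1)) = n*n + n := by subst hk; ring
  omega

lemma T_two_mul (f : ℕ) : T (2*f) = f*(2*f+1) := by
  have h := two_T (2*f)
  nlinarith [h]

end X

namespace X

lemma odd_cond {N n : ℕ} (hn : Odd n) :
    (T n ≤ N ∧ n ∣ N - T n) ↔ (T n ≤ N ∧ n ∣ N) := by
  have hd := dvd_T_odd hn
  constructor
  · rintro ⟨h1, h2⟩
    exact ⟨h1, by have := Nat.dvd_add h2 hd; rwa [Nat.sub_add_cancel h1] at this⟩
  · rintro ⟨h1, h2⟩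
    exact ⟨h1, Nat.dvd_sub h2 hd⟩

lemma even_cond {N f : ℕ} (hN : Odd N) (hf : 1 ≤ f) :
    (T (2*f) ≤ N ∧ (2*f) ∣ (N - T (2*f))) ↔ (f*(2*f+1) ≤ N ∧ f ∣ N) := by
  rw [T_two_mul]
  constructor
  · rintro ⟨h1, c, hc⟩
    refine ⟨h1, 2*f+1 + 2*c, ?_⟩
    have hN' : N = f*(2*f+1) + 2*f*c := by omega
    rw [hN']; ring
  · rintro ⟨h1, u, hu⟩
    refine ⟨h1, ?_⟩
    have hfu : 2*f+1 ≤ u := by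
      by_contra hco
      push_neg at hco
      have : f*u ≤ f*(2*f) := Nat.mul_le_mul_left f (by omega)
      nlinarith [hu, h1]
    have hou : Odd u := by
      rcases Nat.even_or_odd u with he | ho
      · exfalso
        obtain ⟨v, hv⟩ := he
        rcases hN with ⟨w, hw⟩
        have : N = 2*(f*v) := by rw [hu, hv]; ring
        omega
      · exact ho
    obtain ⟨v, hv⟩ := hou
    obtain ⟨w, hw⟩ : ∃ w, v = f + w := ⟨v - f, by omega⟩
    refine ⟨w, ?_⟩
    have hNeq : N = f*(2*f+1) + 2*f*w := by
      rw [hu, hv, hw]; ring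
    omega

end X

namespace X

lemma hcoef_eq_sub (N : ℕ) :
    hcoef 1 1 N =
      (((Finset.Icc 1 (2*N+2)).filter (fun n => Odd n ∧ T n ≤ N ∧ n ∣ (N - T n))).card : ℤ)
      - (((Finset.Icc 1 (2*N+2)).filter (fun n => ¬ Odd n ∧ (T n ≤ N ∧ n ∣ (N - T n)))).card : ℤ) := by
  classical
  unfold hcoef
  rw [← Finset.sum_filter_add_sum_filter_not (Finset.Icc 1 (2*N+2)) (fun n => Odd n)]
  have h1 : ∀ n ∈ (Finset.Icc 1 (2*N+2)).filter (fun n => Odd n),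
      (-1:ℤ)^(n-1) * (if 1*(n*(n-1)/2) + 1*n ≤ N ∧ n ∣ (N - (1*(n*(n-1)/2) + 1*n)) then 1 else 0)
      = (if T n ≤ N ∧ n ∣ (N - T n) then (1:ℤ) else 0) := by
    intro n hn
    simp only [Finset.mem_filter] at hn
    have he : Even (n-1) := by obtain ⟨k, hk⟩ := hn.2; exact ⟨k, by omega⟩
    rw [he.neg_one_pow, one_mul]
    simp [T]
    congr
  have h2 : ∀ n ∈ (Finset.Icc 1 (2*N+2)).filter (fun n => ¬ Odd n),
      (-1:ℤ)^(n-1) * (if 1*(n*(n-1)/2) + 1*n ≤ N ∧ n ∣ (N - (1*(n*(n-1)/2) + 1*n)) then 1 else 0)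
      = -(if T n ≤ N ∧ n ∣ (N - T n) then (1:ℤ) else 0) := by
    intro n hn
    simp only [Finset.mem_filter, Finset.mem_Icc, Nat.not_odd_iff_even] at hn
    have ho : Odd (n-1) := by
      obtain ⟨k, hk⟩ := hn.2
      exact ⟨k - 1, by omega⟩
    rw [ho.neg_one_pow, neg_one_mul, neg_inj]
    simp [T]
    congr
  rw [Finset.sum_congr rfl h1, Finset.sum_congr rfl h2]
  rw [Finset.sum_neg_distrib, Finset.sum_boole, Finset.sum_boole,
    Finset.filter_filter, Finset.filter_filter]
  push_cast
  ring

end X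

namespace X

lemma card_odd {N : ℕ} (hN : Odd N) (hpos : 0 < N) :
    ((Finset.Icc 1 (2*N+2)).filter (fun n => Odd n ∧ T n ≤ N ∧ n ∣ (N - T n))).card
      = (N.divisors.filter (fun d => T d ≤ N)).card := by
  congr 1
  ext n
  simp only [Finset.mem_filter, Finset.mem_Icc, Nat.mem_divisors]
  constructor
  · rintro ⟨⟨hn1, hn2⟩, ho, hT, hdvd⟩
    exact ⟨⟨((odd_cond ho).mp ⟨hT, hdvd⟩).2, hpos.ne'⟩, hT⟩
  · rintro ⟨⟨hdvd, _⟩, hT⟩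
    have hn1 : 1 ≤ n := Nat.pos_of_dvd_of_pos hdvd hpos
    have hn2 : n ≤ N := Nat.le_of_dvd hpos hdvd
    have ho : Odd n := by
      rw [Nat.odd_iff] at hN ⊢
      rcases Nat.even_or_odd n with he | ho
      · exfalso
        obtain ⟨c, hc⟩ := hdvd
        obtain ⟨k, hk⟩ := he
        have : N = 2*(k*c) := by rw [hc, hk]; ring
        omega
      · exact Nat.odd_iff.mp ho
    exact ⟨⟨hn1, by omega⟩, ho, hT, ((odd_cond ho).mpr ⟨hT, hdvd⟩).2⟩

lemma card_even {N : ℕ} (hN : Odd N) (hpos : 0 < N) :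
    ((Finset.Icc 1 (2*N+2)).filter (fun n => ¬ Odd n ∧ (T n ≤ N ∧ n ∣ (N - T n)))).card
      = (N.divisors.filter (fun f => f*(2*f+1) ≤ N)).card := by
  have himg : (Finset.Icc 1 (2*N+2)).filter (fun n => ¬ Odd n ∧ (T n ≤ N ∧ n ∣ (N - T n)))
      = (N.divisors.filter (fun f => f*(2*f+1) ≤ N)).image (fun f => 2*f) := by
    ext n
    simp only [Finset.mem_filter, Finset.mem_Icc, Nat.mem_divisors, Finset.mem_image,
      Nat.not_odd_iff_even]
    constructor
    · rintro ⟨⟨hn1, hn2⟩, he, hc⟩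
      obtain ⟨f, hf⟩ := he
      have hf2 : n = 2*f := by omega
      subst hf2
      have hf1 : 1 ≤ f := by omega
      have := (even_cond hN hf1).mp hc
      exact ⟨f, ⟨⟨this.2, hpos.ne'⟩, this.1⟩, rfl⟩
    · rintro ⟨f, ⟨⟨hdvd, _⟩, hle⟩, rfl⟩
      have hf1 : 1 ≤ f := Nat.pos_of_dvd_of_pos hdvd hpos
      have hfN : f ≤ N := Nat.le_of_dvd hpos hdvd
      exact ⟨⟨by omega, by omega⟩, ⟨f, by ring⟩, (even_cond hN hf1).mpr ⟨hle, hdvd⟩⟩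
  rw [himg, Finset.card_image_of_injective _ (fun a b h => by omega)]

lemma hcoef_formula {N : ℕ} (hN : Odd N) (hpos : 0 < N) :
    hcoef 1 1 N
      = ((N.divisors.filter (fun d => T d ≤ N ∧ ¬ d*(2*d+1) ≤ N)).card : ℤ) := by
  classical
  rw [hcoef_eq_sub, card_odd hN hpos, card_even hN hpos]
  have hsub : N.divisors.filter (fun f => f*(2*f+1) ≤ N)
      = (N.divisors.filter (fun d => T d ≤ N)).filter (fun f => f*(2*f+1) ≤ N) := by
    rw [Finset.filter_filter]
    apply Finset.filter_congr
    intro d _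
    have h2 := two_T d
    constructor
    · intro h; exact ⟨by nlinarith, h⟩
    · exact fun h => h.2
  have hkey := Finset.card_filter_add_card_filter_not
    (s := N.divisors.filter (fun d => T d ≤ N)) (p := fun f => f*(2*f+1) ≤ N)
  have hC : N.divisors.filter (fun d => T d ≤ N ∧ ¬ d*(2*d+1) ≤ N)
      = (N.divisors.filter (fun d => T d ≤ N)).filter (fun f => ¬ f*(2*f+1) ≤ N) := by
    rw [Finset.filter_filter]
  rw [hC, hsub]
  omega

end X

namespace X

lemma key (M : ℕ) (hM : 1 ≤ M) : ∃ N : ℕ, M ≤ N ∧ (M : ℤ) ≤ hcoef 1 1 N := by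
  classical
  set Λ : ℕ := ∏ j ∈ Finset.range M, (2*M+1+2*j) with hΛdef
  have hΛodd : Odd Λ := by
    refine Finset.prod_induction _ Odd (fun a b ha hb => ha.mul hb) odd_one ?_
    intro j _
    exact ⟨M+j, by ring⟩
  have hΛpos : 0 < Λ := by
    refine Finset.prod_pos ?_
    intro j _; omega
  have hΛ1 : 1 ≤ Λ := hΛpos
  set N : ℕ := (8*M*M+1) * (Λ*Λ) with hNdef
  have hNodd : Odd N := by
    refine Odd.mul ?_ (hΛodd.mul hΛodd)
    exact ⟨4*M*M, by ring⟩
  have hNpos : 0 < N := by positivity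
  have hMN : M ≤ N := by
    have h : 1 ≤ Λ*Λ := Nat.one_le_iff_ne_zero.mpr (by positivity)
    calc M ≤ (8*M*M+1) * 1 := by nlinarith
      _ ≤ (8*M*M+1) * (Λ*Λ) := Nat.mul_le_mul_left _ h
      _ = N := by rw [hNdef]
  refine ⟨N, hMN, ?_⟩
  rw [hcoef_formula hNodd hNpos]
  set S : Finset ℕ := (Finset.range M).image (fun j => Λ*(2*M+1+2*j)) with hS
  have hcardS : S.card = M := by
    rw [hS, Finset.card_image_of_injective, Finset.card_range]
    intro x y hxy
    have := Nat.eq_of_mul_eq_mul_left hΛpos hxy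
    omega
  have hsub : S ⊆ N.divisors.filter (fun d => T d ≤ N ∧ ¬ d*(2*d+1) ≤ N) := by
    intro d hd
    rw [hS, Finset.mem_image] at hd
    obtain ⟨j, hj, rfl⟩ := hd
    rw [Finset.mem_range] at hj
    set a : ℕ := 2*M+1+2*j with ha
    have haub : a + 1 ≤ 4*M := by omega
    have halb : 2*M+1 ≤ a := by omega
    have hadvd : a ∣ Λ := Finset.dvd_prod_of_mem _ (Finset.mem_range.mpr hj)
    rw [Finset.mem_filter, Nat.mem_divisors]
    have hdvdN : Λ*a ∣ N := by
      have h1 : Λ*a ∣ Λ*Λ := mul_dvd_mul_left Λ hadvd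
      exact h1.trans (dvd_mul_left _ _)
    refine ⟨⟨hdvdN, hNpos.ne'⟩, ?_, ?_⟩
    · -- T (Λ*a) ≤ N
      have h2T := two_T (Λ*a)
      have key1 : a*a + a ≤ 16*M*M + 2 := by nlinarith
      have : 2*T (Λ*a) ≤ 2*N := by
        rw [h2T]
        calc Λ*a*(Λ*a) + Λ*a ≤ Λ*Λ*(a*a) + Λ*Λ*a := by
              have e1 : Λ*a*(Λ*a) = Λ*Λ*(a*a) := by ring
              have e2 : Λ*a ≤ Λ*Λ*a := by
                calc Λ*a = 1*(Λ*a) := by ring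
                  _ ≤ Λ*(Λ*a) := Nat.mul_le_mul_right _ hΛ1
                  _ = Λ*Λ*a := by ring
              linarith
          _ = Λ*Λ*(a*a + a) := by ring
          _ ≤ Λ*Λ*(16*M*M+2) := Nat.mul_le_mul_left _ key1
          _ = 2*N := by rw [hNdef]; ring
      omega
    · -- ¬ Λ*a*(2*(Λ*a)+1) ≤ N
      intro hcon
      have h1 : Λ*Λ*(8*M*M+2) ≤ Λ*Λ*(2*(a*a)) := by
        refine Nat.mul_le_mul_left _ ?_
        nlinarith
      have h2 : Λ*Λ*(2*(a*a)) ≤ Λ*a*(2*(Λ*a)+1) := by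
        have e1 : Λ*a*(2*(Λ*a)+1) = Λ*Λ*(2*(a*a)) + Λ*a := by ring
        linarith [Nat.zero_le (Λ*a)]
      have h3 : (0:ℕ) < Λ*Λ := by positivity
      have h4 : N < Λ*Λ*(8*M*M+2) := by
        rw [hNdef]
        nlinarith
      omega
  have := Finset.card_le_card hsub
  rw [hcardS] at this
  exact_mod_cast this

end X

theorem stmt11 :
    Filter.limsup (fun n : ℕ => (((hcoef 1 1 n : ℤ) : ℝ) : EReal)) Filter.atTop = ⊤ ∧
      ∀ M : ℤ, ∃ n : ℕ, M < hcoef 1 1 n := by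
  have key' : ∀ M : ℕ, ∃ N : ℕ, M ≤ N ∧ (M:ℤ) ≤ hcoef 1 1 N := by
    intro M
    rcases Nat.eq_zero_or_pos M with h | h
    · obtain ⟨N, hN, h'⟩ := X.key 1 le_rfl
      exact ⟨N, by omega, by subst h; exact le_trans (by norm_num) h'⟩
    · exact X.key M h
  constructor
  · rw [EReal.eq_top_iff_forall_lt]
    intro y
    obtain ⟨m, hm⟩ := exists_nat_gt y
    have hle : ((m:ℝ) : EReal) ≤
        Filter.limsup (fun n : ℕ => (((hcoef 1 1 n : ℤ) : ℝ) : EReal)) Filter.atTop := by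
      apply Filter.le_limsup_of_frequently_le'
      rw [Filter.frequently_atTop]
      intro a
      obtain ⟨N, hN, hval⟩ := key' (max m a)
      refine ⟨N, le_trans (le_max_right _ _) hN, ?_⟩
      have h2 : (m:ℤ) ≤ hcoef 1 1 N := le_trans (by exact_mod_cast le_max_left m a) hval
      have h3 : (m:ℝ) ≤ ((hcoef 1 1 N : ℤ) : ℝ) := by exact_mod_cast h2
      exact_mod_cast EReal.coe_le_coe_iff.mpr h3
    exact lt_of_lt_of_le (by exact_mod_cast hm) hle
  · intro M
    obtain ⟨N, _, hval⟩ := key' (M.toNat + 1)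
    refine ⟨N, lt_of_lt_of_le ?_ hval⟩
    have := Int.self_le_toNat M
    push_cast
    omega
end

section
/- The identity ∑_{n≥1} (-1)^{n+1} q^{n(n+1)/2}/(1 - q^n) = ∑_{j≥1} ∑_{0≤r<j} q^{j(j+r)} (1 + q^j) holds as formal power series in q. -/
open scoped Classical

namespace ACKO

noncomputable def eps (L u v : ℕ) : ℤ := if u < 2^(L+1) * v then 1 else -1

noncomputable def cC (L u v : ℕ) : ℕ :=
  ((Finset.range (L+1)).filter
    (fun i => 2^(2*i) * u ≤ 2^L * v ∧ 2^L * v < 2^(2*i+1) * u)).card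

noncomputable def cD (L u v : ℕ) : ℕ :=
  ((Finset.range (L+1)).filter
    (fun i => 2^(2*i) * u < 2^L * v ∧ 2^L * v ≤ 2^(2*i+1) * u)).card

lemma card_lin (L c m : ℕ) :
    ((Finset.range (L+1)).filter (fun i => 2*i + c = m)).card
      = if c ≤ m ∧ (m - c) % 2 = 0 ∧ m ≤ 2*L + c then 1 else 0 := by
  split_ifs with h
  · rw [Finset.card_eq_one]
    refine ⟨(m - c)/2, ?_⟩
    ext i
    simp only [Finset.mem_filter, Finset.mem_range, Finset.mem_singleton]
    omega
  · rw [Finset.card_eq_zero, Finset.filter_eq_empty_iff]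
    intro i hi
    simp only [Finset.mem_range] at hi
    omega

lemma bracket (u v : ℕ) (hu : 0 < u) (huv : u ≤ v) :
    ∃ j, 2^j * u ≤ v ∧ v < 2^(j+1) * u := by
  have hv0 : 0 < v := lt_of_lt_of_le hu huv
  have hq : 0 < v / u := Nat.div_pos huv hu
  refine ⟨Nat.log 2 (v / u), ?_, ?_⟩
  · calc 2 ^ Nat.log 2 (v/u) * u ≤ (v/u) * u :=
          Nat.mul_le_mul_right u (Nat.pow_log_le_self 2 hq.ne')
      _ ≤ v := Nat.div_mul_le_self v u
  · have h2 : v / u < 2 ^ (Nat.log 2 (v/u) + 1) := Nat.lt_pow_succ_log_self (by norm_num) _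
    have h3 : v < (v/u + 1) * u := by
      have := Nat.div_add_mod v u
      have := Nat.mod_lt v hu
      nlinarith [Nat.div_add_mod v u]
    calc v < (v/u + 1) * u := h3
      _ ≤ 2 ^ (Nat.log 2 (v/u) + 1) * u := Nat.mul_le_mul_right u (by omega)

-- helpers
lemma step_le {a L j u v : ℕ} (h : a ≤ L + j) (hl : 2^j * u ≤ v) :
    2^a * u ≤ 2^L * v := by
  calc 2^a * u ≤ 2^(L+j) * u := Nat.mul_le_mul_right u (Nat.pow_le_pow_right (by norm_num) h)
    _ = 2^L * (2^j * u) := by rw [pow_add, mul_assoc]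
    _ ≤ 2^L * v := Nat.mul_le_mul_left _ hl

lemma step_lt {a L j u v : ℕ} (h : a ≤ L + j) (hl : 2^j * u < v) :
    2^a * u < 2^L * v := by
  calc 2^a * u ≤ 2^(L+j) * u := Nat.mul_le_mul_right u (Nat.pow_le_pow_right (by norm_num) h)
    _ = 2^L * (2^j * u) := by rw [pow_add, mul_assoc]
    _ < 2^L * v := by
        have : (0:ℕ) < 2^L := Nat.two_pow_pos L
        exact (Nat.mul_lt_mul_left this).mpr hl

lemma step_gt {a L j u v : ℕ} (h : L + j + 1 ≤ a) (hh : v < 2^(j+1) * u) :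
    2^L * v < 2^a * u := by
  calc 2^L * v < 2^L * (2^(j+1) * u) := by
        have h2 : (0:ℕ) < 2^L := Nat.two_pow_pos L
        exact (Nat.mul_lt_mul_left h2).mpr hh
    _ = 2^(L+j+1) * u := by rw [← mul_assoc, ← pow_add, Nat.add_assoc]
    _ ≤ 2^a * u := Nat.mul_le_mul_right u (Nat.pow_le_pow_right (by norm_num) h)

lemma step_ge {a L j u v : ℕ} (h : L + j + 1 ≤ a) (hh : v ≤ 2^(j+1) * u) :
    2^L * v ≤ 2^a * u := by
  calc 2^L * v ≤ 2^L * (2^(j+1) * u) := Nat.mul_le_mul_left _ hh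
    _ = 2^(L+j+1) * u := by rw [← mul_assoc, ← pow_add, Nat.add_assoc]
    _ ≤ 2^a * u := Nat.mul_le_mul_right u (Nat.pow_le_pow_right (by norm_num) (by omega))


lemma charC {L j u v : ℕ} (hl : 2^j * u ≤ v) (hh : v < 2^(j+1) * u) (i : ℕ) :
    (2^(2*i) * u ≤ 2^L * v ∧ 2^L * v < 2^(2*i+1) * u) ↔ 2*i = L + j := by
  constructor
  · rintro ⟨h1, h2⟩
    by_contra hne
    rcases Nat.lt_or_ge (2*i) (L+j) with hc | hc
    · have := step_le (a := 2*i+1) (L := L) (by omega) hl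
      omega
    · have := step_gt (a := 2*i) (L := L) (by omega) hh
      omega
  · intro he
    exact ⟨step_le (by omega) hl, step_gt (by omega) hh⟩

lemma charD {L j u v : ℕ} (hl : 2^j * u < v) (hh : v ≤ 2^(j+1) * u) (i : ℕ) :
    (2^(2*i) * u < 2^L * v ∧ 2^L * v ≤ 2^(2*i+1) * u) ↔ 2*i = L + j := by
  constructor
  · rintro ⟨h1, h2⟩
    by_contra hne
    rcases Nat.lt_or_ge (2*i) (L+j) with hc | hc
    · have := step_lt (a := 2*i+1) (L := L) (by omega) hl
      omega
    · have := step_ge (a := 2*i) (L := L) (by omega) hh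
      omega
  · intro he
    exact ⟨step_lt (by omega) hl, step_ge (by omega) hh⟩

lemma charC' {L j u v : ℕ} (hl : 2^j * u < v) (hh : v < 2^(j+1) * u) (i : ℕ) :
    (2^(2*i) * v ≤ 2^L * u ∧ 2^L * u < 2^(2*i+1) * v) ↔ 2*i + (j+1) = L := by
  constructor
  · rintro ⟨h1, h2⟩
    by_contra hne
    rcases Nat.lt_or_ge (2*i + (j+1)) L with hc | hc
    · -- 2i+j+2 ≤ L : 2^(2i+1) v < 2^(2i+1) * (2^(j+1) u) = 2^(2i+j+2) u ≤ 2^L u, contra h2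
      have hA : 2^(2*i+1) * v < 2^(2*i+j+2) * u := by
        calc 2^(2*i+1) * v < 2^(2*i+1) * (2^(j+1) * u) := by
              exact (Nat.mul_lt_mul_left (Nat.two_pow_pos _)).mpr hh
          _ = 2^(2*i+j+2) * u := by rw [← mul_assoc, ← pow_add]; ring_nf
      have hB : 2^(2*i+j+2) * u ≤ 2^L * u :=
        Nat.mul_le_mul_right u (Nat.pow_le_pow_right (by norm_num) (by omega))
      omega
    · -- L ≤ 2i+j : 2^L u ≤ 2^(2i+j) u = 2^(2i) (2^j u) < 2^(2i) v, contra h1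
      have hA : 2^L * u ≤ 2^(2*i+j) * u :=
        Nat.mul_le_mul_right u (Nat.pow_le_pow_right (by norm_num) (by omega))
      have hB : 2^(2*i+j) * u < 2^(2*i) * v := by
        calc 2^(2*i+j) * u = 2^(2*i) * (2^j * u) := by rw [← mul_assoc, ← pow_add]
          _ < 2^(2*i) * v := (Nat.mul_lt_mul_left (Nat.two_pow_pos _)).mpr hl
      omega
  · intro he
    constructor
    · have : 2^(2*i) * v < 2^(2*i) * (2^(j+1) * u) := (Nat.mul_lt_mul_left (Nat.two_pow_pos _)).mpr hh
      have h2 : 2^(2*i) * (2^(j+1) * u) = 2^L * u := by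
        rw [← mul_assoc, ← pow_add, ← he]
      omega
    · have : 2^(2*i+1) * (2^j * u) < 2^(2*i+1) * v := (Nat.mul_lt_mul_left (Nat.two_pow_pos _)).mpr hl
      have h2 : 2^(2*i+1) * (2^j * u) = 2^L * u := by
        rw [← mul_assoc, ← pow_add, ← he]; ring_nf
      omega

lemma charD' {L j u v : ℕ} (hl : 2^j * u < v) (hh : v < 2^(j+1) * u) (i : ℕ) :
    (2^(2*i) * v < 2^L * u ∧ 2^L * u ≤ 2^(2*i+1) * v) ↔ 2*i + (j+1) = L := by
  constructor
  · rintro ⟨h1, h2⟩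
    by_contra hne
    rcases Nat.lt_or_ge (2*i + (j+1)) L with hc | hc
    · have hA : 2^(2*i+1) * v < 2^(2*i+j+2) * u := by
        calc 2^(2*i+1) * v < 2^(2*i+1) * (2^(j+1) * u) := by
              exact (Nat.mul_lt_mul_left (Nat.two_pow_pos _)).mpr hh
          _ = 2^(2*i+j+2) * u := by rw [← mul_assoc, ← pow_add]; ring_nf
      have hB : 2^(2*i+j+2) * u ≤ 2^L * u :=
        Nat.mul_le_mul_right u (Nat.pow_le_pow_right (by norm_num) (by omega))
      omega
    · have hA : 2^L * u ≤ 2^(2*i+j) * u :=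
        Nat.mul_le_mul_right u (Nat.pow_le_pow_right (by norm_num) (by omega))
      have hB : 2^(2*i+j) * u < 2^(2*i) * v := by
        calc 2^(2*i+j) * u = 2^(2*i) * (2^j * u) := by rw [← mul_assoc, ← pow_add]
          _ < 2^(2*i) * v := (Nat.mul_lt_mul_left (Nat.two_pow_pos _)).mpr hl
      omega
  · intro he
    constructor
    · have hA : 2^(2*i) * v < 2^(2*i) * (2^(j+1) * u) := (Nat.mul_lt_mul_left (Nat.two_pow_pos _)).mpr hh
      have hB : 2^(2*i) * (2^(j+1) * u) = 2^L * u := by rw [← mul_assoc, ← pow_add, ← he]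
      omega
    · have hA : 2^(2*i+1) * (2^j * u) < 2^(2*i+1) * v := (Nat.mul_lt_mul_left (Nat.two_pow_pos _)).mpr hl
      have hB : 2^(2*i+1) * (2^j * u) = 2^L * u := by
        rw [← mul_assoc, ← pow_add]
        have hE : 2*i+1+j = L := by omega
        rw [hE]
      omega

lemma pow_mul_lt_iff {u : ℕ} (hu : 0 < u) (a b : ℕ) : 2^a * u < 2^b * u ↔ a < b := by
  rw [Nat.mul_lt_mul_right hu]
  exact Nat.pow_lt_pow_iff_right (by norm_num)

lemma pow_mul_le_iff {u : ℕ} (hu : 0 < u) (a b : ℕ) : 2^a * u ≤ 2^b * u ↔ a ≤ b := by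
  constructor
  · intro h
    have := Nat.le_of_mul_le_mul_right h hu
    exact (Nat.pow_le_pow_iff_right (by norm_num)).mp this
  · intro h
    exact Nat.mul_le_mul_right u (Nat.pow_le_pow_right (by norm_num) h)

lemma key_aux (L u v : ℕ) (hu : Odd u) (hv : Odd v) (huv : u ≤ v) :
    eps L u v + eps L v u = (cC L u v : ℤ) + cD L u v + cC L v u + cD L v u := by
  have hu0 : 0 < u := hu.pos
  have hv0 : 0 < v := hv.pos
  obtain ⟨j, hl, hh⟩ := bracket u v hu0 huv
  have heps1 : eps L u v = 1 := by
    unfold eps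
    rw [if_pos]
    have h1 : 1 < 2^(L+1) := Nat.one_lt_two_pow (by omega)
    calc u ≤ v := huv
      _ = 1 * v := (one_mul v).symm
      _ < 2^(L+1) * v := (Nat.mul_lt_mul_right hv0).mpr h1
  rcases eq_or_lt_of_le hl with heq | hlt
  · -- 2^j * u = v, so j = 0 and u = v
    have hj : j = 0 := by
      by_contra hj0
      have h2 : 2 ∣ v := heq ▸ (dvd_pow_self 2 hj0).mul_right u
      have := Nat.odd_iff.mp hv
      omega
    subst hj
    have huveq : u = v := by simpa using heq
    subst huveq
    have hl0 : 2^0 * u ≤ u := by simpa using le_refl u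
    have hh0 : u < 2^(0+1) * u := by
      have : 2^(0+1) * u = 2 * u := by norm_num
      omega
    have hC : cC L u u = if 0 ≤ L + 0 ∧ (L + 0 - 0) % 2 = 0 ∧ L + 0 ≤ 2*L + 0 then 1 else 0 := by
      unfold cC
      rw [Finset.filter_congr (q := fun i => 2*i + 0 = L + 0) (fun i _ => by
        rw [charC hl0 hh0 i]; omega)]
      exact card_lin L 0 (L+0)
    have hD : cD L u u = if 1 ≤ L ∧ (L - 1) % 2 = 0 ∧ L ≤ 2*L + 1 then 1 else 0 := by
      unfold cD
      rw [Finset.filter_congr (q := fun i => 2*i + 1 = L) (fun i _ => by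
        rw [pow_mul_lt_iff hu0, pow_mul_le_iff hu0]; omega)]
      exact card_lin L 1 L
    rw [heps1, hC, hD]
    push_cast
    split_ifs <;> omega
  · -- strict case
    have heps2 : eps L v u = if j ≤ L then 1 else -1 := by
      unfold eps
      have hiff : v < 2^(L+1) * u ↔ j ≤ L := by
        constructor
        · intro h
          by_contra hc
          have : 2^(L+1) * u ≤ 2^j * u :=
            Nat.mul_le_mul_right u (Nat.pow_le_pow_right (by norm_num) (by omega))
          omega
        · intro h
          have : 2^(j+1) * u ≤ 2^(L+1) * u :=
            Nat.mul_le_mul_right u (Nat.pow_le_pow_right (by norm_num) (by omega))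
          omega
      rw [if_congr hiff rfl rfl]
    have hC1 : cC L u v = if 0 ≤ L + j ∧ (L + j - 0) % 2 = 0 ∧ L + j ≤ 2*L + 0 then 1 else 0 := by
      unfold cC
      rw [Finset.filter_congr (q := fun i => 2*i + 0 = L + j) (fun i _ => by
        rw [charC hl hh i]; omega)]
      exact card_lin L 0 (L+j)
    have hD1 : cD L u v = if 0 ≤ L + j ∧ (L + j - 0) % 2 = 0 ∧ L + j ≤ 2*L + 0 then 1 else 0 := by
      unfold cD
      rw [Finset.filter_congr (q := fun i => 2*i + 0 = L + j) (fun i _ => by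
        rw [charD hlt hh.le i]; omega)]
      exact card_lin L 0 (L+j)
    have hC2 : cC L v u = if j + 1 ≤ L ∧ (L - (j+1)) % 2 = 0 ∧ L ≤ 2*L + (j+1) then 1 else 0 := by
      unfold cC
      rw [Finset.filter_congr (q := fun i => 2*i + (j+1) = L) (fun i _ => charC' hlt hh i)]
      exact card_lin L (j+1) L
    have hD2 : cD L v u = if j + 1 ≤ L ∧ (L - (j+1)) % 2 = 0 ∧ L ≤ 2*L + (j+1) then 1 else 0 := by
      unfold cD
      rw [Finset.filter_congr (q := fun i => 2*i + (j+1) = L) (fun i _ => charD' hlt hh i)]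
      exact card_lin L (j+1) L
    rw [heps1, heps2, hC1, hD1, hC2, hD2]
    push_cast
    split_ifs <;> omega

lemma key (L u v : ℕ) (hu : Odd u) (hv : Odd v) :
    eps L u v + eps L v u = (cC L u v : ℤ) + cD L u v + cC L v u + cD L v u := by
  rcases le_total u v with h | h
  · exact key_aux L u v hu hv h
  · have := key_aux L v u hv hu h
    push_cast at this ⊢
    linarith


lemma cnd_iff (N n : ℕ) (hn : 1 ≤ n) :
    (1*(n*(n-1)/2) + 1*n ≤ N ∧ n ∣ (N - (1*(n*(n-1)/2) + 1*n))) ↔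
      ∃ m, 2*N = n*(n+2*m+1) := by
  obtain ⟨k, rfl⟩ : ∃ k, n = k+1 := ⟨n-1, by omega⟩
  simp only [one_mul, Nat.add_sub_cancel]
  have h2 : 2*((k+1)*k/2) = (k+1)*k := by
    apply Nat.mul_div_cancel'
    have : Even (k*(k+1)) := Nat.even_mul_succ_self k
    rw [mul_comm]
    exact this.two_dvd
  constructor
  · rintro ⟨h1, m, hm⟩
    refine ⟨m, ?_⟩
    have expand : (k+1)*((k+1)+2*m+1) = (k+1)*k + 2*(k+1) + 2*((k+1)*m) := by ring
    omega
  · rintro ⟨m, hm⟩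
    have expand : (k+1)*((k+1)+2*m+1) = (k+1)*k + 2*(k+1) + 2*((k+1)*m) := by ring
    refine ⟨by omega, m, by omega⟩

lemma odd_sol_iff (L M n : ℕ) (h0 : 0 < M) (hn : Odd n) :
    (∃ m, 2*(2^L*M) = n*(n+2*m+1)) ↔ n ∣ M ∧ n < 2^(L+1)*(M/n) := by
  have hn0 : 0 < n := hn.pos
  constructor
  · rintro ⟨m, hm⟩
    have h2N : 2*(2^L*M) = 2^(L+1)*M := by ring
    have hdvd : n ∣ M := by
      have hd2N : n ∣ 2^(L+1)*M := by
        rw [← h2N, hm]; exact Dvd.intro _ rfl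
      exact (Nat.Coprime.pow_right (L+1) hn.coprime_two_right).dvd_of_dvd_mul_left hd2N
    have hMn : n*(M/n) = M := Nat.mul_div_cancel' hdvd
    have hcalc : n*(n+2*m+1) = n*(2^(L+1)*(M/n)) := by
      calc n*(n+2*m+1) = 2*(2^L*M) := hm.symm
        _ = 2^(L+1)*(n*(M/n)) := by rw [hMn]; ring
        _ = n*(2^(L+1)*(M/n)) := by ring
    have hne := Nat.eq_of_mul_eq_mul_left hn0 hcalc
    exact ⟨hdvd, by omega⟩
  · rintro ⟨hdvd, hlt⟩
    have hMn : n*(M/n) = M := Nat.mul_div_cancel' hdvd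
    have hK2 : 2^(L+1)*(M/n) = 2*(2^L*(M/n)) := by ring
    have hn2 : n % 2 = 1 := Nat.odd_iff.mp hn
    refine ⟨(2^(L+1)*(M/n) - n - 1)/2, ?_⟩
    have heq : n + 2*((2^(L+1)*(M/n) - n - 1)/2) + 1 = 2^(L+1)*(M/n) := by omega
    rw [heq]
    calc 2*(2^L*M) = 2^(L+1)*(n*(M/n)) := by rw [hMn]; ring
      _ = n*(2^(L+1)*(M/n)) := by ring

lemma sum_pm (s : Finset ℕ) (p : ℕ → Prop) [DecidablePred p] :
    ∑ u ∈ s, (if p u then (1:ℤ) else -1)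
      = ((s.filter p).card : ℤ) - ((s.filter (fun u => ¬ p u)).card : ℤ) := by
  have hpt : ∀ u ∈ s, (if p u then (1:ℤ) else -1)
      = (if p u then (1:ℤ) else 0) - (if ¬ p u then (1:ℤ) else 0) := by
    intro u _
    by_cases h : p u <;> simp [h]
  rw [Finset.sum_congr rfl hpt, Finset.sum_sub_distrib, Finset.sum_boole, Finset.sum_boole]

lemma lhs_eq (L M : ℕ) (hM : Odd M) (h0 : 0 < M) :
    hcoef 1 1 (2^L*M) = ∑ u ∈ M.divisors, eps L u (M/u) := by
  have hN0 : 0 < 2^L*M := by positivity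
  set N := 2^L*M with hN
  have hMN : M ≤ N := by
    have := Nat.mul_le_mul_right M (Nat.one_le_two_pow (n := L))
    simpa [hN] using this
  have h2N : 2*N = 2^(L+1)*M := by rw [hN]; ring
  have hM2 : M % 2 = 1 := Nat.odd_iff.mp hM
  have step1 : hcoef 1 1 N =
      ((((Finset.Icc 1 (2*N+2)).filter
          (fun n => (∃ m, 2*N = n*(n+2*m+1)) ∧ n % 2 = 1)).card : ℤ)
      - (((Finset.Icc 1 (2*N+2)).filter
          (fun n => (∃ m, 2*N = n*(n+2*m+1)) ∧ n % 2 = 0)).card : ℤ)) := by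
    unfold hcoef
    rw [← Finset.sum_boole, ← Finset.sum_boole, ← Finset.sum_sub_distrib]
    apply Finset.sum_congr rfl
    intro n hn
    simp only [Finset.mem_Icc] at hn
    rw [if_congr (cnd_iff N n hn.1) rfl rfl]
    rcases Nat.even_or_odd n with he | ho
    · have h1 : n % 2 = 0 := Nat.even_iff.mp he
      have hpow : (-1:ℤ)^(n-1) = -1 := Odd.neg_one_pow (by rw [Nat.odd_iff]; omega)
      by_cases hc : ∃ m, 2*N = n*(n+2*m+1) <;> simp [hc, h1, hpow]
    · have h1 : n % 2 = 1 := Nat.odd_iff.mp ho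
      have hpow : (-1:ℤ)^(n-1) = 1 := Even.neg_one_pow (by rw [Nat.even_iff]; omega)
      by_cases hc : ∃ m, 2*N = n*(n+2*m+1) <;> simp [hc, h1, hpow]
  have hodd : (Finset.Icc 1 (2*N+2)).filter
      (fun n => (∃ m, 2*N = n*(n+2*m+1)) ∧ n % 2 = 1)
      = M.divisors.filter (fun u => u < 2^(L+1)*(M/u)) := by
    ext n
    simp only [Finset.mem_filter, Finset.mem_Icc, Nat.mem_divisors]
    constructor
    · rintro ⟨⟨h1, h2⟩, hc, hpar⟩
      have hno : Odd n := Nat.odd_iff.mpr hpar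
      have hres := (odd_sol_iff L M n h0 hno).mp (by rw [hN] at hc; exact hc)
      exact ⟨⟨hres.1, h0.ne'⟩, hres.2⟩
    · rintro ⟨⟨hdvd, _⟩, hlt⟩
      have hno : n % 2 = 1 := by
        rcases Nat.even_or_odd n with he | ho
        · exfalso
          have h2d : (2:ℕ) ∣ M := dvd_trans he.two_dvd hdvd
          omega
        · exact Nat.odd_iff.mp ho
      have hn1 : 1 ≤ n := Nat.pos_of_dvd_of_pos hdvd h0
      have hn2 : n ≤ 2*N+2 := by
        have := Nat.le_of_dvd h0 hdvd
        omega
      refine ⟨⟨hn1, hn2⟩, ?_, hno⟩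
      have := (odd_sol_iff L M n h0 (Nat.odd_iff.mpr hno)).mpr ⟨hdvd, hlt⟩
      rw [← hN] at this
      exact this
  have heven : (((Finset.Icc 1 (2*N+2)).filter
      (fun n => (∃ m, 2*N = n*(n+2*m+1)) ∧ n % 2 = 0)).card)
      = ((M.divisors.filter (fun u => ¬ u < 2^(L+1)*(M/u))).card) := by
    apply Finset.card_bij' (fun n _ => 2*N/n) (fun v _ => 2*N/v)
    · -- hi
      intro n hn
      simp only [Finset.mem_filter, Finset.mem_Icc] at hn
      obtain ⟨⟨hn1, _⟩, ⟨m, hm⟩, hpar⟩ := hn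
      have hv : 2*N/n = n+2*m+1 := by
        rw [hm]; exact Nat.mul_div_cancel_left _ (by omega)
      set v := n+2*m+1 with hvdef
      have hvodd : Odd v := by rw [Nat.odd_iff]; omega
      have hvdvd2N : v ∣ 2^(L+1)*M := by
        rw [← h2N, hm]; exact ⟨n, by ring⟩
      have hvdvd : v ∣ M :=
        (Nat.Coprime.pow_right (L+1) hvodd.coprime_two_right).dvd_of_dvd_mul_left hvdvd2N
      have hMv : v*(M/v) = M := Nat.mul_div_cancel' hvdvd
      have hcalc : v*n = v*(2^(L+1)*(M/v)) := by
        calc v*n = n*v := by ring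
          _ = 2*N := hm.symm
          _ = 2^(L+1)*(v*(M/v)) := by rw [hMv, h2N]
          _ = v*(2^(L+1)*(M/v)) := by ring
      have hne : n = 2^(L+1)*(M/v) := Nat.eq_of_mul_eq_mul_left (by omega) hcalc
      simp only [Finset.mem_filter, Nat.mem_divisors, hv]
      exact ⟨⟨hvdvd, h0.ne'⟩, by omega⟩
    · -- hj
      intro v hvmem
      simp only [Finset.mem_filter, Nat.mem_divisors] at hvmem
      obtain ⟨⟨hvdvd, _⟩, hnotlt⟩ := hvmem
      have hv0 : 0 < v := Nat.pos_of_dvd_of_pos hvdvd h0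
      have hvodd : v % 2 = 1 := by
        rcases Nat.even_or_odd v with he | ho
        · exfalso; have h2d : (2:ℕ) ∣ M := dvd_trans he.two_dvd hvdvd; omega
        · exact Nat.odd_iff.mp ho
      have hMv : v*(M/v) = M := Nat.mul_div_cancel' hvdvd
      set K := 2^(L+1)*(M/v) with hKdef
      have hKv : K*v = 2*N := by
        calc K*v = 2^(L+1)*(v*(M/v)) := by rw [hKdef]; ring
          _ = 2*N := by rw [hMv, h2N]
      have hquot : 2*N/v = K := by rw [← hKv]; exact Nat.mul_div_cancel _ hv0
      have hKeven : K % 2 = 0 := by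
        have : K = 2*(2^L*(M/v)) := by rw [hKdef]; ring
        omega
      have hK0 : 0 < K := by
        have hMv0 : 0 < M/v := Nat.div_pos (Nat.le_of_dvd h0 hvdvd) hv0
        have : 0 < 2^(L+1) := Nat.two_pow_pos (L+1)
        rw [hKdef]; positivity
      have hKle : K ≤ 2*N := by
        have : K ∣ 2*N := ⟨v, hKv.symm⟩
        exact Nat.le_of_dvd (by omega) this
      simp only [Finset.mem_filter, Finset.mem_Icc, hquot]
      refine ⟨⟨by omega, by omega⟩, ⟨(v - K - 1)/2, ?_⟩, by omega⟩
      have hveq : K + 2*((v - K - 1)/2) + 1 = v := by omega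
      rw [hveq, ← hKv]
    · -- left inverse
      intro n hn
      simp only [Finset.mem_filter, Finset.mem_Icc] at hn
      obtain ⟨⟨hn1, _⟩, ⟨m, hm⟩, hpar⟩ := hn
      have hv : 2*N/n = n+2*m+1 := by
        rw [hm]; exact Nat.mul_div_cancel_left _ (by omega)
      rw [hv, hm]
      exact Nat.mul_div_cancel _ (by omega)
    · -- right inverse
      intro v hvmem
      simp only [Finset.mem_filter, Nat.mem_divisors] at hvmem
      obtain ⟨⟨hvdvd, _⟩, hnotlt⟩ := hvmem
      have hv0 : 0 < v := Nat.pos_of_dvd_of_pos hvdvd h0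
      have hMv : v*(M/v) = M := Nat.mul_div_cancel' hvdvd
      have hKv : (2^(L+1)*(M/v))*v = 2*N := by
        calc (2^(L+1)*(M/v))*v = 2^(L+1)*(v*(M/v)) := by ring
          _ = 2*N := by rw [hMv, h2N]
      have hquot : 2*N/v = 2^(L+1)*(M/v) := by rw [← hKv]; exact Nat.mul_div_cancel _ hv0
      have hK0 : 0 < 2^(L+1)*(M/v) := by
        have hMv0 : 0 < M/v := Nat.div_pos (Nat.le_of_dvd h0 hvdvd) hv0
        positivity
      rw [hquot, ← hKv]
      exact Nat.mul_div_cancel_left _ hK0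
  have heps : ∑ u ∈ M.divisors, eps L u (M/u)
      = ((M.divisors.filter (fun u => u < 2^(L+1)*(M/u))).card : ℤ)
        - ((M.divisors.filter (fun u => ¬ u < 2^(L+1)*(M/u))).card : ℤ) := by
    unfold eps
    exact sum_pm _ _
  rw [step1, hodd, heven, heps]

lemma mul_le_cancel_iff {u : ℕ} (hu : 0 < u) (x y : ℕ) : x*u ≤ y*u ↔ x ≤ y := by
  constructor
  · intro h; exact Nat.le_of_mul_le_mul_right h hu
  · intro h; exact Nat.mul_le_mul_right u h

lemma pairsC (N : ℕ) (hN0 : 0 < N) :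
    (((Finset.Icc 1 N) ×ˢ (Finset.range N)).filter
        (fun p => p.2 < p.1 ∧ p.1 * (p.1 + p.2) = N)).card
      = (N.divisors.filter (fun j => j*j ≤ N ∧ N < 2*(j*j))).card := by
  apply Finset.card_bij' (fun p _ => p.1) (fun j _ => (j, N/j - j))
  · rintro ⟨a, b⟩ hp
    simp only [Finset.mem_filter, Finset.mem_product, Finset.mem_Icc, Finset.mem_range] at hp
    obtain ⟨⟨⟨h1, h2⟩, h3⟩, hrj, hmul⟩ := hp
    simp only [Finset.mem_filter, Nat.mem_divisors]
    refine ⟨⟨⟨a + b, hmul.symm⟩, hN0.ne'⟩, ?_, ?_⟩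
    · calc a*a ≤ a*(a+b) := Nat.mul_le_mul_left a (by omega)
        _ = N := hmul
    · have h4 : a*(a+b) < a*(2*a) := (Nat.mul_lt_mul_left (by omega)).mpr (by omega)
      have h5 : a*(2*a) = 2*(a*a) := by ring
      omega
  · intro j hj
    simp only [Finset.mem_filter, Nat.mem_divisors] at hj
    obtain ⟨⟨hdvd, _⟩, hle, hlt⟩ := hj
    have hj0 : 0 < j := Nat.pos_of_dvd_of_pos hdvd hN0
    have hjs : j*(N/j) = N := Nat.mul_div_cancel' hdvd
    have hsle : j ≤ N/j := by
      by_contra hc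
      push_neg at hc
      have : j*(N/j) < j*j := (Nat.mul_lt_mul_left hj0).mpr hc
      omega
    have hslt : N/j < 2*j := by
      by_contra hc
      push_neg at hc
      have h6 : j*(2*j) ≤ j*(N/j) := Nat.mul_le_mul_left j hc
      have h5 : j*(2*j) = 2*(j*j) := by ring
      omega
    have hjN : j ≤ N := Nat.le_of_dvd hN0 hdvd
    simp only [Finset.mem_filter, Finset.mem_product, Finset.mem_Icc, Finset.mem_range]
    refine ⟨⟨⟨hj0, hjN⟩, by omega⟩, by omega, ?_⟩
    have h7 : j + (N/j - j) = N/j := by omega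
    rw [h7, hjs]
  · rintro ⟨a, b⟩ hp
    simp only [Finset.mem_filter, Finset.mem_product, Finset.mem_Icc, Finset.mem_range] at hp
    obtain ⟨⟨⟨h1, h2⟩, h3⟩, hrj, hmul⟩ := hp
    have h8 : N / a = a + b := by
      rw [← hmul]; exact Nat.mul_div_cancel_left _ (by omega)
    rw [Prod.ext_iff]
    refine ⟨rfl, ?_⟩
    show N / a - a = b
    omega
  · intro j hj
    rfl

lemma pairsD (N : ℕ) (hN0 : 0 < N) :
    (((Finset.Icc 1 N) ×ˢ (Finset.range N)).filter
        (fun p => p.2 < p.1 ∧ p.1 * (p.1 + p.2) + p.1 = N)).card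
      = (N.divisors.filter (fun j => j*j < N ∧ N ≤ 2*(j*j))).card := by
  apply Finset.card_bij' (fun p _ => p.1) (fun j _ => (j, N/j - j - 1))
  · rintro ⟨a, b⟩ hp
    simp only [Finset.mem_filter, Finset.mem_product, Finset.mem_Icc, Finset.mem_range] at hp
    obtain ⟨⟨⟨h1, h2⟩, h3⟩, hrj, hmul⟩ := hp
    have hNe : N = a*(a+b+1) := by
      have : a*(a+b+1) = a*(a+b) + a := by ring
      omega
    simp only [Finset.mem_filter, Nat.mem_divisors]
    refine ⟨⟨⟨a + b + 1, hNe⟩, hN0.ne'⟩, ?_, ?_⟩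
    · have : a*a ≤ a*(a+b) := Nat.mul_le_mul_left a (by omega)
      omega
    · have h4 : a*(a+b+1) ≤ a*(2*a) := Nat.mul_le_mul_left a (by omega)
      have h5 : a*(2*a) = 2*(a*a) := by ring
      omega
  · intro j hj
    simp only [Finset.mem_filter, Nat.mem_divisors] at hj
    obtain ⟨⟨hdvd, _⟩, hle, hlt⟩ := hj
    have hj0 : 0 < j := Nat.pos_of_dvd_of_pos hdvd hN0
    have hjs : j*(N/j) = N := Nat.mul_div_cancel' hdvd
    have hsle : j < N/j := by
      by_contra hc
      push_neg at hc
      have : j*(N/j) ≤ j*j := Nat.mul_le_mul_left j hc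
      omega
    have hslt : N/j ≤ 2*j := by
      by_contra hc
      push_neg at hc
      have h6 : j*(2*j) < j*(N/j) := (Nat.mul_lt_mul_left hj0).mpr hc
      have h5 : j*(2*j) = 2*(j*j) := by ring
      omega
    have hjN : j ≤ N := Nat.le_of_dvd hN0 hdvd
    simp only [Finset.mem_filter, Finset.mem_product, Finset.mem_Icc, Finset.mem_range]
    refine ⟨⟨⟨hj0, hjN⟩, by omega⟩, by omega, ?_⟩
    have h7 : j + (N/j - j - 1) = N/j - 1 := by omega
    rw [h7]
    have h8 : N/j = (N/j - 1) + 1 := by omega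
    have h9 : j*((N/j - 1) + 1) = j*(N/j - 1) + j := by ring
    have h10 : j*(N/j - 1 + 1) = j*(N/j) := by rw [← h8]
    omega
  · rintro ⟨a, b⟩ hp
    simp only [Finset.mem_filter, Finset.mem_product, Finset.mem_Icc, Finset.mem_range] at hp
    obtain ⟨⟨⟨h1, h2⟩, h3⟩, hrj, hmul⟩ := hp
    have hNe : N = a*(a+b+1) := by
      have : a*(a+b+1) = a*(a+b) + a := by ring
      omega
    have h8 : N / a = a + b + 1 := by
      rw [hNe]; exact Nat.mul_div_cancel_left _ (by omega)
    rw [Prod.ext_iff]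
    refine ⟨rfl, ?_⟩
    show N / a - a - 1 = b
    omega
  · intro j hj
    rfl

lemma fiber_count (L M : ℕ) (hM : Odd M) (h0 : 0 < M) (R : ℕ → ℕ → Prop)
    [∀ x y : ℕ, Decidable (R x y)]
    (hR : ∀ x y u : ℕ, 0 < u → (R (x*u) (y*u) ↔ R x y)) :
    ((2^L*M).divisors.filter (fun d => R (d*d) (2^L*M))).card
      = ∑ u ∈ M.divisors, ((Finset.range (L+1)).filter
          (fun i => R (2^(2*i)*u) (2^L*(M/u)))).card := by
  have hN0 : 0 < 2^L*M := by positivity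
  have hM2 : ¬ (2:ℕ) ∣ M := by
    have := Nat.odd_iff.mp hM
    omega
  have hfac : (2^L*M).factorization 2 = L := by
    rw [Nat.factorization_mul (by positivity : (0:ℕ) < 2^L).ne' h0.ne']
    simp [Nat.Prime.factorization_pow Nat.prime_two,
      Nat.factorization_eq_zero_of_not_dvd hM2]
  have hoc : ordCompl[2] (2^L*M) = M := by
    rw [hfac]
    exact Nat.mul_div_cancel_left M (Nat.two_pow_pos L)
  rw [Finset.card_eq_sum_card_fiberwise
    (f := fun d => ordCompl[2] d) (t := M.divisors) ?hmem]
  case hmem =>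
    intro d hd
    simp only [Finset.mem_coe, Finset.mem_filter, Nat.mem_divisors] at hd
    have := Nat.ordCompl_dvd_ordCompl_of_dvd hd.1.1 2
    rw [hoc] at this
    exact Nat.mem_divisors.mpr ⟨this, h0.ne'⟩
  apply Finset.sum_congr rfl
  intro u hu
  have hud : u ∣ M := (Nat.mem_divisors.mp hu).1
  have hu0 : 0 < u := Nat.pos_of_dvd_of_pos hud h0
  have huodd : ¬ (2:ℕ) ∣ u := fun h => hM2 (h.trans hud)
  have hufac : u.factorization 2 = 0 := Nat.factorization_eq_zero_of_not_dvd huodd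
  have hMu : u*(M/u) = M := Nat.mul_div_cancel' hud
  refine Finset.card_bij' (fun d _ => d.factorization 2) (fun i _ => 2^i*u) ?hi ?hj ?left ?right
  case hi =>
    intro d hd
    simp only [Finset.mem_filter, Nat.mem_divisors] at hd
    obtain ⟨⟨⟨hdvd, _⟩, hRd⟩, hcompl⟩ := hd
    have hd0 : 0 < d := Nat.pos_of_dvd_of_pos hdvd hN0
    have hdec : 2^(d.factorization 2) * u = d := by
      rw [← hcompl]
      exact Nat.ordProj_mul_ordCompl_eq_self d 2
    have hile : d.factorization 2 ≤ L := by
      rw [← hfac]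
      exact (Nat.Prime.pow_dvd_iff_le_factorization Nat.prime_two hN0.ne').mp
        ((Nat.ordProj_dvd d 2).trans hdvd)
    simp only [Finset.mem_filter, Finset.mem_range]
    refine ⟨by omega, ?_⟩
    set k := d.factorization 2 with hk
    have hdd : d*d = (2^(2*k)*u)*u := by
      rw [← hdec]; ring
    have hNN : 2^L*M = (2^L*(M/u))*u := by
      rw [mul_assoc, mul_comm (M/u) u, hMu]
    rw [hdd, hNN] at hRd
    exact (hR _ _ u hu0).mp hRd
  case hj =>
    intro i hi
    simp only [Finset.mem_filter, Finset.mem_range] at hi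
    obtain ⟨hiL, hRi⟩ := hi
    have hdvd : 2^i*u ∣ 2^L*M :=
      mul_dvd_mul (pow_dvd_pow 2 (by omega)) hud
    have hfacd : (2^i*u).factorization 2 = i := by
      rw [Nat.factorization_mul (by positivity : (0:ℕ) < 2^i).ne' hu0.ne']
      simp [Nat.Prime.factorization_pow Nat.prime_two, hufac]
    simp only [Finset.mem_filter, Nat.mem_divisors]
    refine ⟨⟨⟨hdvd, hN0.ne'⟩, ?_⟩, ?_⟩
    · have hdd : (2^i*u)*(2^i*u) = (2^(2*i)*u)*u := by ring
      have hNN : 2^L*M = (2^L*(M/u))*u := by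
        rw [mul_assoc, mul_comm (M/u) u, hMu]
      rw [hdd, hNN]
      exact (hR _ _ u hu0).mpr hRi
    · rw [hfacd]
      exact Nat.mul_div_cancel_left u (Nat.two_pow_pos i)
  case left =>
    intro d hd
    simp only [Finset.mem_filter, Nat.mem_divisors] at hd
    obtain ⟨⟨⟨hdvd, _⟩, hRd⟩, hcompl⟩ := hd
    show 2 ^ d.factorization 2 * u = d
    rw [← hcompl]
    exact Nat.ordProj_mul_ordCompl_eq_self d 2
  case right =>
    intro i hi
    simp only [Finset.mem_filter, Finset.mem_range] at hi
    show (2^i*u).factorization 2 = i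
    rw [Nat.factorization_mul (by positivity : (0:ℕ) < 2^i).ne' hu0.ne']
    simp [Nat.Prime.factorization_pow Nat.prime_two, hufac]


theorem stmt12' (N : ℕ) :
    hcoef 1 1 N =
      ((((Finset.Icc 1 N) ×ˢ (Finset.range N)).filter
          (fun p => p.2 < p.1 ∧ p.1 * (p.1 + p.2) = N)).card : ℤ)
      + ((((Finset.Icc 1 N) ×ˢ (Finset.range N)).filter
          (fun p => p.2 < p.1 ∧ p.1 * (p.1 + p.2) + p.1 = N)).card : ℤ) := by
  rcases Nat.eq_zero_or_pos N with rfl | hN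
  · have h1 : Finset.Icc 1 (2*0+2) = {1, 2} := by decide
    have hrhs : Finset.range 0 = ∅ := rfl
    unfold hcoef
    rw [h1, Finset.sum_insert (by decide), Finset.sum_singleton]
    norm_num
  · have hNne : N ≠ 0 := hN.ne'
    set L := N.factorization 2 with hL
    set M := ordCompl[2] N with hMdef
    have hLM : 2^L * M = N := Nat.ordProj_mul_ordCompl_eq_self N 2
    have h0 : 0 < M := Nat.ordCompl_pos 2 hNne
    have hModd : Odd M := by
      rw [Nat.odd_iff]
      have := Nat.not_dvd_ordCompl Nat.prime_two hNne
      omega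
    have hRC : ∀ x y u : ℕ, 0 < u →
        ((fun x y => x ≤ y ∧ y < 2*x) (x*u) (y*u) ↔ (fun x y => x ≤ y ∧ y < 2*x) x y) := by
      intro x y u hu
      simp only
      have h2 : 2*(x*u) = (2*x)*u := by ring
      rw [mul_le_cancel_iff hu, h2, Nat.mul_lt_mul_right hu]
    have hRD : ∀ x y u : ℕ, 0 < u →
        ((fun x y => x < y ∧ y ≤ 2*x) (x*u) (y*u) ↔ (fun x y => x < y ∧ y ≤ 2*x) x y) := by
      intro x y u hu
      simp only
      have h2 : 2*(x*u) = (2*x)*u := by ring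
      rw [h2, Nat.mul_lt_mul_right hu, mul_le_cancel_iff hu]
    have hcC : ∀ u : ℕ, ((Finset.range (L+1)).filter
        (fun i => 2^(2*i)*u ≤ 2^L*(M/u) ∧ 2^L*(M/u) < 2*(2^(2*i)*u))).card = cC L u (M/u) := by
      intro u
      unfold cC
      congr 1
      apply Finset.filter_congr
      intro i _
      have h2 : 2*(2^(2*i)*u) = 2^(2*i+1)*u := by ring
      rw [h2]
    have hcD : ∀ u : ℕ, ((Finset.range (L+1)).filter
        (fun i => 2^(2*i)*u < 2^L*(M/u) ∧ 2^L*(M/u) ≤ 2*(2^(2*i)*u))).card = cD L u (M/u) := by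
      intro u
      unfold cD
      congr 1
      apply Finset.filter_congr
      intro i _
      have h2 : 2*(2^(2*i)*u) = 2^(2*i+1)*u := by ring
      rw [h2]
    have hC2 : (((Finset.Icc 1 N) ×ˢ (Finset.range N)).filter
        (fun p => p.2 < p.1 ∧ p.1 * (p.1 + p.2) = N)).card
        = ∑ u ∈ M.divisors, cC L u (M/u) := by
      rw [pairsC N hN]
      have hfib := fiber_count L M hModd h0 (fun x y => x ≤ y ∧ y < 2*x) hRC
      rw [hLM] at hfib
      rw [hfib]
      exact Finset.sum_congr rfl (fun u _ => hcC u)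
    have hD2 : (((Finset.Icc 1 N) ×ˢ (Finset.range N)).filter
        (fun p => p.2 < p.1 ∧ p.1 * (p.1 + p.2) + p.1 = N)).card
        = ∑ u ∈ M.divisors, cD L u (M/u) := by
      rw [pairsD N hN]
      have hfib := fiber_count L M hModd h0 (fun x y => x < y ∧ y ≤ 2*x) hRD
      rw [hLM] at hfib
      rw [hfib]
      exact Finset.sum_congr rfl (fun u _ => hcD u)
    have hswap : ∀ (g : ℕ → ℕ → ℤ),
        ∑ u ∈ M.divisors, g u (M/u) = ∑ u ∈ M.divisors, g (M/u) u := by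
      intro g
      have h1 := Nat.sum_div_divisors M (fun u => g u (M/u))
      rw [← h1]
      apply Finset.sum_congr rfl
      intro d hd
      have hdvd : d ∣ M := (Nat.mem_divisors.mp hd).1
      rw [Nat.div_div_self hdvd h0.ne']
    have hkey : ∑ u ∈ M.divisors, eps L u (M/u)
        = ∑ u ∈ M.divisors, ((cC L u (M/u) : ℤ) + (cD L u (M/u) : ℤ)) := by
      apply mul_left_cancel₀ (two_ne_zero (α := ℤ))
      calc (2:ℤ) * ∑ u ∈ M.divisors, eps L u (M/u)
          = ∑ u ∈ M.divisors, eps L u (M/u) + ∑ u ∈ M.divisors, eps L (M/u) u := by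
            rw [← hswap (fun a b => eps L a b)]
            ring
        _ = ∑ u ∈ M.divisors, (eps L u (M/u) + eps L (M/u) u) := Finset.sum_add_distrib.symm
        _ = ∑ u ∈ M.divisors, (((cC L u (M/u) : ℤ) + cD L u (M/u))
              + ((cC L (M/u) u : ℤ) + cD L (M/u) u)) := by
            apply Finset.sum_congr rfl
            intro u hu
            have hud : u ∣ M := (Nat.mem_divisors.mp hu).1
            have huodd : Odd u := by
              rw [Nat.odd_iff]
              rcases Nat.even_or_odd u with he | ho
              · exfalso
                have : (2:ℕ) ∣ M := dvd_trans he.two_dvd hud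
                have := Nat.odd_iff.mp hModd
                omega
              · exact Nat.odd_iff.mp ho
            have hvd : M/u ∣ M := Nat.div_dvd_of_dvd hud
            have hvodd : Odd (M/u) := by
              rw [Nat.odd_iff]
              rcases Nat.even_or_odd (M/u) with he | ho
              · exfalso
                have : (2:ℕ) ∣ M := dvd_trans he.two_dvd hvd
                have := Nat.odd_iff.mp hModd
                omega
              · exact Nat.odd_iff.mp ho
            have hk := key L u (M/u) huodd hvodd
            push_cast at hk ⊢
            linarith
        _ = ∑ u ∈ M.divisors, ((cC L u (M/u) : ℤ) + cD L u (M/u))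
              + ∑ u ∈ M.divisors, ((cC L (M/u) u : ℤ) + cD L (M/u) u) := Finset.sum_add_distrib
        _ = 2 * ∑ u ∈ M.divisors, ((cC L u (M/u) : ℤ) + cD L u (M/u)) := by
            rw [hswap (fun a b => (cC L b a : ℤ) + cD L b a)]
            ring
    rw [hC2, hD2, ← hLM]
    rw [lhs_eq L M hModd h0, hkey]
    rw [Finset.sum_add_distrib]
    push_cast
    ring

end ACKO

/-- The Andrews–Chan–Kim–Osburn identity
`∑_{n≥1} (-1)^{n+1} q^{n(n+1)/2}/(1-q^n) = ∑_{j≥1} ∑_{0≤r<j} q^{j(j+r)}(1+q^j)`,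
stated coefficientwise (note `n(n+1)/2 = 1·n(n-1)/2 + 1·n`, so the LHS is `hcoef 1 1`). -/
theorem stmt12 (N : ℕ) :
    hcoef 1 1 N =
      ((((Finset.Icc 1 N) ×ˢ (Finset.range N)).filter
          (fun p => p.2 < p.1 ∧ p.1 * (p.1 + p.2) = N)).card : ℤ)
      + ((((Finset.Icc 1 N) ×ˢ (Finset.range N)).filter
          (fun p => p.2 < p.1 ∧ p.1 * (p.1 + p.2) + p.1 = N)).card : ℤ) := by
  exact ACKO.stmt12' N
end
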